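/- arXiv:1311.1409 — 5 statements merged into one kernel-verified Lean document; each statement's English description precedes it below -/
import Mathlib

section
/- (Motzkin–Straus) If G is a 2-uniform graph on n vertices whose largest clique has order t, then λ(G) = (1/2)(1 − 1/t). Furthermore, the weighting assigning 1/t to each vertex of a fixed maximum clique and 0 to all other vertices is an optimal weighting. -/
open Finset

/-- The polynomial λ(G, w) = Σ_{e ∈ E} Π_{i ∈ e} w i. -/
def lagPoly (E : Finset (Finset ℕ)) (w : ℕ → ℝ) : ℝ :=
  ∑ e ∈ E, ∏ i ∈ e, w i

/-- A feasible weighting on vertex set [n] = {0, …, n-1}. -/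
def IsWeighting (n : ℕ) (w : ℕ → ℝ) : Prop :=
  (∀ i, 0 ≤ w i) ∧ (∀ i, n ≤ i → w i = 0) ∧ ∑ i ∈ Finset.range n, w i = 1

/-- The Lagrangian of a hypergraph with edge set `E`. -/
noncomputable def lag (E : Finset (Finset ℕ)) : ℝ :=
  sSup {x | ∃ n w, IsWeighting n w ∧ x = lagPoly E w}

/-- The complete r-uniform hypergraph on vertex set {0, …, t-1}. -/
def completeG (t r : ℕ) : Finset (Finset ℕ) :=
  (Finset.range t).powersetCard r

lemma sum_pc_two (A : Finset ℕ) (w : ℕ → ℝ) :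
    ∑ e ∈ A.powersetCard 2, ∏ i ∈ e, w i
      = ((∑ i ∈ A, w i)^2 - ∑ i ∈ A, (w i)^2) / 2 := by
  classical
  induction A using Finset.induction_on with
  | empty => rw [Finset.powersetCard_eq_empty.2 (by simp)]; simp
  | @insert a A ha ih =>
    rw [show (2:ℕ) = Nat.succ 1 from rfl, powersetCard_succ_insert ha]
    rw [Finset.sum_union]
    · rw [Finset.sum_image]
      · have h1 : ∀ e ∈ A.powersetCard 1, ∏ i ∈ insert a e, w i = w a * ∏ i ∈ e, w i := by
          intro e he
          rw [Finset.prod_insert]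
          intro hae
          exact ha ((mem_powersetCard.1 he).1 hae)
        rw [Finset.sum_congr rfl h1, ← Finset.mul_sum, powersetCard_one]
        rw [Finset.sum_map]
        simp only [Function.Embedding.coeFn_mk, Finset.prod_singleton]
        rw [ih, Finset.sum_insert ha, Finset.sum_insert ha]
        ring
      · intro e he e' he' hee
        have hA : a ∉ e := fun h => ha ((mem_powersetCard.1 he).1 h)
        have hA' : a ∉ e' := fun h => ha ((mem_powersetCard.1 he').1 h)
        rw [← Finset.erase_insert hA, hee, Finset.erase_insert hA']
    · rw [Finset.disjoint_right]
      intro e he he'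
      obtain ⟨e', he2, rfl⟩ := Finset.mem_image.1 he
      exact ha ((mem_powersetCard.1 he').1 (by simp : a ∈ insert a e'))

lemma eq_pair {e : Finset ℕ} {i j : ℕ} (hcard : e.card = 2) (hij : i ≠ j)
    (hi : i ∈ e) (hj : j ∈ e) : e = {i, j} := by
  have hsub : ({i, j} : Finset ℕ) ⊆ e := by
    intro k hk; rcases Finset.mem_insert.1 hk with rfl | hk
    · exact hi
    · rwa [Finset.mem_singleton.1 hk]
  exact (Finset.eq_of_subset_of_card_le hsub (by rw [hcard, Finset.card_pair hij])).symm

lemma decomp (E : Finset (Finset ℕ)) (hE : ∀ e ∈ E, e.card = 2) (i j : ℕ) (hij : i ≠ j)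
    (hedge : ({i, j} : Finset ℕ) ∉ E) (u : ℕ → ℝ) :
    lagPoly E u = u i * (∑ e ∈ E.filter (i ∈ ·), ∏ k ∈ e.erase i, u k)
      + u j * (∑ e ∈ E.filter (j ∈ ·), ∏ k ∈ e.erase j, u k)
      + ∑ e ∈ (E.filter (fun e => i ∉ e ∧ j ∉ e)), ∏ k ∈ e, u k := by
  classical
  have key : ∀ e ∈ E, ¬ (i ∈ e ∧ j ∈ e) := by
    rintro e he ⟨hi, hj⟩
    exact hedge (eq_pair (hE e he) hij hi hj ▸ he)
  have h1 : lagPoly E u = ∑ e ∈ E.filter (i ∈ ·), ∏ k ∈ e, u k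
      + ∑ e ∈ E.filter (fun e => i ∉ e), ∏ k ∈ e, u k :=
    (Finset.sum_filter_add_sum_filter_not E _ _).symm
  have h2 : E.filter (fun e => i ∉ e)
      = E.filter (fun e => j ∈ e) ∪ E.filter (fun e => i ∉ e ∧ j ∉ e) := by
    ext e
    simp only [Finset.mem_union, Finset.mem_filter]
    constructor
    · rintro ⟨he, hie⟩
      by_cases hje : j ∈ e
      · exact Or.inl ⟨he, hje⟩
      · exact Or.inr ⟨he, hie, hje⟩
    · rintro (⟨he, hje⟩ | ⟨he, hie, hje⟩)
      · exact ⟨he, fun hie => key e he ⟨hie, hje⟩⟩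
      · exact ⟨he, hie⟩
  have hdisj : Disjoint (E.filter (fun e => j ∈ e)) (E.filter (fun e => i ∉ e ∧ j ∉ e)) := by
    rw [Finset.disjoint_left]
    rintro e he he'
    exact (Finset.mem_filter.1 he').2.2 (Finset.mem_filter.1 he).2
  have hi' : ∀ e ∈ E.filter (fun e => i ∈ e), ∏ k ∈ e, u k = u i * ∏ k ∈ e.erase i, u k := by
    intro e he
    exact (Finset.mul_prod_erase e u (Finset.mem_filter.1 he).2).symm
  have hj' : ∀ e ∈ E.filter (fun e => j ∈ e), ∏ k ∈ e, u k = u j * ∏ k ∈ e.erase j, u k := by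
    intro e he
    exact (Finset.mul_prod_erase e u (Finset.mem_filter.1 he).2).symm
  rw [h1, h2, Finset.sum_union hdisj, Finset.sum_congr rfl hi', Finset.sum_congr rfl hj',
    ← Finset.mul_sum, ← Finset.mul_sum]
  ring


lemma shift_all (n : ℕ) (E : Finset (Finset ℕ)) (hE2 : ∀ e ∈ E, e.card = 2)
    (i j : ℕ) (w : ℕ → ℝ)
    (hi : i ∈ (Finset.range n).filter (fun k => w k ≠ 0))
    (hj : j ∈ (Finset.range n).filter (fun k => w k ≠ 0))
    (hij : i ≠ j) (hedge : ({i, j} : Finset ℕ) ∉ E)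
    (hpos : ∀ k, 0 ≤ w k) (hz : ∀ k, n ≤ k → w k = 0)
    (hAB : (∑ e ∈ E.filter (j ∈ ·), ∏ k ∈ e.erase j, w k)
        ≤ (∑ e ∈ E.filter (i ∈ ·), ∏ k ∈ e.erase i, w k)) :
    ∃ w' : ℕ → ℝ, (∀ k, 0 ≤ w' k) ∧ (∀ k, n ≤ k → w' k = 0) ∧
      (∑ k ∈ Finset.range n, w' k = ∑ k ∈ Finset.range n, w k) ∧
      ((Finset.range n).filter (fun k => w' k ≠ 0))
        ⊆ ((Finset.range n).filter (fun k => w k ≠ 0)).erase j ∧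
      lagPoly E w ≤ lagPoly E w' := by
  classical
  obtain ⟨hir, _⟩ := Finset.mem_filter.1 hi
  obtain ⟨hjr, _⟩ := Finset.mem_filter.1 hj
  set w' : ℕ → ℝ := fun k => if k = j then 0 else if k = i then w i + w j else w k with hw'
  have hw'j : w' j = 0 := by simp [hw']
  have hw'i : w' i = w i + w j := by simp [hw', hij]
  have hw'other : ∀ k, k ≠ i → k ≠ j → w' k = w k := by
    intro k hki hkj; simp [hw', hki, hkj]
  refine ⟨w', ?_, ?_, ?_, ?_, ?_⟩
  · intro k
    by_cases hkj : k = j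
    · rw [hkj, hw'j]
    · by_cases hki : k = i
      · rw [hki, hw'i]; exact add_nonneg (hpos i) (hpos j)
      · rw [hw'other k hki hkj]; exact hpos k
  · intro k hk
    have hki : k ≠ i := by rintro rfl; exact absurd (Finset.mem_range.1 hir) (not_lt.2 hk)
    have hkj : k ≠ j := by rintro rfl; exact absurd (Finset.mem_range.1 hjr) (not_lt.2 hk)
    rw [hw'other k hki hkj]; exact hz k hk
  · have hjr' : j ∈ (Finset.range n).erase i := Finset.mem_erase.2 ⟨hij.symm, hjr⟩
    have key : ∀ u : ℕ → ℝ, ∑ k ∈ Finset.range n, u k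
        = u i + (u j + ∑ k ∈ ((Finset.range n).erase i).erase j, u k) := by
      intro u
      rw [Finset.add_sum_erase _ u hjr', Finset.add_sum_erase _ u hir]
    rw [key w', key w, hw'i, hw'j]
    have : ∑ k ∈ ((Finset.range n).erase i).erase j, w' k
        = ∑ k ∈ ((Finset.range n).erase i).erase j, w k := by
      apply Finset.sum_congr rfl
      intro k hk
      exact hw'other k (Finset.mem_erase.1 (Finset.mem_erase.1 hk).2).1 (Finset.mem_erase.1 hk).1
    rw [this]; ring
  · intro k hk
    obtain ⟨hkr, hkne⟩ := Finset.mem_filter.1 hk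
    have hkj : k ≠ j := by rintro rfl; exact hkne hw'j
    refine Finset.mem_erase.2 ⟨hkj, Finset.mem_filter.2 ⟨hkr, ?_⟩⟩
    by_cases hki : k = i
    · rw [hki]; exact (Finset.mem_filter.1 hi).2
    · rw [hw'other k hki hkj] at hkne; exact hkne
  · have key : ∀ e ∈ E, ¬ (i ∈ e ∧ j ∈ e) := by
      rintro e he ⟨hie, hje⟩
      exact hedge (eq_pair (hE2 e he) hij hie hje ▸ he)
    rw [decomp E hE2 i j hij hedge w, decomp E hE2 i j hij hedge w']
    have hA : ∑ e ∈ E.filter (i ∈ ·), ∏ k ∈ e.erase i, w' k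
        = ∑ e ∈ E.filter (i ∈ ·), ∏ k ∈ e.erase i, w k := by
      apply Finset.sum_congr rfl
      intro e he
      obtain ⟨heE, hie⟩ := Finset.mem_filter.1 he
      apply Finset.prod_congr rfl
      intro k hk
      have hki : k ≠ i := (Finset.mem_erase.1 hk).1
      have hkj : k ≠ j := by
        rintro rfl
        exact key e heE ⟨hie, (Finset.mem_erase.1 hk).2⟩
      exact hw'other k hki hkj
    have hB : ∑ e ∈ E.filter (j ∈ ·), ∏ k ∈ e.erase j, w' k
        = ∑ e ∈ E.filter (j ∈ ·), ∏ k ∈ e.erase j, w k := by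
      apply Finset.sum_congr rfl
      intro e he
      obtain ⟨heE, hje⟩ := Finset.mem_filter.1 he
      apply Finset.prod_congr rfl
      intro k hk
      have hkj : k ≠ j := (Finset.mem_erase.1 hk).1
      have hki : k ≠ i := by
        rintro rfl
        exact key e heE ⟨(Finset.mem_erase.1 hk).2, hje⟩
      exact hw'other k hki hkj
    have hC : ∑ e ∈ (E.filter (fun e => i ∉ e ∧ j ∉ e)), ∏ k ∈ e, w' k
        = ∑ e ∈ (E.filter (fun e => i ∉ e ∧ j ∉ e)), ∏ k ∈ e, w k := by
      apply Finset.sum_congr rfl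
      intro e he
      obtain ⟨heE, hie, hje⟩ := Finset.mem_filter.1 he
      apply Finset.prod_congr rfl
      intro k hk
      exact hw'other k (fun h => hie (h ▸ hk)) (fun h => hje (h ▸ hk))
    rw [hA, hB, hC, hw'i, hw'j]
    have := mul_le_mul_of_nonneg_left hAB (hpos j)
    linarith

lemma clique_case (n t : ℕ) (ht : 0 < t) (E : Finset (Finset ℕ))
    (hE2 : ∀ e ∈ E, e.card = 2) (hEsub : ∀ e ∈ E, e ⊆ Finset.range n)
    (hmax : ∀ s' : Finset ℕ, s' ⊆ Finset.range n → s'.powersetCard 2 ⊆ E → s'.card ≤ t)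
    (w : ℕ → ℝ) (hpos : ∀ i, 0 ≤ w i) (hsum : ∑ i ∈ Finset.range n, w i ≤ 1)
    (hcl : ∀ i ∈ (Finset.range n).filter (fun k => w k ≠ 0),
      ∀ j ∈ (Finset.range n).filter (fun k => w k ≠ 0), i ≠ j → ({i, j} : Finset ℕ) ∈ E) :
    lagPoly E w ≤ (1 - 1 / (t : ℝ)) / 2 := by
  classical
  set F := (Finset.range n).filter (fun k => w k ≠ 0) with hF
  have hFsub : F ⊆ Finset.range n := Finset.filter_subset _ _
  have hFcl : F.powersetCard 2 ⊆ E := by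
    intro e he
    obtain ⟨hsub, hcard⟩ := mem_powersetCard.1 he
    obtain ⟨x, y, hxy, rfl⟩ := Finset.card_eq_two.1 hcard
    exact hcl x (hsub (by simp)) y (hsub (by simp)) hxy
  have hFt : F.card ≤ t := hmax F hFsub hFcl
  have h0 : lagPoly E w ≤ ∑ e ∈ F.powersetCard 2, ∏ i ∈ e, w i := by
    rw [lagPoly, ← Finset.sum_filter_add_sum_filter_not E (· ⊆ F)]
    have hz2 : ∑ e ∈ E.filter (fun e => ¬ e ⊆ F), ∏ i ∈ e, w i = 0 := by
      apply Finset.sum_eq_zero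
      intro e he
      obtain ⟨heE, hns⟩ := Finset.mem_filter.1 he
      obtain ⟨x, hx, hxF⟩ : ∃ x ∈ e, x ∉ F := by
        by_contra h; push_neg at h; exact hns h
      apply Finset.prod_eq_zero hx
      by_contra hwx
      exact hxF (Finset.mem_filter.2 ⟨hEsub e heE hx, hwx⟩)
    rw [hz2, add_zero]
    apply Finset.sum_le_sum_of_subset_of_nonneg
    · intro e he
      obtain ⟨heE, hsf⟩ := Finset.mem_filter.1 he
      exact mem_powersetCard.2 ⟨hsf, hE2 e heE⟩
    · intro e _ _
      exact Finset.prod_nonneg fun i _ => hpos i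
  rw [sum_pc_two] at h0
  have hsF : ∑ i ∈ F, w i = ∑ i ∈ Finset.range n, w i := Finset.sum_filter_ne_zero _
  have hσ1 : ∑ i ∈ F, w i ≤ 1 := by rw [hsF]; exact hsum
  have hσ0 : (0:ℝ) ≤ ∑ i ∈ F, w i := Finset.sum_nonneg fun i _ => hpos i
  have hq0 : (0:ℝ) ≤ ∑ i ∈ F, (w i)^2 := Finset.sum_nonneg fun i _ => sq_nonneg _
  have hcs : (∑ i ∈ F, w i)^2 ≤ F.card * ∑ i ∈ F, (w i)^2 := sq_sum_le_card_mul_sum_sq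
  have hct : (F.card : ℝ) ≤ t := by exact_mod_cast hFt
  have htR : (0:ℝ) < t := by exact_mod_cast ht
  have hcs2 : (∑ i ∈ F, w i)^2 ≤ t * ∑ i ∈ F, (w i)^2 :=
    le_trans hcs (mul_le_mul_of_nonneg_right hct hq0)
  have hq : (∑ i ∈ F, w i)^2 / t ≤ ∑ i ∈ F, (w i)^2 := by
    rw [div_le_iff₀ htR]; linarith [hcs2]
  have hσsq : (∑ i ∈ F, w i)^2 ≤ 1 := by nlinarith
  have h1t : (0:ℝ) ≤ 1 - 1/t := by
    rw [sub_nonneg, div_le_one htR]; exact_mod_cast ht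
  have hkey : (∑ i ∈ F, w i)^2 - ∑ i ∈ F, (w i)^2 ≤ 1 - 1/t := by
    have h2 : (∑ i ∈ F, w i)^2 - (∑ i ∈ F, w i)^2 / t = (∑ i ∈ F, w i)^2 * (1 - 1/t) := by
      field_simp
    have h3 : (∑ i ∈ F, w i)^2 * (1 - 1/t) ≤ 1 * (1 - 1/t) :=
      mul_le_mul_of_nonneg_right hσsq h1t
    linarith
  linarith

lemma upper_aux (n t : ℕ) (ht : 0 < t) (E : Finset (Finset ℕ))
    (hE : E ⊆ (Finset.range n).powersetCard 2)
    (hmax : ∀ s' : Finset ℕ, s' ⊆ Finset.range n → s'.powersetCard 2 ⊆ E → s'.card ≤ t) :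
    ∀ k (w : ℕ → ℝ), ((Finset.range n).filter (fun i => w i ≠ 0)).card ≤ k →
      (∀ i, 0 ≤ w i) → (∀ i, n ≤ i → w i = 0) → (∑ i ∈ Finset.range n, w i) ≤ 1 →
      lagPoly E w ≤ (1 - 1 / (t : ℝ)) / 2 := by
  classical
  have hE2 : ∀ e ∈ E, e.card = 2 := fun e he => (mem_powersetCard.1 (hE he)).2
  have hEsub : ∀ e ∈ E, e ⊆ Finset.range n := fun e he => (mem_powersetCard.1 (hE he)).1
  intro k
  induction k with
  | zero =>
    intro w hcard hpos hz hsum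
    apply clique_case n t ht E hE2 hEsub hmax w hpos hsum
    intro i hi j hj hij
    exfalso
    rw [Nat.le_zero, Finset.card_eq_zero] at hcard
    rw [hcard] at hi
    exact absurd hi (Finset.notMem_empty i)
  | succ k ih =>
    intro w hcard hpos hz hsum
    by_cases hcl : ∀ i ∈ (Finset.range n).filter (fun k => w k ≠ 0),
        ∀ j ∈ (Finset.range n).filter (fun k => w k ≠ 0), i ≠ j → ({i, j} : Finset ℕ) ∈ E
    · exact clique_case n t ht E hE2 hEsub hmax w hpos hsum hcl
    · push_neg at hcl
      obtain ⟨i, hi, j, hj, hij, hedge⟩ := hcl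
      have hmain : ∃ w' : ℕ → ℝ, (∀ k, 0 ≤ w' k) ∧ (∀ k, n ≤ k → w' k = 0) ∧
          (∑ k ∈ Finset.range n, w' k = ∑ k ∈ Finset.range n, w k) ∧
          ((Finset.range n).filter (fun k => w' k ≠ 0)).card
            < ((Finset.range n).filter (fun k => w k ≠ 0)).card ∧
          lagPoly E w ≤ lagPoly E w' := by
        rcases le_total (∑ e ∈ E.filter (j ∈ ·), ∏ k ∈ e.erase j, w k)
            (∑ e ∈ E.filter (i ∈ ·), ∏ k ∈ e.erase i, w k) with hAB | hAB
        · obtain ⟨w', h1, h2, h3, h4, h5⟩ := shift_all n E hE2 i j w hi hj hij hedge hpos hz hAB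
          refine ⟨w', h1, h2, h3, ?_, h5⟩
          calc ((Finset.range n).filter (fun k => w' k ≠ 0)).card
              ≤ (((Finset.range n).filter (fun k => w k ≠ 0)).erase j).card :=
                Finset.card_le_card h4
            _ < ((Finset.range n).filter (fun k => w k ≠ 0)).card :=
                Finset.card_erase_lt_of_mem hj
        · have hedge' : ({j, i} : Finset ℕ) ∉ E := by rwa [Finset.pair_comm]
          obtain ⟨w', h1, h2, h3, h4, h5⟩ :=
            shift_all n E hE2 j i w hj hi hij.symm hedge' hpos hz hAB
          refine ⟨w', h1, h2, h3, ?_, h5⟩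
          calc ((Finset.range n).filter (fun k => w' k ≠ 0)).card
              ≤ (((Finset.range n).filter (fun k => w k ≠ 0)).erase i).card :=
                Finset.card_le_card h4
            _ < ((Finset.range n).filter (fun k => w k ≠ 0)).card :=
                Finset.card_erase_lt_of_mem hi
      obtain ⟨w', h1, h2, h3, h4, h5⟩ := hmain
      refine le_trans h5 (ih w' ?_ h1 h2 (by rw [h3]; exact hsum))
      omega

/-- Motzkin–Straus: if the largest clique of a 2-graph G has order t, then
λ(G) = (1/2)(1 - 1/t), attained by the uniform weighting on a maximum clique. -/
theorem stmt_2 (n t : ℕ) (ht : 0 < t) (E : Finset (Finset ℕ))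
    (hE : E ⊆ (Finset.range n).powersetCard 2)
    (s : Finset ℕ) (hs : s ⊆ Finset.range n) (hscard : s.card = t)
    (hsclique : s.powersetCard 2 ⊆ E)
    (hmax : ∀ s' : Finset ℕ, s' ⊆ Finset.range n → s'.powersetCard 2 ⊆ E → s'.card ≤ t) :
    lag E = (1 / 2) * (1 - 1 / (t : ℝ)) ∧
    lagPoly E (fun i => if i ∈ s then (1 : ℝ) / t else 0) = lag E := by
  classical
  have hE2 : ∀ e ∈ E, e.card = 2 := fun e he => (mem_powersetCard.1 (hE he)).2
  have hEsub : ∀ e ∈ E, e ⊆ Finset.range n := fun e he => (mem_powersetCard.1 (hE he)).1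
  have htR : (0:ℝ) < t := by exact_mod_cast ht
  set ws : ℕ → ℝ := fun i => if i ∈ s then (1 : ℝ) / t else 0 with hws
  -- value of the witness
  have hwsum : ∑ i ∈ s, ws i = 1 := by
    have : ∑ i ∈ s, ws i = ∑ i ∈ s, (1:ℝ)/t :=
      Finset.sum_congr rfl fun i hi => if_pos hi
    rw [this, Finset.sum_const, hscard, nsmul_eq_mul]
    field_simp
  have hwsq : ∑ i ∈ s, (ws i)^2 = 1/t := by
    have : ∑ i ∈ s, (ws i)^2 = ∑ i ∈ s, ((1:ℝ)/t)^2 :=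
      Finset.sum_congr rfl fun i hi => by rw [hws]; simp only [if_pos hi]
    rw [this, Finset.sum_const, hscard, nsmul_eq_mul]
    field_simp
  have hwval : lagPoly E ws = (1 - 1/(t:ℝ))/2 := by
    have hsplit : E.filter (fun e => e ⊆ s) = s.powersetCard 2 := by
      ext e
      constructor
      · intro he
        obtain ⟨heE, hsub⟩ := Finset.mem_filter.1 he
        exact mem_powersetCard.2 ⟨hsub, hE2 e heE⟩
      · intro he
        exact Finset.mem_filter.2 ⟨hsclique he, (mem_powersetCard.1 he).1⟩
    have hz2 : ∑ e ∈ E.filter (fun e => ¬ e ⊆ s), ∏ i ∈ e, ws i = 0 := by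
      apply Finset.sum_eq_zero
      intro e he
      obtain ⟨heE, hns⟩ := Finset.mem_filter.1 he
      obtain ⟨x, hx, hxs⟩ : ∃ x ∈ e, x ∉ s := by
        by_contra h; push_neg at h; exact hns h
      exact Finset.prod_eq_zero hx (by rw [hws]; simp only [if_neg hxs])
    rw [lagPoly, ← Finset.sum_filter_add_sum_filter_not E (fun e => e ⊆ s), hz2, add_zero,
      hsplit, sum_pc_two, hwsum, hwsq]
    ring
  have hwIsW : IsWeighting n ws := by
    refine ⟨fun i => ?_, fun i hi => ?_, ?_⟩
    · by_cases h : i ∈ s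
      · simp only [hws, if_pos h]; positivity
      · simp only [hws, if_neg h]; exact le_rfl
    · have h : i ∉ s := fun hmem => absurd (Finset.mem_range.1 (hs hmem)) (not_lt.2 hi)
      simp only [hws, if_neg h]
    · simp only [hws]
      rw [Finset.sum_ite_mem, Finset.inter_eq_right.2 hs]
      rw [Finset.sum_const, hscard, nsmul_eq_mul]
      field_simp
  set S : Set ℝ := {x | ∃ m w, IsWeighting m w ∧ x = lagPoly E w} with hS
  have hub : ∀ x ∈ S, x ≤ (1 - 1/(t:ℝ))/2 := by
    rintro x ⟨m, w, ⟨hp, hzz, hs1⟩, rfl⟩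
    set w0 : ℕ → ℝ := fun k => if k < n then w k else 0 with hw0
    have heq : lagPoly E w = lagPoly E w0 :=
      Finset.sum_congr rfl fun e he => Finset.prod_congr rfl fun k hk => by
        rw [hw0]; dsimp only; rw [if_pos (Finset.mem_range.1 (hEsub e he hk))]
    rw [heq]
    apply upper_aux n t ht E hE hmax ((Finset.range n).filter (fun i => w0 i ≠ 0)).card w0
      le_rfl
    · intro i; rw [hw0]; dsimp only; split_ifs
      · exact hp i
      · exact le_rfl
    · intro i hi; rw [hw0]; dsimp only; rw [if_neg (not_lt.2 hi)]
    · have h01 : ∑ i ∈ Finset.range n, w0 i = ∑ i ∈ Finset.range n, w i :=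
        Finset.sum_congr rfl fun i hi => by
          rw [hw0]; dsimp only; rw [if_pos (Finset.mem_range.1 hi)]
      rw [h01]
      have h02 : ∑ i ∈ Finset.range (max n m), w i = 1 := by
        rw [← hs1]
        symm
        apply Finset.sum_subset (Finset.range_subset_range.2 (le_max_right n m))
        intro i _ hi
        exact hzz i (le_of_not_gt fun h => hi (Finset.mem_range.2 h))
      calc ∑ i ∈ Finset.range n, w i ≤ ∑ i ∈ Finset.range (max n m), w i :=
            Finset.sum_le_sum_of_subset_of_nonneg
              (Finset.range_subset_range.2 (le_max_left n m)) (fun i _ _ => hp i)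
        _ = 1 := h02
  have hne : S.Nonempty := ⟨lagPoly E ws, n, ws, hwIsW, rfl⟩
  have hbdd : BddAbove S := ⟨(1 - 1/(t:ℝ))/2, hub⟩
  have hle : lag E ≤ (1 - 1/(t:ℝ))/2 := csSup_le hne hub
  have hge : lagPoly E ws ≤ lag E := le_csSup hbdd ⟨n, ws, hwIsW, rfl⟩
  constructor
  · rw [lag] at hle hge ⊢
    linarith [hwval]
  · linarith [hwval, hge, hle]
end

section
/- Let G = (V,E) be an r-uniform hypergraph on vertex set [n] and let x = (x_1,...,x_n) be an optimal weighting for G with exactly k nonzero weights x_1,...,x_k, such that the number of nonzero weights is minimal among all optimal weightings. Then for every pair i < j ≤ k: (a) λ(E_i, x) = λ(E_j, x) = r·λ(G), and (b) there is an edge of G containing both i and j. -/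
open Finset

/-- The link E_i of vertex i. -/
def link (E : Finset (Finset ℕ)) (i : ℕ) : Finset (Finset ℕ) :=
  (E.filter (fun e => i ∈ e)).image (fun e => e.erase i)

lemma lagPoly_nonneg (E : Finset (Finset ℕ)) (w : ℕ → ℝ) (hw : ∀ m, 0 ≤ w m) :
    0 ≤ lagPoly E w :=
  Finset.sum_nonneg fun _ _ => Finset.prod_nonneg fun m _ => hw m

lemma mem_link_avoid {E : Finset (Finset ℕ)} {i : ℕ} {A : Finset ℕ}
    (hA : A ∈ link E i) : i ∉ A := by
  simp only [link, mem_image, mem_filter] at hA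
  obtain ⟨e, _, rfl⟩ := hA
  exact Finset.notMem_erase i e

lemma link_avoid {E : Finset (Finset ℕ)} {i : ℕ} (h : ∀ e ∈ E, i ∉ e) (j : ℕ) :
    ∀ A ∈ link E j, i ∉ A := by
  intro A hA
  simp only [link, mem_image, mem_filter] at hA
  obtain ⟨e, ⟨he, _⟩, rfl⟩ := hA
  exact fun hmem => h e he (Finset.mem_of_mem_erase hmem)

lemma lagPoly_update_avoid {E : Finset (Finset ℕ)} {i : ℕ} (h : ∀ e ∈ E, i ∉ e)
    (w : ℕ → ℝ) (a : ℝ) : lagPoly E (Function.update w i a) = lagPoly E w := by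
  unfold lagPoly
  refine Finset.sum_congr rfl fun e he => Finset.prod_congr rfl fun m hm => ?_
  have hmi : m ≠ i := fun h' => h e he (h' ▸ hm)
  exact Function.update_of_ne hmi a w

lemma lagPoly_link_eq (E : Finset (Finset ℕ)) (w : ℕ → ℝ) (i : ℕ) :
    w i * lagPoly (link E i) w = ∑ e ∈ E.filter (fun e => i ∈ e), ∏ m ∈ e, w m := by
  unfold lagPoly link
  rw [Finset.sum_image ?inj, Finset.mul_sum]
  · exact Finset.sum_congr rfl fun e he =>
      Finset.mul_prod_erase e w (Finset.mem_filter.1 he).2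
  case inj =>
    intro e he f hf hef
    have hie := (Finset.mem_filter.1 he).2
    have hif := (Finset.mem_filter.1 hf).2
    rw [← Finset.insert_erase hie, show e.erase i = f.erase i from hef, Finset.insert_erase hif]

lemma lagPoly_split (E : Finset (Finset ℕ)) (w : ℕ → ℝ) (i : ℕ) :
    lagPoly E w = lagPoly (E.filter (fun e => i ∉ e)) w + w i * lagPoly (link E i) w := by
  rw [lagPoly_link_eq]
  unfold lagPoly
  rw [← Finset.sum_filter_add_sum_filter_not E (fun e => i ∈ e)]
  ring

lemma link_filter (E : Finset (Finset ℕ)) {i j : ℕ} (hij : i ≠ j) :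
    link (E.filter (fun e => j ∉ e)) i = (link E i).filter (fun A => j ∉ A) := by
  unfold link
  rw [Finset.filter_image, Finset.filter_filter, Finset.filter_filter]
  have : E.filter (fun e => j ∉ e ∧ i ∈ e) = E.filter (fun e => i ∈ e ∧ j ∉ e.erase i) := by
    refine Finset.filter_congr fun e _ => ?_
    simp only [Finset.mem_erase]
    constructor
    · rintro ⟨h1, h2⟩; exact ⟨h2, fun h => h1 h.2⟩
    · rintro ⟨h1, h2⟩; exact ⟨fun h => h2 ⟨hij.symm, h⟩, h1⟩
  rw [this]

lemma link_link_comm (E : Finset (Finset ℕ)) {i j : ℕ} (hij : i ≠ j) :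
    link (link E i) j = link (link E j) i := by
  unfold link
  rw [Finset.filter_image, Finset.image_image, Finset.filter_filter,
      Finset.filter_image, Finset.image_image, Finset.filter_filter]
  have h1 : E.filter (fun e => i ∈ e ∧ j ∈ e.erase i)
      = E.filter (fun e : Finset ℕ => j ∈ e ∧ i ∈ e.erase j) := by
    refine Finset.filter_congr fun e _ => ?_
    simp only [Finset.mem_erase]
    constructor
    · rintro ⟨h1, h2, h3⟩; exact ⟨h3, hij, h1⟩
    · rintro ⟨h1, h2, h3⟩; exact ⟨h3, hij.symm, h1⟩
  rw [h1]
  exact Finset.image_congr fun e _ => Finset.erase_right_comm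

lemma lagPoly_shift (E : Finset (Finset ℕ)) (w : ℕ → ℝ) {i j : ℕ} (hij : i ≠ j) (t : ℝ) :
    lagPoly E (Function.update (Function.update w i (w i + t)) j (w j - t))
      = lagPoly E w + t * (lagPoly (link E i) w - lagPoly (link E j) w)
        - t ^ 2 * lagPoly (link (link E i) j) w := by
  set w1 := Function.update w i (w i + t) with hw1
  set w2 := Function.update w1 j (w j - t) with hw2
  have h2i : w2 i = w i + t := by
    rw [hw2, Function.update_of_ne hij, hw1, Function.update_self]
  have h2j : w2 j = w j - t := by rw [hw2, Function.update_self]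
  -- invariance for sets avoiding both i and j
  have hinv : ∀ S : Finset (Finset ℕ), (∀ e ∈ S, i ∉ e) → (∀ e ∈ S, j ∉ e) →
      lagPoly S w2 = lagPoly S w := by
    intro S hi hj
    rw [hw2, lagPoly_update_avoid hj, hw1, lagPoly_update_avoid hi]
  -- the four pieces
  have hA1 : ∀ e ∈ (E.filter (fun e => i ∉ e)).filter (fun e => j ∉ e), i ∉ e :=
    fun e he => (Finset.mem_filter.1 (Finset.mem_filter.1 he).1).2
  have hA2 : ∀ e ∈ (E.filter (fun e => i ∉ e)).filter (fun e => j ∉ e), j ∉ e :=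
    fun e he => (Finset.mem_filter.1 he).2
  have hB1 : ∀ A ∈ link (E.filter (fun e => i ∉ e)) j, i ∉ A :=
    link_avoid (fun e he => (Finset.mem_filter.1 he).2) j
  have hB2 : ∀ A ∈ link (E.filter (fun e => i ∉ e)) j, j ∉ A :=
    fun A hA => mem_link_avoid hA
  have hC1 : ∀ A ∈ (link E i).filter (fun A => j ∉ A), i ∉ A :=
    fun A hA => mem_link_avoid (Finset.mem_filter.1 hA).1
  have hC2 : ∀ A ∈ (link E i).filter (fun A => j ∉ A), j ∉ A :=
    fun A hA => (Finset.mem_filter.1 hA).2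
  have hD1 : ∀ A ∈ link (link E i) j, i ∉ A :=
    link_avoid (fun A hA => mem_link_avoid hA) j
  have hD2 : ∀ A ∈ link (link E i) j, j ∉ A := fun A hA => mem_link_avoid hA
  -- expansions
  have e1 : lagPoly E w2 = lagPoly (E.filter (fun e => i ∉ e)) w2
      + (w i + t) * lagPoly (link E i) w2 := by rw [lagPoly_split _ _ i, h2i]
  have e2 : lagPoly (E.filter (fun e => i ∉ e)) w2
      = lagPoly ((E.filter (fun e => i ∉ e)).filter (fun e => j ∉ e)) w
      + (w j - t) * lagPoly (link (E.filter (fun e => i ∉ e)) j) w := by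
    rw [lagPoly_split _ _ j, h2j, hinv _ hA1 hA2, hinv _ hB1 hB2]
  have e3 : lagPoly (link E i) w2
      = lagPoly ((link E i).filter (fun A => j ∉ A)) w
      + (w j - t) * lagPoly (link (link E i) j) w := by
    rw [lagPoly_split _ _ j, h2j, hinv _ hC1 hC2, hinv _ hD1 hD2]
  -- base expansions
  have b1 : lagPoly E w = lagPoly (E.filter (fun e => i ∉ e)) w
      + w i * lagPoly (link E i) w := lagPoly_split _ _ i
  have b2 : lagPoly (E.filter (fun e => i ∉ e)) w
      = lagPoly ((E.filter (fun e => i ∉ e)).filter (fun e => j ∉ e)) w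
      + w j * lagPoly (link (E.filter (fun e => i ∉ e)) j) w := lagPoly_split _ _ j
  have b3 : lagPoly (link E i) w
      = lagPoly ((link E i).filter (fun A => j ∉ A)) w
      + w j * lagPoly (link (link E i) j) w := lagPoly_split _ _ j
  have b4 : lagPoly (link E j) w
      = lagPoly (link (E.filter (fun e => i ∉ e)) j) w
      + w i * lagPoly (link (link E i) j) w := by
    rw [lagPoly_split (link E j) w i, link_filter E hij.symm, link_link_comm E hij]
  rw [e1, e2, e3, b1, b2, b3, b4]
  ring

lemma sum_links (r n : ℕ) (E : Finset (Finset ℕ))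
    (hE : E ⊆ (Finset.range n).powersetCard r) (w : ℕ → ℝ) :
    ∑ i ∈ Finset.range n, w i * lagPoly (link E i) w = (r : ℝ) * lagPoly E w := by
  have h1 : ∀ i, w i * lagPoly (link E i) w
      = ∑ e ∈ E, if i ∈ e then ∏ m ∈ e, w m else 0 := by
    intro i; rw [lagPoly_link_eq, Finset.sum_filter]
  simp_rw [h1]
  rw [Finset.sum_comm]
  unfold lagPoly
  rw [Finset.mul_sum]
  refine Finset.sum_congr rfl fun e he => ?_
  have hm := Finset.mem_powersetCard.1 (hE he)
  rw [Finset.sum_ite_mem, Finset.inter_eq_right.2 hm.1, Finset.sum_const, hm.2,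
    nsmul_eq_mul]

lemma shift_weighting {n : ℕ} {w : ℕ → ℝ} (hw : IsWeighting n w) {a b : ℕ} (hab : a ≠ b)
    (ha : a < n) (hb : b < n) {t : ℝ} (ht0 : 0 ≤ t) (htb : t ≤ w b) :
    IsWeighting n (Function.update (Function.update w a (w a + t)) b (w b - t)) := by
  obtain ⟨hnn, hz, hs⟩ := hw
  refine ⟨?_, ?_, ?_⟩
  · intro m
    rcases eq_or_ne m b with rfl | hmb
    · rw [Function.update_self]; linarith
    · rw [Function.update_of_ne hmb]
      rcases eq_or_ne m a with rfl | hma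
      · rw [Function.update_self]; have := hnn m; linarith
      · rw [Function.update_of_ne hma]; exact hnn m
  · intro m hm
    have hmb : m ≠ b := by omega
    have hma : m ≠ a := by omega
    rw [Function.update_of_ne hmb, Function.update_of_ne hma]; exact hz m hm
  · rw [Finset.sum_update_of_mem (Finset.mem_range.2 hb),
      Finset.sum_update_of_mem (by simp [Finset.mem_sdiff, Finset.mem_range, hb, ha, hab])]
    have : ∑ x ∈ Finset.range n, w x
        = w b + (w a + ∑ x ∈ (Finset.range n \ {b}) \ {a}, w x) := by
      rw [← Finset.sum_eq_add_sum_sdiff_singleton_of_mem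
        (by simp [Finset.mem_sdiff, Finset.mem_range, ha, hab] : a ∈ Finset.range n \ {b}) w,
        ← Finset.sum_eq_add_sum_sdiff_singleton_of_mem (Finset.mem_range.2 hb) w]
    rw [hs] at this
    linarith
/-- Frankl–Rödl: for an optimal weighting with k nonzero weights (x₀,…,x_{k-1})
and minimal support, (a) λ(E_i, x) = λ(E_j, x) = r·λ(G) and (b) some edge
contains both i and j, for every pair i < j < k. -/
theorem stmt_3 (r n k : ℕ) (E : Finset (Finset ℕ))
    (hE : E ⊆ (Finset.range n).powersetCard r)
    (w : ℕ → ℝ) (hw : IsWeighting n w) (hopt : lagPoly E w = lag E)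
    (hpos : ∀ i, i < k → 0 < w i) (hzero : ∀ i, k ≤ i → w i = 0)
    (hmin : ∀ w' : ℕ → ℝ, IsWeighting n w' → lagPoly E w' = lag E →
      k ≤ ((Finset.range n).filter (fun i => w' i ≠ 0)).card) :
    ∀ i j : ℕ, i < j → j < k →
      (lagPoly (link E i) w = r * lag E ∧ lagPoly (link E j) w = r * lag E) ∧
      ∃ e ∈ E, i ∈ e ∧ j ∈ e := by
  intro i j hij hjk
  have hik : i < k := lt_trans hij hjk
  have hijne : i ≠ j := Nat.ne_of_lt hij
  have hkn : k ≤ n := by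
    by_contra hkn
    push_neg at hkn
    have h1 := hpos n hkn
    have h2 := hw.2.1 n le_rfl
    linarith
  have hbdd : BddAbove {x | ∃ n w, IsWeighting n w ∧ x = lagPoly E w} := by
    refine ⟨(E.card : ℝ), ?_⟩
    rintro x ⟨m, v, hv, rfl⟩
    have hv1 : ∀ p, v p ≤ 1 := by
      intro p
      by_cases hp : p < m
      · calc v p ≤ ∑ q ∈ Finset.range m, v q :=
            Finset.single_le_sum (fun q _ => hv.1 q) (Finset.mem_range.2 hp)
          _ = 1 := hv.2.2
      · rw [hv.2.1 p (by omega)]; norm_num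
    calc lagPoly E v ≤ ∑ _e ∈ E, (1 : ℝ) := Finset.sum_le_sum fun e _ =>
        Finset.prod_le_one (fun p _ => hv.1 p) (fun p _ => hv1 p)
      _ = E.card := by simp
  have hle : ∀ v : ℕ → ℝ, IsWeighting n v → lagPoly E v ≤ lag E := fun v h =>
    le_csSup hbdd ⟨n, v, h, rfl⟩
  have hAle : ∀ a b : ℕ, a < k → b < k → a ≠ b →
      lagPoly (link E a) w ≤ lagPoly (link E b) w := by
    intro a b hak hbk hab
    by_contra hlt
    push_neg at hlt
    set la := lagPoly (link E a) w with hla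
    set lb := lagPoly (link E b) w with hlb
    set R := lagPoly (link (link E a) b) w with hRdef
    have hR0 : 0 ≤ R := lagPoly_nonneg _ _ hw.1
    set t := min (w b) ((la - lb) / (R + 1)) with ht
    have ht0 : 0 < t := lt_min (hpos b hbk) (div_pos (by linarith) (by linarith))
    have htb : t ≤ w b := min_le_left _ _
    have htR : t * R < la - lb := by
      calc t * R ≤ ((la - lb) / (R + 1)) * R :=
          mul_le_mul_of_nonneg_right (min_le_right _ _) hR0
        _ < la - lb := by
          rw [div_mul_eq_mul_div, div_lt_iff₀ (by linarith)]
          nlinarith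
    have hw' := shift_weighting hw hab (lt_of_lt_of_le hak hkn)
      (lt_of_lt_of_le hbk hkn) ht0.le htb
    have h1 := hle _ hw'
    rw [lagPoly_shift E w hab t, hopt, ← hla, ← hlb, ← hRdef] at h1
    nlinarith
  have hAeq : ∀ a b : ℕ, a < k → b < k →
      lagPoly (link E a) w = lagPoly (link E b) w := by
    intro a b hak hbk
    rcases eq_or_ne a b with rfl | hab
    · rfl
    · exact le_antisymm (hAle a b hak hbk hab) (hAle b a hbk hak hab.symm)
  have hwk : ∑ m ∈ Finset.range k, w m = 1 := by
    rw [Finset.sum_subset (Finset.range_subset_range.2 hkn)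
      (fun x _ hx => hzero x (by simpa using hx))]
    exact hw.2.2
  have hsum2 : ∑ m ∈ Finset.range n, w m * lagPoly (link E m) w
      = lagPoly (link E i) w := by
    rw [← Finset.sum_subset (Finset.range_subset_range.2 hkn)
      (fun x _ hx => by rw [hzero x (by simpa using hx), zero_mul])]
    calc ∑ m ∈ Finset.range k, w m * lagPoly (link E m) w
        = ∑ m ∈ Finset.range k, w m * lagPoly (link E i) w :=
          Finset.sum_congr rfl fun m hm => by
            rw [hAeq m i (Finset.mem_range.1 hm) hik]
      _ = 1 * lagPoly (link E i) w := by rw [← Finset.sum_mul, hwk]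
      _ = _ := one_mul _
  have hai : lagPoly (link E i) w = r * lag E := by
    rw [← hsum2, sum_links r n E hE w, hopt]
  have haj : lagPoly (link E j) w = r * lag E := by
    rw [hAeq j i hjk hik]; exact hai
  refine ⟨⟨hai, haj⟩, ?_⟩
  by_contra hne
  push_neg at hne
  have hRz : link (link E i) j = ∅ := by
    have hfe : (link E i).filter (fun e => j ∈ e) = ∅ := by
      refine Finset.filter_eq_empty_iff.2 fun {A} hA hjA => ?_
      simp only [link, Finset.mem_image, Finset.mem_filter] at hA
      obtain ⟨e, ⟨he, hie⟩, rfl⟩ := hA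
      exact hne e he hie (Finset.mem_of_mem_erase hjA)
    calc link (link E i) j
        = ((link E i).filter (fun e => j ∈ e)).image (fun e => e.erase j) := rfl
      _ = ∅ := by rw [hfe, Finset.image_empty]
  have hw' := shift_weighting hw hijne (lt_of_lt_of_le hik hkn)
    (lt_of_lt_of_le hjk hkn) (hw.1 j) (le_refl (w j))
  have hval := lagPoly_shift E w hijne (w j)
  rw [hRz, hAeq i j hik hjk, hopt] at hval
  have hval2 : lagPoly E
      (Function.update (Function.update w i (w i + w j)) j (w j - w j)) = lag E := by
    rw [hval]
    simp [lagPoly]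
  have hcard := hmin _ hw' hval2
  have hsub : (Finset.range n).filter
      (fun m => Function.update (Function.update w i (w i + w j)) j (w j - w j) m ≠ 0)
      ⊆ (Finset.range k).erase j := by
    intro m hm
    obtain ⟨hmn, hm0⟩ := Finset.mem_filter.1 hm
    rcases eq_or_ne m j with rfl | hmj
    · exact absurd (by rw [Function.update_self]; ring) hm0
    · rw [Function.update_of_ne hmj] at hm0
      rcases eq_or_ne m i with rfl | hmi
      · exact Finset.mem_erase.2 ⟨hmj, Finset.mem_range.2 hik⟩
      · rw [Function.update_of_ne hmi] at hm0
        have hmk : m < k := by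
          by_contra h'
          exact hm0 (hzero m (le_of_not_gt h'))
        exact Finset.mem_erase.2 ⟨hmj, Finset.mem_range.2 hmk⟩
  have hcard2 := Finset.card_le_card hsub
  rw [Finset.card_erase_of_mem (Finset.mem_range.2 hjk), Finset.card_range] at hcard2
  omega
end

section
/- Let t ≥ r+1 and m = C(t−1, r) + C(t−2, r−1) + 1. Then λ(C_{r,m}) > λ([t−1]^{(r)}). -/
open Finset

/-- Binary encoding of a finite set; A < B in colex order iff binVal A < binVal B. -/
def binVal (A : Finset ℕ) : ℕ := ∑ i ∈ A, 2 ^ i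

/-- C_{r,m}: the r-graph consisting of the first m r-sets in the colex ordering. -/
def colexGraph (r m : ℕ) : Finset (Finset ℕ) :=
  ((Finset.range (r + m)).powersetCard r).filter
    (fun A => (((Finset.range (r + m)).powersetCard r).filter
      (fun B => binVal B < binVal A)).card < m)



lemma binVal_lt_pow {A : Finset ℕ} {k : ℕ} : binVal A < 2 ^ k ↔ A ⊆ range k := by
  constructor
  · intro h i hi
    rw [mem_range]
    by_contra hik
    push_neg at hik
    have : 2 ^ k ≤ binVal A :=
      le_trans (Nat.pow_le_pow_right (by norm_num) hik) (Finset.single_le_sum (fun j _ => Nat.zero_le _) hi)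
    omega
  · intro h
    calc binVal A ≤ ∑ i ∈ range k, 2 ^ i :=
          Finset.sum_le_sum_of_subset h
      _ < 2 ^ k := Nat.geomSum_lt le_rfl (by simp)

lemma binVal_insert {a : ℕ} {A : Finset ℕ} (h : a ∉ A) :
    binVal (insert a A) = 2 ^ a + binVal A := Finset.sum_insert h

lemma binVal_range (k : ℕ) : binVal (range k) = 2 ^ k - 1 := by
  induction k with
  | zero => simp [binVal]
  | succ k ih =>
    rw [range_add_one, binVal_insert (by simp), ih]
    have := Nat.one_le_two_pow (n := k)
    rw [pow_succ]
    omega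

lemma sum_powersetCard_split (n r : ℕ) (f : Finset ℕ → ℝ) :
    ∑ A ∈ (range (n+1)).powersetCard (r+1), f A
      = ∑ A ∈ (range n).powersetCard (r+1), f A
        + ∑ A ∈ (range n).powersetCard r, f (insert n A) := by
  rw [range_add_one, Finset.powersetCard_succ_insert (by simp)]
  rw [Finset.sum_union, Finset.sum_image]
  · intro A hA B hB hAB
    have hA' : n ∉ A := fun h => by
      simp only [Finset.mem_coe, mem_powersetCard, mem_range] at hA
      exact absurd (mem_range.1 (hA.1 h)) (lt_irrefl n)
    have hB' : n ∉ B := fun h => by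
      simp only [Finset.mem_coe, mem_powersetCard, mem_range] at hB
      exact absurd (mem_range.1 (hB.1 h)) (lt_irrefl n)
    have := congrArg (fun s => Finset.erase s n) hAB
    simpa [Finset.erase_insert, hA', hB'] using this
  · rw [Finset.disjoint_left]
    intro A hA hA2
    simp only [mem_powersetCard] at hA
    obtain ⟨B, hB, rfl⟩ := Finset.mem_image.1 hA2
    exact absurd (mem_range.1 (hA.1 (mem_insert_self n B))) (lt_irrefl n)

lemma tangent_line (a b : ℝ) (ha : 0 ≤ a) (hb : 0 ≤ b) (k : ℕ) :
    a ^ (k+1) + (k+1) * a ^ k * (b - a) ≤ b ^ (k+1) := by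
  rcases ha.eq_or_lt with h0 | hpos
  · rw [← h0]
    cases k with
    | zero => simp
    | succ k =>
      simp only [zero_pow (by omega : k+1 ≠ 0), pow_succ]
      simpa using pow_nonneg hb (k+2) |>.trans_eq (by ring)
  · have hx : (-2:ℝ) ≤ b / a - 1 := by
      have : 0 ≤ b / a := div_nonneg hb hpos.le
      linarith
    have := one_add_mul_le_pow hx (k+1)
    have h2 : (1 + (b/a - 1)) ^ (k+1) = (b/a)^(k+1) := by ring_nf
    rw [h2] at this
    have h3 := mul_le_mul_of_nonneg_left this (le_of_lt (pow_pos hpos (k+1)))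
    calc a ^ (k+1) + (k+1) * a ^ k * (b - a)
        = a ^ (k+1) * (1 + (k+1:ℕ) * (b/a - 1)) := by
          field_simp
          push_cast; ring
      _ ≤ a ^ (k+1) * (b/a)^(k+1) := h3
      _ = b ^ (k+1) := by
          rw [div_pow]
          field_simp

lemma esymm_le (w : ℕ → ℝ) (hw : ∀ i, 0 ≤ w i) :
    ∀ n r : ℕ, ∑ A ∈ (range n).powersetCard r, ∏ i ∈ A, w i
      ≤ (n.choose r : ℝ) * ((∑ i ∈ range n, w i) / n) ^ r := by
  intro n
  induction n with
  | zero =>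
    intro r
    cases r with
    | zero => simp
    | succ r =>
      rw [show ((range 0).powersetCard (r+1)) = ∅ by simp [Finset.powersetCard_eq_empty]]
      simp
  | succ n IH =>
    intro r
    cases r with
    | zero => simp
    | succ r =>
      set s : ℝ := ∑ i ∈ range n, w i with hs
      have hs0 : 0 ≤ s := Finset.sum_nonneg fun i _ => hw i
      set a : ℝ := s / n with ha
      set b : ℝ := (s + w n) / (n + 1) with hb
      have ha0 : 0 ≤ a := div_nonneg hs0 (Nat.cast_nonneg n)
      have hb0 : 0 ≤ b := div_nonneg (by linarith [hw n]) (by positivity)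
      have hna : (n : ℝ) * a = s := by
        rcases Nat.eq_zero_or_pos n with h | h
        · subst h; simp [hs]
        · rw [ha]; field_simp
      have hnb : ((n : ℝ) + 1) * b = s + w n := by
        rw [hb]; field_simp
      have key : ∑ A ∈ (range (n+1)).powersetCard (r+1), ∏ i ∈ A, w i
          ≤ (n.choose (r+1) : ℝ) * a ^ (r+1) + w n * ((n.choose r : ℝ) * a ^ r) := by
        rw [sum_powersetCard_split]
        gcongr ?_ + ?_
        · exact IH (r+1)
        · have heq : ∀ A ∈ (range n).powersetCard r,
              ∏ i ∈ insert n A, w i = w n * ∏ i ∈ A, w i := by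
            intro A hA
            have : n ∉ A := fun h => by
              simp only [mem_powersetCard] at hA
              exact absurd (mem_range.1 (hA.1 h)) (lt_irrefl n)
            rw [Finset.prod_insert this]
          rw [Finset.sum_congr rfl heq, ← Finset.mul_sum]
          exact mul_le_mul_of_nonneg_left (IH r) (hw n)
      have hC : ((n+1).choose (r+1) : ℝ) = (n.choose (r+1) : ℝ) + (n.choose r : ℝ) := by
        rw [Nat.choose_succ_succ']
        push_cast; ring
      have hC2 : ((n+1).choose (r+1) : ℝ) * (r+1) = (n.choose r : ℝ) * (n+1) := by
        have := Nat.add_one_mul_choose_eq n r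
        have := congrArg (fun x : ℕ => (x : ℝ)) this
        push_cast at this
        linarith
      have htan := tangent_line a b ha0 hb0 r
      have hmul := mul_le_mul_of_nonneg_left htan (Nat.cast_nonneg ((n+1).choose (r+1)) : (0:ℝ) ≤ _)
      have halg : ((n+1).choose (r+1) : ℝ) * (a ^ (r+1) + (r+1) * a ^ r * (b - a))
          = (n.choose (r+1) : ℝ) * a ^ (r+1) + w n * ((n.choose r : ℝ) * a ^ r) := by
        have hba : ((n:ℝ)+1) * (b - a) = w n - a := by
          have : ((n:ℝ)+1) * b - ((n:ℝ)+1) * a = s + w n - (s + a) := by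
            rw [hnb]; rw [← hna]; ring
          linarith [this]
        linear_combination a^(r+1) * hC + a^r*(b-a) * hC2 + ((n.choose r:ℝ) * a^r) * hba
      calc ∑ A ∈ (range (n+1)).powersetCard (r+1), ∏ i ∈ A, w i
          ≤ (n.choose (r+1) : ℝ) * a ^ (r+1) + w n * ((n.choose r : ℝ) * a ^ r) := key
        _ = ((n+1).choose (r+1) : ℝ) * (a ^ (r+1) + (r+1) * a ^ r * (b - a)) := halg.symm
        _ ≤ ((n+1).choose (r+1) : ℝ) * b ^ (r+1) := hmul
        _ = ((n+1).choose (r+1) : ℝ) * ((∑ i ∈ range (n+1), w i) / ((n:ℝ)+1)) ^ (r+1) := by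
            rw [Finset.sum_range_succ, ← hs, hb]
        _ = ((n+1).choose (r+1) : ℝ) * ((∑ i ∈ range (n+1), w i) / ((n+1 : ℕ) : ℝ)) ^ (r+1) := by
            push_cast; ring

lemma lagPoly_nonneg_bound {E : Finset (Finset ℕ)} {n : ℕ} {w : ℕ → ℝ}
    (hw : IsWeighting n w) : lagPoly E w ≤ (E.card : ℝ) := by
  obtain ⟨hw0, hwz, hws⟩ := hw
  have : ∀ e ∈ E, ∏ i ∈ e, w i ≤ 1 := by
    intro e _
    apply Finset.prod_le_one (fun i _ => hw0 i)
    intro i _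
    by_cases hi : i < n
    · rw [← hws]
      exact Finset.single_le_sum (f := w) (fun j _ => hw0 j) (mem_range.2 hi)
    · rw [hwz i (by omega)]; norm_num
  calc lagPoly E w ≤ ∑ _e ∈ E, (1:ℝ) := Finset.sum_le_sum this
    _ = E.card := by simp

lemma sum_range_le_one {n n' : ℕ} {w : ℕ → ℝ} (hw : IsWeighting n' w) :
    ∑ i ∈ range n, w i ≤ 1 := by
  obtain ⟨hw0, hwz, hws⟩ := hw
  have h1 : ∑ i ∈ range n, w i ≤ ∑ i ∈ range (max n n'), w i :=
    Finset.sum_le_sum_of_subset_of_nonneg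
      (Finset.range_subset_range.2 (le_max_left _ _)) (fun i _ _ => hw0 i)
  have h2 : ∑ i ∈ range (max n n'), w i = ∑ i ∈ range n', w i :=
    (Finset.sum_subset (Finset.range_subset_range.2 (le_max_right _ _))
      (fun i _ hi => hwz i (by simpa using hi))).symm
  rw [h2, hws] at h1
  exact h1

lemma lag_complete_le (n r : ℕ) :
    lag (completeG n r) ≤ (n.choose r : ℝ) * (1 / n) ^ r := by
  apply Real.sSup_le
  · rintro x ⟨n', w, hw, rfl⟩
    have hw0 := hw.1
    have hs0 : 0 ≤ ∑ i ∈ range n, w i := Finset.sum_nonneg fun i _ => hw0 i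
    have hs1 := sum_range_le_one (n := n) hw
    calc lagPoly (completeG n r) w
        ≤ (n.choose r : ℝ) * ((∑ i ∈ range n, w i) / n) ^ r := esymm_le w hw0 n r
      _ ≤ (n.choose r : ℝ) * (1 / n) ^ r := by
          apply mul_le_mul_of_nonneg_left _ (Nat.cast_nonneg _)
          apply pow_le_pow_left₀ (by positivity)
          rcases Nat.eq_zero_or_pos n with h | h
          · simp [h]
          · apply div_le_div_of_nonneg_right hs1 (by positivity) |>.trans_eq rfl
  · positivity

def Astar (k q : ℕ) : Finset ℕ := insert (k+2+q) (insert (k+1+q) (range k))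

def E0 (k q : ℕ) : Finset (Finset ℕ) :=
  ((range (k+2+q)).powersetCard (k+2)
    ∪ ((range (k+1+q)).powersetCard (k+1)).image (insert (k+2+q))) ∪ {Astar k q}

lemma binVal_Astar (k q : ℕ) :
    binVal (Astar k q) = 2^(k+2+q) + (2^(k+1+q) + (2^k - 1)) := by
  rw [Astar, binVal_insert, binVal_insert (by simp; omega), binVal_range]
  simp only [mem_insert, mem_range]
  omega

lemma card_Astar (k q : ℕ) : (Astar k q).card = k + 2 := by
  rw [Astar, Finset.card_insert_of_notMem, Finset.card_insert_of_notMem (by simp; omega),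
    Finset.card_range]
  simp only [mem_insert, mem_range]
  omega

lemma char_E0 (k q : ℕ) (A : Finset ℕ) (hA : A.card = k + 2) :
    binVal A ≤ binVal (Astar k q) ↔ A ∈ E0 k q := by
  have h1 : (1:ℕ) ≤ 2^k := Nat.one_le_two_pow
  have h21 : (2:ℕ)^(k+2+q) = 2 * 2^(k+1+q) := by ring
  have h32 : (2:ℕ)^(k+3+q) = 2 * 2^(k+2+q) := by ring
  have h0le : (2:ℕ)^k ≤ 2^(k+1+q) := Nat.pow_le_pow_right (by norm_num) (by omega)
  have hV := binVal_Astar k q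
  constructor
  · intro h
    have hVlt : binVal (Astar k q) < 2^(k+3+q) := by omega
    have hsub : A ⊆ range (k+3+q) := binVal_lt_pow.1 (lt_of_le_of_lt h hVlt)
    by_cases hn : (k+2+q) ∈ A
    · set B := A.erase (k+2+q) with hBdef
      have hBcard : B.card = k + 1 := by rw [hBdef, Finset.card_erase_of_mem hn, hA]; omega
      have hAB : A = insert (k+2+q) B := (Finset.insert_erase hn).symm
      have hnB : (k+2+q) ∉ B := Finset.notMem_erase _ _
      have hbv : binVal A = 2^(k+2+q) + binVal B := by
        conv_lhs => rw [hAB]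
        exact binVal_insert hnB
      have hBle : binVal B ≤ 2^(k+1+q) + (2^k - 1) := by omega
      by_cases hm : (k+1+q) ∈ B
      · set C := B.erase (k+1+q) with hCdef
        have hCcard : C.card = k := by rw [hCdef, Finset.card_erase_of_mem hm, hBcard]; omega
        have hBC : B = insert (k+1+q) C := (Finset.insert_erase hm).symm
        have hmC : (k+1+q) ∉ C := Finset.notMem_erase _ _
        have hbvB : binVal B = 2^(k+1+q) + binVal C := by
          conv_lhs => rw [hBC]
          exact binVal_insert hmC
        have hCle : binVal C < 2^k := by omega
        have hCsub : C ⊆ range k := binVal_lt_pow.1 hCle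
        have hCeq : C = range k := by
          apply Finset.eq_of_subset_of_card_le hCsub
          rw [Finset.card_range, hCcard]
        rw [E0, Finset.mem_union]
        right
        rw [Finset.mem_singleton, hAB, hBC, hCeq, Astar]
      · have hBlt : binVal B < 2^(k+2+q) := by omega
        have hBsub2 : B ⊆ range (k+2+q) := binVal_lt_pow.1 hBlt
        have hBsub : B ⊆ range (k+1+q) := by
          intro i hi
          have := mem_range.1 (hBsub2 hi)
          have : i ≠ k+1+q := fun h => hm (h ▸ hi)
          rw [mem_range]
          omega
        rw [E0, Finset.mem_union]
        left
        rw [Finset.mem_union]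
        right
        exact Finset.mem_image.2 ⟨B, Finset.mem_powersetCard.2 ⟨hBsub, hBcard⟩, hAB.symm⟩
    · have hAsub : A ⊆ range (k+2+q) := by
        intro i hi
        have := mem_range.1 (hsub hi)
        have : i ≠ k+2+q := fun h => hn (h ▸ hi)
        rw [mem_range]
        omega
      rw [E0, Finset.mem_union]
      left
      rw [Finset.mem_union]
      left
      exact Finset.mem_powersetCard.2 ⟨hAsub, hA⟩
  · intro h
    rw [E0, Finset.mem_union, Finset.mem_union] at h
    rcases h with (h | h) | h
    · have := Finset.mem_powersetCard.1 h
      have hlt : binVal A < 2^(k+2+q) := binVal_lt_pow.2 this.1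
      omega
    · obtain ⟨B, hB, rfl⟩ := Finset.mem_image.1 h
      have hB' := Finset.mem_powersetCard.1 hB
      have hnB : (k+2+q) ∉ B := fun hc => by
        have := mem_range.1 (hB'.1 hc); omega
      have hlt : binVal B < 2^(k+1+q) := binVal_lt_pow.2 hB'.1
      rw [binVal_insert hnB]
      omega
    · rw [Finset.mem_singleton.1 h]

lemma Astar_not_mem_parts (k q : ℕ) :
    Astar k q ∉ (range (k+2+q)).powersetCard (k+2)
      ∪ ((range (k+1+q)).powersetCard (k+1)).image (insert (k+2+q)) := by
  rw [Finset.mem_union]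
  rintro (h | h)
  · have := (Finset.mem_powersetCard.1 h).1 (Finset.mem_insert_self _ _)
    rw [mem_range] at this; omega
  · obtain ⟨B, hB, hBe⟩ := Finset.mem_image.1 h
    have hB' := Finset.mem_powersetCard.1 hB
    have hnB : (k+2+q) ∉ B := fun hc => by
      have := mem_range.1 (hB'.1 hc); omega
    have : (k+1+q) ∈ insert (k+2+q) B := by
      rw [hBe, Astar]
      exact Finset.mem_insert.2 (Or.inr (Finset.mem_insert_self _ _))
    rcases Finset.mem_insert.1 this with h' | h'
    · omega
    · have := mem_range.1 (hB'.1 h'); omega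

lemma card_E0 (k q : ℕ) :
    (E0 k q).card = (k+2+q).choose (k+2) + (k+1+q).choose (k+1) + 1 := by
  rw [E0, Finset.card_union_of_disjoint, Finset.card_union_of_disjoint]
  · rw [Finset.card_image_of_injOn, Finset.card_powersetCard, Finset.card_powersetCard,
      Finset.card_range, Finset.card_range, Finset.card_singleton]
    intro A hA B hB hAB
    simp only [Finset.mem_coe, Finset.mem_powersetCard] at hA hB
    have hA' : (k+2+q) ∉ A := fun h => by
      have := mem_range.1 (hA.1 h); omega
    have hB' : (k+2+q) ∉ B := fun h => by
      have := mem_range.1 (hB.1 h); omega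
    have := congrArg (fun s => Finset.erase s (k+2+q)) hAB
    simpa [Finset.erase_insert, hA', hB'] using this
  · rw [Finset.disjoint_left]
    intro A hA hA2
    have hnA : (k+2+q) ∉ A := fun h => by
      have := mem_range.1 ((Finset.mem_powersetCard.1 hA).1 h); omega
    obtain ⟨B, _, rfl⟩ := Finset.mem_image.1 hA2
    exact hnA (Finset.mem_insert_self _ _)
  · rw [Finset.disjoint_right]
    intro A hA
    rw [Finset.mem_singleton] at hA
    subst hA
    exact Astar_not_mem_parts k q

lemma E0_subset_U (k q m : ℕ) (hm : k + 3 + q ≤ k + 2 + m) :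
    E0 k q ⊆ (range (k + 2 + m)).powersetCard (k+2) := by
  intro A hA
  rw [Finset.mem_powersetCard]
  rw [E0, Finset.mem_union, Finset.mem_union] at hA
  rcases hA with (h | h) | h
  · have := Finset.mem_powersetCard.1 h
    exact ⟨this.1.trans (Finset.range_subset_range.2 (by omega)), this.2⟩
  · obtain ⟨B, hB, rfl⟩ := Finset.mem_image.1 h
    have hB' := Finset.mem_powersetCard.1 hB
    have hnB : (k+2+q) ∉ B := fun hc => by
      have := mem_range.1 (hB'.1 hc); omega
    constructor
    · intro i hi
      rcases Finset.mem_insert.1 hi with h' | h'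
      · rw [mem_range]; omega
      · have := mem_range.1 (hB'.1 h')
        rw [mem_range]; omega
    · rw [Finset.card_insert_of_notMem hnB, hB'.2]
  · rw [Finset.mem_singleton.1 h]
    constructor
    · rw [Astar]
      intro i hi
      rcases Finset.mem_insert.1 hi with h' | h'
      · rw [mem_range]; omega
      rcases Finset.mem_insert.1 h' with h'' | h''
      · rw [mem_range]; omega
      · have := mem_range.1 h''
        rw [mem_range]; omega
    · exact card_Astar k q

lemma initseg (U E : Finset (Finset ℕ)) (m V : ℕ) (hEU : E ⊆ U) (hcard : E.card = m)
    (hchar : ∀ A ∈ U, (binVal A ≤ V ↔ A ∈ E)) :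
    U.filter (fun A => (U.filter (fun B => binVal B < binVal A)).card < m) = E := by
  ext A
  simp only [Finset.mem_filter]
  constructor
  · rintro ⟨hAU, hcnt⟩
    by_contra hAE
    have hlt : V < binVal A := by
      by_contra hle
      exact hAE ((hchar A hAU).1 (by omega))
    have hsub : E ⊆ U.filter (fun B => binVal B < binVal A) := by
      intro B hBE
      rw [Finset.mem_filter]
      have := (hchar B (hEU hBE)).2 hBE
      exact ⟨hEU hBE, by omega⟩
    have := Finset.card_le_card hsub
    omega
  · intro hAE
    have hAU := hEU hAE
    refine ⟨hAU, ?_⟩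
    have hsub : U.filter (fun B => binVal B < binVal A) ⊆ E.erase A := by
      intro B hB
      rw [Finset.mem_filter] at hB
      have hBlt := hB.2
      have hBE : B ∈ E := by
        apply (hchar B hB.1).1
        have := (hchar A hAU).2 hAE
        omega
      rw [Finset.mem_erase]
      exact ⟨fun h => by subst h; omega, hBE⟩
    have h1 := Finset.card_le_card hsub
    have h2 : (E.erase A).card = m - 1 := by
      rw [Finset.card_erase_of_mem hAE, hcard]
    have hm : 1 ≤ m := by
      rw [← hcard]
      exact Finset.card_pos.2 ⟨A, hAE⟩
    omega

lemma q_le_choose (k q : ℕ) : q + 1 ≤ (k+1+q).choose (k+1) := by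
  have h2 : (q+1).choose q ≤ (k+1+q).choose q := Nat.choose_le_choose q (by omega)
  rw [Nat.choose_succ_self_right] at h2
  have h3 : (k+1+q).choose (k+1) = (k+1+q).choose q := by
    rw [← Nat.choose_symm (show k+1 ≤ k+1+q by omega)]
    congr 1
    omega
  omega

lemma colex_eq (k q : ℕ) :
    colexGraph (k+2) ((k+2+q).choose (k+2) + (k+1+q).choose (k+1) + 1) = E0 k q := by
  set m := (k+2+q).choose (k+2) + (k+1+q).choose (k+1) + 1 with hmdef
  have hm : k + 3 + q ≤ k + 2 + m := by
    have := q_le_choose k q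
    omega
  rw [colexGraph]
  apply initseg _ _ _ (binVal (Astar k q)) (E0_subset_U k q m hm) (card_E0 k q)
  intro A hAU
  exact char_E0 k q A (Finset.mem_powersetCard.1 hAU).2

/-- the witness weighting -/
noncomputable def ww (k q : ℕ) : ℕ → ℝ := fun i =>
  if i < k+1+q then 1/(k+2+q) else if i < k+3+q then 1/(2*(k+2+q)) else 0

lemma ww_isWeighting (k q : ℕ) : IsWeighting (k+3+q) (ww k q) := by
  have hn : (0:ℝ) < (k+2+q : ℝ) := by positivity
  refine ⟨?_, ?_, ?_⟩
  · intro i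
    rw [ww]
    split_ifs <;> positivity
  · intro i hi
    rw [ww, if_neg (by omega), if_neg (by omega)]
  · have hsplit : ∑ i ∈ range (k+3+q), ww k q i
        = (∑ i ∈ range (k+1+q), ww k q i) + ww k q (k+1+q) + ww k q (k+2+q) := by
      have e1 : k+3+q = (k+2+q)+1 := by omega
      have e2 : k+2+q = (k+1+q)+1 := by omega
      rw [e1, Finset.sum_range_succ, e2, Finset.sum_range_succ]
    have h1 : ∑ i ∈ range (k+1+q), ww k q i = (k+1+q : ℝ) * (1/(k+2+q)) := by
      rw [Finset.sum_congr rfl (fun i hi => by rw [ww, if_pos (mem_range.1 hi)]),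
        Finset.sum_const, Finset.card_range, nsmul_eq_mul]
      push_cast
      ring
    have h2 : ww k q (k+1+q) = 1/(2*(k+2+q : ℝ)) := by
      rw [ww, if_neg (by omega), if_pos (by omega)]
    have h3 : ww k q (k+2+q) = 1/(2*(k+2+q : ℝ)) := by
      rw [ww, if_neg (by omega), if_pos (by omega)]
    rw [hsplit, h1, h2, h3]
    push_cast
    field_simp
    ring

lemma lagPoly_E0 (k q : ℕ) :
    lagPoly (E0 k q) (ww k q)
      = ((k+2+q).choose (k+2) : ℝ) * (1/(k+2+q)) ^ (k+2)
        + (1/(2*(k+2+q)))^2 * (1/(k+2+q))^k := by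
  have hn : (0:ℝ) < (k+2+q : ℝ) := by positivity
  have hwlow : ∀ i, i < k+1+q → ww k q i = 1/(k+2+q : ℝ) := by
    intro i hi; rw [ww, if_pos hi]
  have hwm : ww k q (k+1+q) = 1/(2*(k+2+q : ℝ)) := by
    rw [ww, if_neg (by omega), if_pos (by omega)]
  have hwt : ww k q (k+2+q) = 1/(2*(k+2+q : ℝ)) := by
    rw [ww, if_neg (by omega), if_pos (by omega)]
  have hprodlow : ∀ j, ∀ A ∈ (range (k+1+q)).powersetCard j,
      ∏ i ∈ A, ww k q i = (1/(k+2+q : ℝ))^j := by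
    intro j A hA
    obtain ⟨hsub, hcard⟩ := Finset.mem_powersetCard.1 hA
    rw [Finset.prod_congr rfl (fun i hi => hwlow i (mem_range.1 (hsub hi))),
      Finset.prod_const, hcard]
  -- split the union sums
  rw [lagPoly, E0, Finset.sum_union, Finset.sum_union]
  · -- now compute each part
    have hS1 : ∑ A ∈ (range (k+2+q)).powersetCard (k+2), ∏ i ∈ A, ww k q i
        = ((k+1+q).choose (k+2) : ℝ) * (1/(k+2+q))^(k+2)
          + ((k+1+q).choose (k+1) : ℝ) * (1/(2*(k+2+q)) * (1/(k+2+q))^(k+1)) := by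
      have e2 : k+2+q = (k+1+q)+1 := by omega
      rw [e2, sum_powersetCard_split]
      congr 1
      · rw [Finset.sum_congr rfl (hprodlow (k+2)), Finset.sum_const,
          Finset.card_powersetCard, Finset.card_range, nsmul_eq_mul]
      · have : ∀ A ∈ (range (k+1+q)).powersetCard (k+1),
            ∏ i ∈ insert (k+1+q) A, ww k q i
              = 1/(2*(k+2+q : ℝ)) * (1/(k+2+q))^(k+1) := by
          intro A hA
          obtain ⟨hsub, hcard⟩ := Finset.mem_powersetCard.1 hA
          have hnm : (k+1+q) ∉ A := fun h => by
            have := mem_range.1 (hsub h); omega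
          rw [Finset.prod_insert hnm, hwm, hprodlow (k+1) A hA]
        rw [Finset.sum_congr rfl this, Finset.sum_const,
          Finset.card_powersetCard, Finset.card_range, nsmul_eq_mul]
    have hS2 : ∑ A ∈ ((range (k+1+q)).powersetCard (k+1)).image (insert (k+2+q)),
          ∏ i ∈ A, ww k q i
        = ((k+1+q).choose (k+1) : ℝ) * (1/(2*(k+2+q)) * (1/(k+2+q))^(k+1)) := by
      rw [Finset.sum_image]
      · have : ∀ A ∈ (range (k+1+q)).powersetCard (k+1),
            ∏ i ∈ insert (k+2+q) A, ww k q i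
              = 1/(2*(k+2+q : ℝ)) * (1/(k+2+q))^(k+1) := by
          intro A hA
          obtain ⟨hsub, hcard⟩ := Finset.mem_powersetCard.1 hA
          have hnm : (k+2+q) ∉ A := fun h => by
            have := mem_range.1 (hsub h); omega
          rw [Finset.prod_insert hnm, hwt, hprodlow (k+1) A hA]
        rw [Finset.sum_congr rfl this, Finset.sum_const,
          Finset.card_powersetCard, Finset.card_range, nsmul_eq_mul]
      · intro A hA B hB hAB
        simp only [Finset.mem_coe, Finset.mem_powersetCard] at hA hB
        have hA' : (k+2+q) ∉ A := fun h => by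
          have := mem_range.1 (hA.1 h); omega
        have hB' : (k+2+q) ∉ B := fun h => by
          have := mem_range.1 (hB.1 h); omega
        have := congrArg (fun s => Finset.erase s (k+2+q)) hAB
        simpa [Finset.erase_insert, hA', hB'] using this
    have hS3 : ∑ A ∈ ({Astar k q} : Finset (Finset ℕ)), ∏ i ∈ A, ww k q i
        = (1/(2*(k+2+q : ℝ)))^2 * (1/(k+2+q))^k := by
      rw [Finset.sum_singleton, Astar,
        Finset.prod_insert (by simp only [Finset.mem_insert, mem_range]; omega),
        Finset.prod_insert (by simp only [mem_range]; omega), hwt, hwm,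
        Finset.prod_congr rfl (fun i hi => hwlow i (by have := mem_range.1 hi; omega)),
        Finset.prod_const, Finset.card_range]
      ring
    rw [hS1, hS2, hS3]
    have hpascal : ((k+2+q).choose (k+2) : ℝ)
        = ((k+1+q).choose (k+2) : ℝ) + ((k+1+q).choose (k+1) : ℝ) := by
      have : (k+2+q) = (k+1+q) + 1 := by omega
      rw [this, Nat.choose_succ_succ']
      push_cast; ring
    rw [hpascal]
    have h2n : (1:ℝ)/(k+2+q) = 2 * (1/(2*(k+2+q))) := by
      field_simp
    rw [h2n]; ring
  · rw [Finset.disjoint_left]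
    intro A hA hA2
    have hnA : (k+2+q) ∉ A := fun h => by
      have := mem_range.1 ((Finset.mem_powersetCard.1 hA).1 h); omega
    obtain ⟨B, _, rfl⟩ := Finset.mem_image.1 hA2
    exact hnA (Finset.mem_insert_self _ _)
  · rw [Finset.disjoint_right]
    intro A hA
    rw [Finset.mem_singleton] at hA
    subst hA
    exact Astar_not_mem_parts k q

/-- For t ≥ r+1 and m = C(t-1,r) + C(t-2,r-1) + 1 we have λ(C_{r,m}) > λ([t-1]^{(r)}). -/
theorem stmt_6 (r t : ℕ) (hr : 2 ≤ r) (ht : r + 1 ≤ t) :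
    lag (completeG (t - 1) r) <
      lag (colexGraph r ((t - 1).choose r + (t - 2).choose (r - 1) + 1)) := by
  obtain ⟨k, rfl⟩ : ∃ k, r = k + 2 := ⟨r - 2, by omega⟩
  obtain ⟨q, rfl⟩ : ∃ q, t = k + 3 + q := ⟨t - (k + 3), by omega⟩
  have e1 : k + 3 + q - 1 = k + 2 + q := by omega
  have e2 : k + 3 + q - 2 = k + 1 + q := by omega
  have e3 : k + 2 - 1 = k + 1 := by omega
  rw [e1, e2, e3, colex_eq]
  have hstep1 := lag_complete_le (k+2+q) (k+2)
  have hmem : lagPoly (E0 k q) (ww k q)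
      ∈ {x | ∃ n w, IsWeighting n w ∧ x = lagPoly (E0 k q) w} :=
    ⟨k+3+q, ww k q, ww_isWeighting k q, rfl⟩
  have hbdd : BddAbove {x | ∃ n w, IsWeighting n w ∧ x = lagPoly (E0 k q) w} := by
    refine ⟨(((E0 k q).card : ℕ) : ℝ), ?_⟩
    rintro x ⟨n', w', hw', rfl⟩
    exact lagPoly_nonneg_bound hw'
  have hstep3 : lagPoly (E0 k q) (ww k q) ≤ lag (E0 k q) := le_csSup hbdd hmem
  have hstep2 : ((k+2+q).choose (k+2) : ℝ) * (1/((k+2+q : ℕ) : ℝ)) ^ (k+2)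
      < lagPoly (E0 k q) (ww k q) := by
    rw [lagPoly_E0]
    have hpos : (0:ℝ) < (1/(2*((k:ℝ)+2+q)))^2 * (1/((k:ℝ)+2+q))^k := by positivity
    have hcast : ((k+2+q : ℕ) : ℝ) = (k:ℝ)+2+q := by push_cast; ring
    rw [hcast]
    linarith
  calc lag (completeG (k+2+q) (k+2))
      ≤ ((k+2+q).choose (k+2) : ℝ) * (1/((k+2+q : ℕ) : ℝ)) ^ (k+2) := hstep1
    _ < lagPoly (E0 k q) (ww k q) := hstep2
    _ ≤ lag (E0 k q) := hstep3
end

section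
/- Let G be a left-compressed 3-graph on vertex set [t] with m edges, where C(t−1,3) ≤ m ≤ C(t−1,3) + C(t−2,2) − (t−2)/2, containing the maximum clique [t−2]^{(3)} and achieving λ(G) = λ^3_{(m,t−2)}. Let b = |E_{(t−1)t}|. Then either λ(G) < λ([t−1]^{(3)}) or |[t−2]^{(2)} \ E_t| ≤ b. -/
open Finset

/-- A hypergraph is left-compressed if replacing any vertex of an edge by a
smaller vertex (not already in the edge) again yields an edge. -/
def LeftCompressed (E : Finset (Finset ℕ)) : Prop :=
  ∀ e ∈ E, ∀ j ∈ e, ∀ i < j, i ∉ e → insert i (e.erase j) ∈ E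


open Finset

section C1
variable {E : Finset (Finset ℕ)}

theorem weight_le_one {n : ℕ} {w : ℕ → ℝ} (hw : IsWeighting n w) (i : ℕ) : w i ≤ 1 := by
  obtain ⟨h0, hz, hs⟩ := hw
  by_cases hi : i < n
  · calc w i ≤ ∑ j ∈ Finset.range n, w j :=
        Finset.single_le_sum (fun j _ => h0 j) (Finset.mem_range.2 hi)
    _ = 1 := hs
  · rw [hz i (by omega)]; norm_num

theorem lagPoly_nonneg_s16 {w : ℕ → ℝ} (h0 : ∀ i, 0 ≤ w i) : 0 ≤ lagPoly E w := by
  apply Finset.sum_nonneg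
  intro e _
  exact Finset.prod_nonneg fun i _ => h0 i

theorem lagPoly_le_card {n : ℕ} {w : ℕ → ℝ} (hw : IsWeighting n w) :
    lagPoly E w ≤ (E.card : ℝ) := by
  unfold lagPoly
  calc ∑ e ∈ E, ∏ i ∈ e, w i ≤ ∑ e ∈ E, (1:ℝ) := by
        apply Finset.sum_le_sum
        intro e _
        exact Finset.prod_le_one (fun i _ => hw.1 i) (fun i _ => weight_le_one hw i)
  _ = E.card := by simp

theorem lagSet_bddAbove :
    BddAbove {x | ∃ n w, IsWeighting n w ∧ x = lagPoly E w} := by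
  refine ⟨(E.card : ℝ), ?_⟩
  rintro y ⟨n, w, hw, rfl⟩
  exact lagPoly_le_card hw

theorem le_lag {n : ℕ} {w : ℕ → ℝ} (hw : IsWeighting n w) : lagPoly E w ≤ lag E :=
  le_csSup lagSet_bddAbove ⟨n, w, hw, rfl⟩

theorem lagSet_nonempty (n : ℕ) (hn : 0 < n) :
    Set.Nonempty {x | ∃ n w, IsWeighting n w ∧ x = lagPoly E w} := by
  refine ⟨lagPoly E (fun i => if i = 0 then 1 else 0), n, _, ⟨?_, ?_, ?_⟩, rfl⟩
  · intro i; split <;> norm_num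
  · intro i hi; rw [if_neg]; omega
  · rw [Finset.sum_ite_eq' (Finset.range n) 0 (fun _ => (1:ℝ))]
    rw [if_pos (Finset.mem_range.2 hn)]

theorem lagPoly_mono {w w' : ℕ → ℝ} {t : ℕ} (hE : E ⊆ (Finset.range t).powersetCard 3)
    (h0 : ∀ i, 0 ≤ w i) (hle : ∀ i, i < t → w i ≤ w' i) :
    lagPoly E w ≤ lagPoly E w' := by
  apply Finset.sum_le_sum
  intro e he
  obtain ⟨hsub, _⟩ := Finset.mem_powersetCard.1 (hE he)
  exact Finset.prod_le_prod (fun i _ => h0 i)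
    (fun i hi => hle i (Finset.mem_range.1 (hsub hi)))

end C1


open Finset

section C2
variable {E : Finset (Finset ℕ)}

theorem lagPoly_decomp (F : Finset (Finset ℕ)) (k l : ℕ) (hkl : k ≠ l) (w : ℕ → ℝ) :
    lagPoly F w
      = (∑ e ∈ F.filter (fun e => k ∉ e ∧ l ∉ e), ∏ i ∈ e, w i)
        + w k * (∑ e ∈ F.filter (fun e => k ∈ e ∧ l ∉ e), ∏ i ∈ e.erase k, w i)
        + w l * (∑ e ∈ F.filter (fun e => l ∈ e ∧ k ∉ e), ∏ i ∈ e.erase l, w i)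
        + w k * (w l * (∑ e ∈ F.filter (fun e => k ∈ e ∧ l ∈ e), ∏ i ∈ (e.erase k).erase l, w i)) := by
  have key : ∀ e ∈ F, ∏ i ∈ e, w i =
      (if k ∉ e ∧ l ∉ e then ∏ i ∈ e, w i else 0)
      + (if k ∈ e ∧ l ∉ e then w k * ∏ i ∈ e.erase k, w i else 0)
      + (if l ∈ e ∧ k ∉ e then w l * ∏ i ∈ e.erase l, w i else 0)
      + (if k ∈ e ∧ l ∈ e then w k * (w l * ∏ i ∈ (e.erase k).erase l, w i) else 0) := by
    intro e _
    by_cases hk : k ∈ e <;> by_cases hl : l ∈ e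
    · have h1 : l ∈ e.erase k := Finset.mem_erase.2 ⟨hkl.symm, hl⟩
      have h2 : w l * ∏ i ∈ (e.erase k).erase l, w i = ∏ i ∈ e.erase k, w i :=
        Finset.mul_prod_erase _ _ h1
      have h3 : w k * ∏ i ∈ e.erase k, w i = ∏ i ∈ e, w i :=
        Finset.mul_prod_erase _ _ hk
      simp only [hk, hl, not_true, not_false_iff, and_true, and_false, true_and, false_and,
        if_true, if_false, h2, h3]
      ring
    · have h3 : w k * ∏ i ∈ e.erase k, w i = ∏ i ∈ e, w i :=
        Finset.mul_prod_erase _ _ hk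
      simp only [hk, hl, not_true, not_false_iff, and_true, and_false, true_and, false_and,
        if_true, if_false, h3]
      ring
    · have h3 : w l * ∏ i ∈ e.erase l, w i = ∏ i ∈ e, w i :=
        Finset.mul_prod_erase _ _ hl
      simp only [hk, hl, not_true, not_false_iff, and_true, and_false, true_and, false_and,
        if_true, if_false, h3]
      ring
    · simp only [hk, hl, not_true, not_false_iff, and_true, and_false, true_and, false_and,
        if_true, if_false]
      ring
  unfold lagPoly
  rw [Finset.sum_congr rfl key]
  rw [Finset.sum_add_distrib, Finset.sum_add_distrib, Finset.sum_add_distrib]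
  rw [← Finset.sum_filter, ← Finset.sum_filter, ← Finset.sum_filter, ← Finset.sum_filter]
  rw [← Finset.mul_sum]
  rw [← Finset.mul_sum]
  congr 1
  rw [← Finset.mul_sum, ← Finset.mul_sum]

theorem pert_value (F : Finset (Finset ℕ)) {k l : ℕ} (hkl : k ≠ l) (x : ℕ → ℝ) (a b : ℝ) :
    lagPoly F (Function.update (Function.update x k a) l b)
      = (∑ e ∈ F.filter (fun e => k ∉ e ∧ l ∉ e), ∏ i ∈ e, x i)
        + a * (∑ e ∈ F.filter (fun e => k ∈ e ∧ l ∉ e), ∏ i ∈ e.erase k, x i)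
        + b * (∑ e ∈ F.filter (fun e => l ∈ e ∧ k ∉ e), ∏ i ∈ e.erase l, x i)
        + a * (b * (∑ e ∈ F.filter (fun e => k ∈ e ∧ l ∈ e), ∏ i ∈ (e.erase k).erase l, x i)) := by
  set w := Function.update (Function.update x k a) l b with hw
  have hwk : w k = a := by rw [hw, Function.update_of_ne hkl, Function.update_self]
  have hwl : w l = b := by rw [hw, Function.update_self]
  have hwo : ∀ i, i ≠ k → i ≠ l → w i = x i := by
    intro i hik hil
    rw [hw, Function.update_of_ne hil, Function.update_of_ne hik]
  rw [lagPoly_decomp F k l hkl w, hwk, hwl]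
  have s1 : (∑ e ∈ F.filter (fun e => k ∉ e ∧ l ∉ e), ∏ i ∈ e, w i)
      = ∑ e ∈ F.filter (fun e => k ∉ e ∧ l ∉ e), ∏ i ∈ e, x i := by
    apply Finset.sum_congr rfl
    intro e he
    obtain ⟨_, hk, hl⟩ := Finset.mem_filter.1 he
    exact Finset.prod_congr rfl fun i hi =>
      hwo i (fun h => hk (h ▸ hi)) (fun h => hl (h ▸ hi))
  have s2 : (∑ e ∈ F.filter (fun e => k ∈ e ∧ l ∉ e), ∏ i ∈ e.erase k, w i)
      = ∑ e ∈ F.filter (fun e => k ∈ e ∧ l ∉ e), ∏ i ∈ e.erase k, x i := by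
    apply Finset.sum_congr rfl
    intro e he
    obtain ⟨_, _, hl⟩ := Finset.mem_filter.1 he
    refine Finset.prod_congr rfl fun i hi => ?_
    obtain ⟨hik, hie⟩ := Finset.mem_erase.1 hi
    exact hwo i hik (fun h => hl (h ▸ hie))
  have s3 : (∑ e ∈ F.filter (fun e => l ∈ e ∧ k ∉ e), ∏ i ∈ e.erase l, w i)
      = ∑ e ∈ F.filter (fun e => l ∈ e ∧ k ∉ e), ∏ i ∈ e.erase l, x i := by
    apply Finset.sum_congr rfl
    intro e he
    obtain ⟨_, _, hk⟩ := Finset.mem_filter.1 he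
    refine Finset.prod_congr rfl fun i hi => ?_
    obtain ⟨hil, hie⟩ := Finset.mem_erase.1 hi
    exact hwo i (fun h => hk (h ▸ hie)) hil
  have s4 : (∑ e ∈ F.filter (fun e => k ∈ e ∧ l ∈ e), ∏ i ∈ (e.erase k).erase l, w i)
      = ∑ e ∈ F.filter (fun e => k ∈ e ∧ l ∈ e), ∏ i ∈ (e.erase k).erase l, x i := by
    apply Finset.sum_congr rfl
    intro e he
    refine Finset.prod_congr rfl fun i hi => ?_
    obtain ⟨hil, hi2⟩ := Finset.mem_erase.1 hi
    obtain ⟨hik, _⟩ := Finset.mem_erase.1 hi2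
    exact hwo i hik hil
  rw [s1, s2, s3, s4]

theorem pert_weighting {t : ℕ} {x : ℕ → ℝ} (hx : IsWeighting t x) {k l : ℕ}
    (hk : k < t) (hl : l < t) (hkl : k ≠ l) {ε : ℝ} (hε0 : 0 ≤ ε) (hεk : ε ≤ x k) :
    IsWeighting t (Function.update (Function.update x k (x k - ε)) l (x l + ε)) := by
  obtain ⟨h0, hz, hs⟩ := hx
  refine ⟨?_, ?_, ?_⟩
  · intro i
    rcases eq_or_ne i l with rfl|hil
    · rw [Function.update_self]; have := h0 i; linarith
    · rw [Function.update_of_ne hil]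
      rcases eq_or_ne i k with rfl|hik
      · rw [Function.update_self]; linarith
      · rw [Function.update_of_ne hik]; exact h0 i
  · intro i hi
    have hik : i ≠ k := by omega
    have hil : i ≠ l := by omega
    rw [Function.update_of_ne hil, Function.update_of_ne hik]
    exact hz i hi
  · rw [Finset.sum_update_of_mem (Finset.mem_range.2 hl)]
    have hkm : k ∈ Finset.range t \ {l} := by
      simp [Finset.mem_range, hk, hkl]
    rw [Finset.sum_update_of_mem hkm]
    have h1 : ∑ i ∈ Finset.range t, x i
        = x l + ∑ i ∈ Finset.range t \ {l}, x i := by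
      rw [Finset.sum_eq_sum_sdiff_singleton_add (Finset.mem_range.2 hl) x]; ring
    have h2 : ∑ i ∈ Finset.range t \ {l}, x i
        = x k + ∑ i ∈ (Finset.range t \ {l}) \ {k}, x i := by
      rw [Finset.sum_eq_sum_sdiff_singleton_add hkm x]; ring
    rw [h1, h2] at hs
    linarith

theorem le_of_le_eps {a c q : ℝ} (hc : 0 < c) (hq : 0 ≤ q)
    (h : ∀ ε : ℝ, 0 < ε → ε ≤ c → a ≤ ε * q) : a ≤ 0 := by
  by_contra hab
  push_neg at hab
  rcases eq_or_lt_of_le hq with hq0 | hq0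
  · have := h c hc le_rfl
    rw [← hq0] at this
    linarith
  · have hε : 0 < min c (a / (2*q)) := lt_min hc (by positivity)
    have h2 := h _ hε (min_le_left _ _)
    have h3 : min c (a / (2*q)) * q ≤ (a / (2*q)) * q :=
      mul_le_mul_of_nonneg_right (min_le_right _ _) hq
    have h4 : (a / (2*q)) * q = a/2 := by field_simp
    linarith

theorem kkt {E : Finset (Finset ℕ)} {t : ℕ} {x : ℕ → ℝ} (hx : IsWeighting t x)
    (hmax : ∀ (n : ℕ) (w : ℕ → ℝ), IsWeighting n w → lagPoly E w ≤ lagPoly E x)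
    {k l : ℕ} (hk : k < t) (hl : l < t) (hkl : k ≠ l) (hxk : 0 < x k) (hxl : 0 < x l) :
    (∑ e ∈ E.filter (fun e => k ∈ e ∧ l ∉ e), ∏ i ∈ e.erase k, x i)
      - (∑ e ∈ E.filter (fun e => l ∈ e ∧ k ∉ e), ∏ i ∈ e.erase l, x i)
      = (x k - x l) * (∑ e ∈ E.filter (fun e => k ∈ e ∧ l ∈ e), ∏ i ∈ (e.erase k).erase l, x i) := by
  set Bk := ∑ e ∈ E.filter (fun e => k ∈ e ∧ l ∉ e), ∏ i ∈ e.erase k, x i with hBk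
  set Bl := ∑ e ∈ E.filter (fun e => l ∈ e ∧ k ∉ e), ∏ i ∈ e.erase l, x i with hBl
  set Q := ∑ e ∈ E.filter (fun e => k ∈ e ∧ l ∈ e), ∏ i ∈ (e.erase k).erase l, x i with hQ
  have hQ0 : 0 ≤ Q := Finset.sum_nonneg fun e _ => Finset.prod_nonneg fun i _ => hx.1 i
  have hxid : Function.update (Function.update x k (x k)) l (x l) = x := by
    rw [Function.update_eq_self, Function.update_eq_self]
  have hbase : lagPoly E x
      = (∑ e ∈ E.filter (fun e => k ∉ e ∧ l ∉ e), ∏ i ∈ e, x i)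
        + x k * Bk + x l * Bl + x k * (x l * Q) := by
    conv_lhs => rw [← hxid]
    exact pert_value E hkl x (x k) (x l)
  have key1 : Bl - Bk + (x k - x l) * Q ≤ 0 := by
    apply le_of_le_eps hxk hQ0
    intro ε hε0 hεc
    have hw := pert_weighting hx hk hl hkl (le_of_lt hε0) hεc
    have hle := hmax t _ hw
    rw [pert_value E hkl x (x k - ε) (x l + ε), hbase] at hle
    have h2 : ε * (Bl - Bk + (x k - x l) * Q) ≤ ε * (ε * Q) := by nlinarith [hle]
    exact le_of_mul_le_mul_left h2 hε0
  -- symmetric direction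
  have hQQ : (∑ e ∈ E.filter (fun e => l ∈ e ∧ k ∈ e), ∏ i ∈ (e.erase l).erase k, x i) = Q := by
    have hfe : E.filter (fun e => l ∈ e ∧ k ∈ e) = E.filter (fun e => k ∈ e ∧ l ∈ e) := by
      ext e; simp only [Finset.mem_filter]; tauto
    rw [hfe, hQ]
    exact Finset.sum_congr rfl fun e _ => by rw [Finset.erase_right_comm]
  have hxid' : Function.update (Function.update x l (x l)) k (x k) = x := by
    rw [Function.update_eq_self, Function.update_eq_self]
  have hbase' : lagPoly E x
      = (∑ e ∈ E.filter (fun e => l ∉ e ∧ k ∉ e), ∏ i ∈ e, x i)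
        + x l * Bl + x k * Bk + x l * (x k * Q) := by
    conv_lhs => rw [← hxid']
    rw [pert_value E hkl.symm x (x l) (x k), hQQ, ← hBk, ← hBl]
  have key2 : Bk - Bl + (x l - x k) * Q ≤ 0 := by
    apply le_of_le_eps hxl hQ0
    intro ε hε0 hεc
    have hw := pert_weighting hx hl hk hkl.symm (le_of_lt hε0) hεc
    have hle := hmax t _ hw
    rw [pert_value E hkl.symm x (x l - ε) (x k + ε), hQQ, ← hBk, ← hBl, hbase'] at hle
    have h2 : ε * (Bk - Bl + (x l - x k) * Q) ≤ ε * (ε * Q) := by nlinarith [hle]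
    exact le_of_mul_le_mul_left h2 hε0
  linarith

end C2


open Finset

section C3

theorem point_weighting {t : ℕ} (ht : 0 < t) :
    IsWeighting t (fun i => if i = 0 then (1:ℝ) else 0) := by
  refine ⟨?_, ?_, ?_⟩
  · intro i
    show (0:ℝ) ≤ if i = 0 then 1 else 0
    split <;> norm_num
  · intro i hi
    show (if i = 0 then (1:ℝ) else 0) = 0
    rw [if_neg]; omega
  · rw [Finset.sum_ite_eq' (Finset.range t) 0 (fun _ => (1:ℝ))]
    rw [if_pos (Finset.mem_range.2 ht)]

theorem swap_weighting {t : ℕ} {x : ℕ → ℝ} (hx : IsWeighting t x) {i j : ℕ}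
    (hi : i < t) (hj : j < t) (hij : i ≠ j) :
    IsWeighting t (Function.update (Function.update x i (x j)) j (x i)) := by
  obtain ⟨h0, hz, hs⟩ := hx
  refine ⟨?_, ?_, ?_⟩
  · intro a
    rcases eq_or_ne a j with rfl|haj
    · rw [Function.update_self]; exact h0 i
    · rw [Function.update_of_ne haj]
      rcases eq_or_ne a i with rfl|hai
      · rw [Function.update_self]; exact h0 j
      · rw [Function.update_of_ne hai]; exact h0 a
  · intro a ha
    have hai : a ≠ i := by omega
    have haj : a ≠ j := by omega
    rw [Function.update_of_ne haj, Function.update_of_ne hai]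
    exact hz a ha
  · rw [Finset.sum_update_of_mem (Finset.mem_range.2 hj)]
    have him : i ∈ Finset.range t \ {j} := by simp [Finset.mem_range, hi, hij]
    rw [Finset.sum_update_of_mem him]
    have h1 : ∑ a ∈ Finset.range t, x a = x j + ∑ a ∈ Finset.range t \ {j}, x a := by
      rw [Finset.sum_eq_sum_sdiff_singleton_add (Finset.mem_range.2 hj) x]; ring
    have h2 : ∑ a ∈ Finset.range t \ {j}, x a
        = x i + ∑ a ∈ (Finset.range t \ {j}) \ {i}, x a := by
      rw [Finset.sum_eq_sum_sdiff_singleton_add him x]; ring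
    rw [h1, h2] at hs
    linarith

theorem link_mono {E : Finset (Finset ℕ)} (hlc : LeftCompressed E) {i j : ℕ} (hij : i < j)
    {w : ℕ → ℝ} (h0 : ∀ a, 0 ≤ w a) :
    (∑ e ∈ E.filter (fun e => j ∈ e ∧ i ∉ e), ∏ a ∈ e.erase j, w a)
      ≤ ∑ e ∈ E.filter (fun e => i ∈ e ∧ j ∉ e), ∏ a ∈ e.erase i, w a := by
  set φ : Finset ℕ → Finset ℕ := fun e => insert i (e.erase j) with hφ
  have himg : ∀ e ∈ E.filter (fun e => j ∈ e ∧ i ∉ e),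
      φ e ∈ E.filter (fun e => i ∈ e ∧ j ∉ e) := by
    intro e he
    obtain ⟨heE, hje, hie⟩ := Finset.mem_filter.1 he
    refine Finset.mem_filter.2 ⟨hlc e heE j hje i hij hie, Finset.mem_insert_self _ _, ?_⟩
    intro hji
    rcases Finset.mem_insert.1 hji with h|h
    · omega
    · exact (Finset.mem_erase.1 h).1 rfl
  have hinj : ∀ e₁ ∈ E.filter (fun e => j ∈ e ∧ i ∉ e),
      ∀ e₂ ∈ E.filter (fun e => j ∈ e ∧ i ∉ e), φ e₁ = φ e₂ → e₁ = e₂ := by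
    intro e₁ h₁ e₂ h₂ heq
    obtain ⟨_, hj₁, hi₁⟩ := Finset.mem_filter.1 h₁
    obtain ⟨_, hj₂, hi₂⟩ := Finset.mem_filter.1 h₂
    have hie₁ : i ∉ e₁.erase j := fun h => hi₁ (Finset.mem_of_mem_erase h)
    have hie₂ : i ∉ e₂.erase j := fun h => hi₂ (Finset.mem_of_mem_erase h)
    have he : e₁.erase j = e₂.erase j := by
      have := congrArg (fun s => Finset.erase s i) heq
      simpa [hφ, Finset.erase_insert hie₁, Finset.erase_insert hie₂] using this
    calc e₁ = insert j (e₁.erase j) := (Finset.insert_erase hj₁).symm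
    _ = insert j (e₂.erase j) := by rw [he]
    _ = e₂ := Finset.insert_erase hj₂
  have hval : ∀ e ∈ E.filter (fun e => j ∈ e ∧ i ∉ e),
      ∏ a ∈ e.erase j, w a = ∏ a ∈ (φ e).erase i, w a := by
    intro e he
    obtain ⟨_, hje, hie⟩ := Finset.mem_filter.1 he
    have hie' : i ∉ e.erase j := fun h => hie (Finset.mem_of_mem_erase h)
    rw [hφ]
    simp only
    rw [Finset.erase_insert hie']
  calc (∑ e ∈ E.filter (fun e => j ∈ e ∧ i ∉ e), ∏ a ∈ e.erase j, w a)
      = ∑ e ∈ E.filter (fun e => j ∈ e ∧ i ∉ e), ∏ a ∈ (φ e).erase i, w a :=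
        Finset.sum_congr rfl hval
    _ = ∑ s ∈ (E.filter (fun e => j ∈ e ∧ i ∉ e)).image φ, ∏ a ∈ s.erase i, w a :=
        by rw [Finset.sum_image hinj]
    _ ≤ ∑ e ∈ E.filter (fun e => i ∈ e ∧ j ∉ e), ∏ a ∈ e.erase i, w a := by
        apply Finset.sum_le_sum_of_subset_of_nonneg
        · intro s hs
          obtain ⟨e, he, rfl⟩ := Finset.mem_image.1 hs
          exact himg e he
        · intro s _ _
          exact Finset.prod_nonneg fun a _ => h0 a

theorem exists_opt (E : Finset (Finset ℕ)) (t : ℕ) (ht : 0 < t)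
    (hE : E ⊆ (Finset.range t).powersetCard 3) (hlc : LeftCompressed E) :
    ∃ x : ℕ → ℝ, IsWeighting t x ∧ (∀ i j, i ≤ j → x j ≤ x i)
      ∧ (∀ (n : ℕ) (w : ℕ → ℝ), IsWeighting n w → lagPoly E w ≤ lagPoly E x)
      ∧ lagPoly E x = lag E := by
  classical
  set S : Set (ℕ → ℝ) := {w | IsWeighting t w} with hS
  have hclosed : IsClosed S := by
    have h1 : IsClosed {w : ℕ → ℝ | ∀ i, 0 ≤ w i} := by
      have he : {w : ℕ → ℝ | ∀ i, 0 ≤ w i} = ⋂ i, {w | 0 ≤ w i} := by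
        ext w; simp [Set.mem_iInter]
      rw [he]
      exact isClosed_iInter fun i => isClosed_le continuous_const (continuous_apply i)
    have h2 : IsClosed {w : ℕ → ℝ | ∀ i, t ≤ i → w i = 0} := by
      have he : {w : ℕ → ℝ | ∀ i, t ≤ i → w i = 0}
          = ⋂ i, ⋂ (_ : t ≤ i), {w : ℕ → ℝ | w i = 0} := by
        ext w; simp [Set.mem_iInter]
      rw [he]
      exact isClosed_iInter fun i => isClosed_iInter fun _ =>
        isClosed_eq (continuous_apply i) continuous_const
    have h3 : IsClosed {w : ℕ → ℝ | ∑ i ∈ Finset.range t, w i = 1} :=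
      isClosed_eq (continuous_finset_sum _ fun i _ => continuous_apply i) continuous_const
    have he : S = {w : ℕ → ℝ | ∀ i, 0 ≤ w i} ∩ ({w | ∀ i, t ≤ i → w i = 0}
        ∩ {w | ∑ i ∈ Finset.range t, w i = 1}) := by
      rfl
    rw [he]
    exact h1.inter (h2.inter h3)
  have hsub : S ⊆ Set.pi Set.univ (fun _ : ℕ => Set.Icc (0:ℝ) 1) := by
    intro w hw
    rw [Set.mem_univ_pi]
    intro i
    exact ⟨hw.1 i, weight_le_one hw i⟩
  have hcomp : IsCompact S :=
    IsCompact.of_isClosed_subset (isCompact_univ_pi fun _ => isCompact_Icc) hclosed hsub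
  have hne : S.Nonempty := ⟨_, point_weighting ht⟩
  have hcont : Continuous (lagPoly E) := by
    show Continuous fun w : ℕ → ℝ => ∑ e ∈ E, ∏ i ∈ e, w i
    exact continuous_finset_sum _ fun e _ => continuous_finset_prod _ fun i _ => continuous_apply i
  obtain ⟨x₁, hx₁S, hx₁max⟩ := hcomp.exists_isMaxOn hne hcont.continuousOn
  set A1 : Set (ℕ → ℝ) := S ∩ {w | lagPoly E w = lagPoly E x₁} with hA1
  have hA1comp : IsCompact A1 := hcomp.inter_right (isClosed_eq hcont continuous_const)
  have hA1ne : A1.Nonempty := ⟨x₁, hx₁S, rfl⟩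
  have hfcont : Continuous (fun w : ℕ → ℝ => ∑ i ∈ Finset.range t, (i:ℝ) * w i) :=
    continuous_finset_sum _ fun i _ => continuous_const.mul (continuous_apply i)
  obtain ⟨x, hxA1, hxmin⟩ := hA1comp.exists_isMinOn hA1ne hfcont.continuousOn
  have hxw : IsWeighting t x := hxA1.1
  have hsimp : ∀ w : ℕ → ℝ, IsWeighting t w → lagPoly E w ≤ lagPoly E x := by
    intro w hw
    have h1 : lagPoly E w ≤ lagPoly E x₁ := hx₁max hw
    have h2 : lagPoly E x = lagPoly E x₁ := hxA1.2
    linarith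
  have hglob : ∀ (n : ℕ) (w : ℕ → ℝ), IsWeighting n w → lagPoly E w ≤ lagPoly E x := by
    intro n w hw
    rcases le_or_gt n t with hnt | htn
    · apply hsimp
      refine ⟨hw.1, fun i hi => hw.2.1 i (by omega), ?_⟩
      have := Finset.sum_range_add_sum_Ico w hnt
      have hz : ∑ i ∈ Finset.Ico n t, w i = 0 :=
        Finset.sum_eq_zero fun i hi => hw.2.1 i (Finset.mem_Ico.1 hi).1
      rw [← this, hz, hw.2.2]; ring
    · set ex : ℝ := ∑ j ∈ Finset.Ico t n, w j with hex
      have hex0 : 0 ≤ ex := Finset.sum_nonneg fun j _ => hw.1 j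
      set base : ℕ → ℝ := fun i => if i < t then w i else 0 with hbase
      have hbase' : ∀ i, base i = if i < t then w i else 0 := fun i => rfl
      set w' : ℕ → ℝ := Function.update base 0 (w 0 + ex) with hw'
      have hw'w : IsWeighting t w' := by
        refine ⟨?_, ?_, ?_⟩
        · intro i
          rcases eq_or_ne i 0 with rfl | hi0
          · rw [hw', Function.update_self]
            have := hw.1 0; linarith
          · rw [hw', Function.update_of_ne hi0, hbase']
            split
            · exact hw.1 i
            · exact le_refl 0
        · intro i hi
          have hi0 : i ≠ 0 := by omega
          rw [hw', Function.update_of_ne hi0, hbase']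
          rw [if_neg]; omega
        · rw [hw', Finset.sum_update_of_mem (Finset.mem_range.2 ht)]
          have hc : ∑ i ∈ Finset.range t \ {0}, base i
              = ∑ i ∈ Finset.range t \ {0}, w i := by
            apply Finset.sum_congr rfl
            intro i hi
            rw [hbase', if_pos (Finset.mem_range.1 (Finset.mem_sdiff.1 hi).1)]
          rw [hc]
          have h1 : ∑ i ∈ Finset.range t, w i = w 0 + ∑ i ∈ Finset.range t \ {0}, w i := by
            rw [Finset.sum_eq_sum_sdiff_singleton_add (Finset.mem_range.2 ht) w]; ring
          have h2 := Finset.sum_range_add_sum_Ico w (le_of_lt htn)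
          rw [hw.2.2] at h2
          rw [← hex] at h2
          linarith
      have hle : lagPoly E w ≤ lagPoly E w' := by
        apply lagPoly_mono hE hw.1
        intro i hi
        rcases eq_or_ne i 0 with rfl | hi0
        · rw [hw', Function.update_self]; linarith
        · rw [hw', Function.update_of_ne hi0, hbase']
          rw [if_pos hi]
      exact le_trans hle (hsimp w' hw'w)
  have hlag : lagPoly E x = lag E := by
    apply le_antisymm (le_lag hxw)
    apply csSup_le (lagSet_nonempty t ht)
    rintro y ⟨n, w, hw, rfl⟩
    exact hglob n w hw
  have hmono : ∀ i j, i ≤ j → x j ≤ x i := by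
    intro i j hij
    rcases eq_or_lt_of_le hij with rfl | hij'
    · exact le_refl _
    rcases le_or_gt t j with htj | hjt
    · rw [hxw.2.1 j htj]; exact hxw.1 i
    by_contra hcon
    push_neg at hcon
    have hijne : i ≠ j := by omega
    set w' := Function.update (Function.update x i (x j)) j (x i) with hw'd
    have hw'w : IsWeighting t w' := swap_weighting hxw (by omega) hjt hijne
    have hxid : Function.update (Function.update x i (x i)) j (x j) = x := by
      rw [Function.update_eq_self, Function.update_eq_self]
    have hbase : lagPoly E x
        = (∑ e ∈ E.filter (fun e => i ∉ e ∧ j ∉ e), ∏ a ∈ e, x a)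
          + x i * (∑ e ∈ E.filter (fun e => i ∈ e ∧ j ∉ e), ∏ a ∈ e.erase i, x a)
          + x j * (∑ e ∈ E.filter (fun e => j ∈ e ∧ i ∉ e), ∏ a ∈ e.erase j, x a)
          + x i * (x j * (∑ e ∈ E.filter (fun e => i ∈ e ∧ j ∈ e),
              ∏ a ∈ (e.erase i).erase j, x a)) := by
      conv_lhs => rw [← hxid]
      exact pert_value E hijne x (x i) (x j)
    have hval : lagPoly E w'
        = (∑ e ∈ E.filter (fun e => i ∉ e ∧ j ∉ e), ∏ a ∈ e, x a)
          + x j * (∑ e ∈ E.filter (fun e => i ∈ e ∧ j ∉ e), ∏ a ∈ e.erase i, x a)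
          + x i * (∑ e ∈ E.filter (fun e => j ∈ e ∧ i ∉ e), ∏ a ∈ e.erase j, x a)
          + x j * (x i * (∑ e ∈ E.filter (fun e => i ∈ e ∧ j ∈ e),
              ∏ a ∈ (e.erase i).erase j, x a)) := pert_value E hijne x (x j) (x i)
    have hBij := link_mono hlc hij' hxw.1
    have hge : lagPoly E x ≤ lagPoly E w' := by
      rw [hbase, hval]
      nlinarith [hBij, hcon]
    have hw'A1 : w' ∈ A1 := by
      refine ⟨hw'w, ?_⟩
      have h1 : lagPoly E w' ≤ lagPoly E x₁ := hx₁max hw'w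
      have h2 : lagPoly E x = lagPoly E x₁ := hxA1.2
      show lagPoly E w' = lagPoly E x₁
      linarith
    have hfval : ∑ a ∈ Finset.range t, (a:ℝ) * w' a
        < ∑ a ∈ Finset.range t, (a:ℝ) * x a := by
      have hkey : ∀ a ∈ Finset.range t, (a:ℝ) * w' a
          = (a:ℝ) * x a + ((if a = i then (i:ℝ) * (x j - x i) else 0)
            + (if a = j then (j:ℝ) * (x i - x j) else 0)) := by
        intro a _
        rcases eq_or_ne a i with rfl | hai
        · rw [if_pos rfl, if_neg hijne, hw'd, Function.update_of_ne hijne, Function.update_self]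
          ring
        · rcases eq_or_ne a j with rfl | haj
          · rw [if_neg hai, if_pos rfl, hw'd, Function.update_self]
            ring
          · rw [if_neg hai, if_neg haj, hw'd, Function.update_of_ne haj,
              Function.update_of_ne hai]
            ring
      rw [Finset.sum_congr rfl hkey, Finset.sum_add_distrib, Finset.sum_add_distrib]
      rw [Finset.sum_ite_eq' (Finset.range t) i (fun a => (i:ℝ) * (x j - x i))]
      rw [Finset.sum_ite_eq' (Finset.range t) j (fun a => (j:ℝ) * (x i - x j))]
      rw [if_pos (Finset.mem_range.2 (by omega : i < t)), if_pos (Finset.mem_range.2 hjt)]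
      have hcast : (i:ℝ) < (j:ℝ) := by exact_mod_cast hij'
      nlinarith [hcon, hcast]
    have := hxmin hw'A1
    simp only [Set.mem_setOf_eq] at this
    linarith [this, hfval]
  exact ⟨x, hxw, hmono, hglob, hlag⟩

end C3


open Finset

section C4

theorem replace_le {E : Finset (Finset ℕ)} (hlc : LeftCompressed E) {e : Finset ℕ}
    (he : e ∈ E) {y x : ℕ} (hy : y ∈ e) (hxy : x ≤ y)
    (hside : ∀ z ∈ e, z ≠ y → x ≠ z) : insert x (e.erase y) ∈ E := by
  rcases eq_or_lt_of_le hxy with rfl | hlt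
  · rw [Finset.insert_erase hy]; exact he
  · have hxe : x ∉ e := by
      intro hx
      exact hside x hx (by omega) rfl
    exact hlc e he y hy x hlt hxe

theorem down_closed_eq_range (S : Finset ℕ) (h : ∀ i j : ℕ, i < j → j ∈ S → i ∈ S) :
    S = Finset.range S.card := by
  have hsub : Finset.range S.card ⊆ S := by
    intro k hk
    rw [Finset.mem_range] at hk
    by_contra hks
    have hSk : S ⊆ Finset.range k := by
      intro a ha
      rw [Finset.mem_range]
      by_contra hak
      push_neg at hak
      rcases eq_or_lt_of_le hak with rfl | h2
      · exact hks ha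
      · exact hks (h k a h2 ha)
    have := Finset.card_le_card hSk
    rw [Finset.card_range] at this
    omega
  exact (Finset.eq_of_subset_of_card_le hsub (by rw [Finset.card_range])).symm

theorem sorted_three {s : Finset ℕ} (h : s.card = 3) :
    ∃ a b c : ℕ, a < b ∧ b < c ∧ s = {a, b, c} := by
  obtain ⟨x, y, z, hxy, hxz, hyz, rfl⟩ := Finset.card_eq_three.1 h
  have perm1 : ∀ a b c : ℕ, ({a, b, c} : Finset ℕ) = {b, a, c} := fun a b c =>
    Finset.insert_comm a b {c}
  have perm2 : ∀ a b c : ℕ, ({a, b, c} : Finset ℕ) = {a, c, b} := fun a b c => by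
    rw [Finset.pair_comm]
  rcases lt_trichotomy x y with h1 | h1 | h1
  · rcases lt_trichotomy y z with h2 | h2 | h2
    · exact ⟨x, y, z, h1, h2, rfl⟩
    · omega
    · rcases lt_trichotomy x z with h3 | h3 | h3
      · exact ⟨x, z, y, h3, h2, perm2 x y z⟩
      · omega
      · exact ⟨z, x, y, h3, h1, by rw [perm2 x y z, perm1 x z y]⟩
  · omega
  · rcases lt_trichotomy x z with h2 | h2 | h2
    · exact ⟨y, x, z, h1, h2, perm1 x y z⟩
    · omega
    · rcases lt_trichotomy y z with h3 | h3 | h3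
      · exact ⟨y, z, x, h3, h2, by rw [perm1 x y z, perm2 y x z]⟩
      · omega
      · exact ⟨z, y, x, h3, h1, by rw [perm1 x y z, perm2 y x z, perm1 y z x]⟩

-- F2 : {k, j, t-1} ∈ E when k ∈ B, j in core
theorem edge_kju {E : Finset (Finset ℕ)} {t : ℕ} (ht : 4 ≤ t) (hlc : LeftCompressed E)
    {k j : ℕ} (hB : ({k, t-2, t-1} : Finset ℕ) ∈ E) (hk : k < t-2) (hj : j < t-2)
    (hjk : j ≠ k) : ({k, j, t-1} : Finset ℕ) ∈ E := by
  have h1 := hlc _ hB (t-2) (by simp) j (by omega) (by simp; omega)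
  have h2 : insert j (({k, t-2, t-1} : Finset ℕ).erase (t-2)) = {k, j, t-1} := by
    ext a
    simp only [Finset.mem_insert, Finset.mem_erase, Finset.mem_singleton]
    omega
  rwa [h2] at h1

-- F3 : {k, j, t-2} ∈ E when k ∈ B, j in core
theorem edge_kjv {E : Finset (Finset ℕ)} {t : ℕ} (ht : 4 ≤ t) (hlc : LeftCompressed E)
    {k j : ℕ} (hB : ({k, t-2, t-1} : Finset ℕ) ∈ E) (hk : k < t-2) (hj : j < t-2)
    (hjk : j ≠ k) : ({k, j, t-2} : Finset ℕ) ∈ E := by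
  have h1 := hlc _ hB (t-1) (by simp) j (by omega) (by simp; omega)
  have h2 : insert j (({k, t-2, t-1} : Finset ℕ).erase (t-1)) = {k, j, t-2} := by
    ext a
    simp only [Finset.mem_insert, Finset.mem_erase, Finset.mem_singleton]
    omega
  rwa [h2] at h1

-- F4 : u-link ⊆ v-link
theorem Eu_sub_Ev {E : Finset (Finset ℕ)} {t : ℕ} (ht : 4 ≤ t) (hlc : LeftCompressed E)
    {q : Finset ℕ} (hq : q ⊆ Finset.range (t-2)) (hu : insert (t-1) q ∈ E) :
    insert (t-2) q ∈ E := by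
  have hvq : (t-2) ∉ q := fun h => by have := Finset.mem_range.1 (hq h); omega
  have huq : (t-1) ∉ q := fun h => by have := Finset.mem_range.1 (hq h); omega
  have h1 := hlc _ hu (t-1) (Finset.mem_insert_self _ _) (t-2) (by omega)
    (by simp only [Finset.mem_insert]; push_neg; exact ⟨by omega, hvq⟩)
  rwa [Finset.erase_insert huq] at h1

-- F6 : B is down-closed
theorem B_down {E : Finset (Finset ℕ)} {t : ℕ} (ht : 4 ≤ t) (hlc : LeftCompressed E)
    {i j : ℕ} (hij : i < j) (hj : j < t-2) (hB : ({j, t-2, t-1} : Finset ℕ) ∈ E) :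
    ({i, t-2, t-1} : Finset ℕ) ∈ E := by
  have h1 := hlc _ hB j (by simp) i hij (by simp; omega)
  have h2 : insert i (({j, t-2, t-1} : Finset ℕ).erase j) = {i, t-2, t-1} := by
    ext a
    simp only [Finset.mem_insert, Finset.mem_erase, Finset.mem_singleton]
    omega
  rwa [h2] at h1

-- F7 : dominance from the top core-boundary triple
theorem dominance {E : Finset (Finset ℕ)} {t : ℕ} (ht : 4 ≤ t) (hlc : LeftCompressed E)
    (he0 : ({t-4, t-3, t-2} : Finset ℕ) ∈ E) {a b c : ℕ} (hab : a < b) (hbc : b < c)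
    (hc : c ≤ t-2) : ({a, b, c} : Finset ℕ) ∈ E := by
  have ha4 : a ≤ t-4 := by omega
  have hb3 : b ≤ t-3 := by omega
  have s1 : ({a, t-3, t-2} : Finset ℕ) ∈ E := by
    have h1 := replace_le hlc he0 (y := t-4) (x := a) (by simp) ha4 ?side
    case side =>
      intro z hz hzne
      simp only [Finset.mem_insert, Finset.mem_singleton] at hz
      omega
    have h2 : insert a (({t-4, t-3, t-2} : Finset ℕ).erase (t-4)) = {a, t-3, t-2} := by
      ext w
      simp only [Finset.mem_insert, Finset.mem_erase, Finset.mem_singleton]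
      omega
    rwa [h2] at h1
  have s2 : ({a, b, t-2} : Finset ℕ) ∈ E := by
    have h1 := replace_le hlc s1 (y := t-3) (x := b) (by simp) hb3 ?side
    case side =>
      intro z hz hzne
      simp only [Finset.mem_insert, Finset.mem_singleton] at hz
      omega
    have h2 : insert b (({a, t-3, t-2} : Finset ℕ).erase (t-3)) = {a, b, t-2} := by
      ext w
      simp only [Finset.mem_insert, Finset.mem_erase, Finset.mem_singleton]
      omega
    rwa [h2] at h1
  have h1 := replace_le hlc s2 (y := t-2) (x := c) (by simp) hc ?side
  case side =>
    intro z hz hzne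
    simp only [Finset.mem_insert, Finset.mem_singleton] at hz
    omega
  have h2 : insert c (({a, b, t-2} : Finset ℕ).erase (t-2)) = {a, b, c} := by
    ext w
    simp only [Finset.mem_insert, Finset.mem_erase, Finset.mem_singleton]
    omega
  rwa [h2] at h1

theorem not_e1 {E : Finset (Finset ℕ)} {t : ℕ} (ht : 4 ≤ t) (hlc : LeftCompressed E)
    (hmaxcl : ∀ s : Finset ℕ, s.powersetCard 3 ⊆ E → s.card ≤ t - 2) :
    ({t-4, t-3, t-2} : Finset ℕ) ∉ E := by
  intro he0
  have hclq : (Finset.range (t-1)).powersetCard 3 ⊆ E := by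
    intro s hs
    obtain ⟨hsub, hcard⟩ := Finset.mem_powersetCard.1 hs
    obtain ⟨a, b, c, hab, hbc, rfl⟩ := sorted_three hcard
    have hcmem : c ∈ Finset.range (t-1) := hsub (by simp)
    have hc : c ≤ t-2 := by have := Finset.mem_range.1 hcmem; omega
    exact dominance ht hlc he0 hab hbc hc
  have := hmaxcl _ hclq
  rw [Finset.card_range] at this
  omega

end C4


open Finset

section C5
variable {t : ℕ} {E : Finset (Finset ℕ)}

-- Edges containing v=t-2 but not u=t-1 correspond to pairs in the v-link.
theorem ev_Ev (ht : 4 ≤ t) (hE : E ⊆ (Finset.range t).powersetCard 3) (w : ℕ → ℝ) :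
    (∑ e ∈ E.filter (fun e => t-2 ∈ e ∧ t-1 ∉ e), ∏ a ∈ e.erase (t-2), w a)
      = ∑ q ∈ ((Finset.range (t-2)).powersetCard 2).filter (fun q => insert (t-2) q ∈ E),
          ∏ a ∈ q, w a := by
  apply Finset.sum_bij (fun e _ => e.erase (t-2))
  · intro e he
    obtain ⟨heE, hv, hu⟩ := Finset.mem_filter.1 he
    obtain ⟨hsub, hcard⟩ := Finset.mem_powersetCard.1 (hE heE)
    refine Finset.mem_filter.2 ⟨Finset.mem_powersetCard.2 ⟨?_, ?_⟩, ?_⟩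
    · intro a ha
      obtain ⟨hav, hae⟩ := Finset.mem_erase.1 ha
      have h1 := Finset.mem_range.1 (hsub hae)
      have h2 : a ≠ t-1 := fun h => hu (h ▸ hae)
      rw [Finset.mem_range]; omega
    · rw [Finset.card_erase_of_mem hv, hcard]
    · rw [Finset.insert_erase hv]; exact heE
  · intro e₁ h₁ e₂ h₂ heq
    obtain ⟨_, hv₁, _⟩ := Finset.mem_filter.1 h₁
    obtain ⟨_, hv₂, _⟩ := Finset.mem_filter.1 h₂
    rw [← Finset.insert_erase hv₁, ← Finset.insert_erase hv₂, heq]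
  · intro q hq
    obtain ⟨hqP, hqE⟩ := Finset.mem_filter.1 hq
    obtain ⟨hsub, hcard⟩ := Finset.mem_powersetCard.1 hqP
    have hvq : t-2 ∉ q := fun h => by have := Finset.mem_range.1 (hsub h); omega
    have huq : t-1 ∉ q := fun h => by have := Finset.mem_range.1 (hsub h); omega
    refine ⟨insert (t-2) q, Finset.mem_filter.2 ⟨hqE, Finset.mem_insert_self _ _, ?_⟩, ?_⟩
    · intro hu
      rcases Finset.mem_insert.1 hu with h | h
      · omega
      · exact huq h
    · exact Finset.erase_insert hvq
  · intro e he
    rfl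

theorem ev_Eu (ht : 4 ≤ t) (hE : E ⊆ (Finset.range t).powersetCard 3) (w : ℕ → ℝ) :
    (∑ e ∈ E.filter (fun e => t-1 ∈ e ∧ t-2 ∉ e), ∏ a ∈ e.erase (t-1), w a)
      = ∑ q ∈ ((Finset.range (t-2)).powersetCard 2).filter (fun q => insert (t-1) q ∈ E),
          ∏ a ∈ q, w a := by
  apply Finset.sum_bij (fun e _ => e.erase (t-1))
  · intro e he
    obtain ⟨heE, hu, hv⟩ := Finset.mem_filter.1 he
    obtain ⟨hsub, hcard⟩ := Finset.mem_powersetCard.1 (hE heE)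
    refine Finset.mem_filter.2 ⟨Finset.mem_powersetCard.2 ⟨?_, ?_⟩, ?_⟩
    · intro a ha
      obtain ⟨hau, hae⟩ := Finset.mem_erase.1 ha
      have h1 := Finset.mem_range.1 (hsub hae)
      have h2 : a ≠ t-2 := fun h => hv (h ▸ hae)
      rw [Finset.mem_range]; omega
    · rw [Finset.card_erase_of_mem hu, hcard]
    · rw [Finset.insert_erase hu]; exact heE
  · intro e₁ h₁ e₂ h₂ heq
    obtain ⟨_, hu₁, _⟩ := Finset.mem_filter.1 h₁
    obtain ⟨_, hu₂, _⟩ := Finset.mem_filter.1 h₂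
    rw [← Finset.insert_erase hu₁, ← Finset.insert_erase hu₂, heq]
  · intro q hq
    obtain ⟨hqP, hqE⟩ := Finset.mem_filter.1 hq
    obtain ⟨hsub, hcard⟩ := Finset.mem_powersetCard.1 hqP
    have hvq : t-2 ∉ q := fun h => by have := Finset.mem_range.1 (hsub h); omega
    have huq : t-1 ∉ q := fun h => by have := Finset.mem_range.1 (hsub h); omega
    refine ⟨insert (t-1) q, Finset.mem_filter.2 ⟨hqE, Finset.mem_insert_self _ _, ?_⟩, ?_⟩
    · intro hv
      rcases Finset.mem_insert.1 hv with h | h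
      · omega
      · exact hvq h
    · exact Finset.erase_insert huq
  · intro e he
    rfl

theorem ev_B (ht : 4 ≤ t) (hE : E ⊆ (Finset.range t).powersetCard 3) (w : ℕ → ℝ) :
    (∑ e ∈ E.filter (fun e => t-2 ∈ e ∧ t-1 ∈ e), ∏ a ∈ (e.erase (t-2)).erase (t-1), w a)
      = ∑ i ∈ (Finset.range (t-2)).filter (fun i => ({i, t-2, t-1} : Finset ℕ) ∈ E), w i := by
  symm
  apply Finset.sum_bij (fun i _ => ({i, t-2, t-1} : Finset ℕ))
  · intro i hi
    obtain ⟨hir, hiE⟩ := Finset.mem_filter.1 hi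
    have hilt := Finset.mem_range.1 hir
    refine Finset.mem_filter.2 ⟨hiE, ?_, ?_⟩ <;> simp
  · intro i₁ h₁ i₂ h₂ heq
    have h1 := Finset.mem_range.1 (Finset.mem_filter.1 h₁).1
    have h2 := Finset.mem_range.1 (Finset.mem_filter.1 h₂).1
    have : i₁ ∈ ({i₂, t-2, t-1} : Finset ℕ) := by
      rw [← heq]; simp
    simp only [Finset.mem_insert, Finset.mem_singleton] at this
    omega
  · intro e he
    obtain ⟨heE, hv, hu⟩ := Finset.mem_filter.1 he
    obtain ⟨hsub, hcard⟩ := Finset.mem_powersetCard.1 (hE heE)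
    have hcard1 : ((e.erase (t-2)).erase (t-1)).card = 1 := by
      rw [Finset.card_erase_of_mem (Finset.mem_erase.2 ⟨by omega, hu⟩),
        Finset.card_erase_of_mem hv, hcard]
    obtain ⟨j, hj⟩ := Finset.card_eq_one.1 hcard1
    have hje : j ∈ (e.erase (t-2)).erase (t-1) := by rw [hj]; simp
    obtain ⟨hju, hj2⟩ := Finset.mem_erase.1 hje
    obtain ⟨hjv, hjm⟩ := Finset.mem_erase.1 hj2
    have hjlt : j < t - 2 := by
      have := Finset.mem_range.1 (hsub hjm)
      omega
    have hesub : ({j, t-2, t-1} : Finset ℕ) ⊆ e := by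
      intro a ha
      simp only [Finset.mem_insert, Finset.mem_singleton] at ha
      rcases ha with rfl | rfl | rfl
      · exact hjm
      · exact hv
      · exact hu
    have hecard : ({j, t-2, t-1} : Finset ℕ).card = 3 := by
      rw [Finset.card_insert_of_notMem, Finset.card_insert_of_notMem, Finset.card_singleton]
      · simp only [Finset.mem_singleton]; omega
      · simp only [Finset.mem_insert, Finset.mem_singleton]; push_neg
        constructor <;> omega
    have heq : ({j, t-2, t-1} : Finset ℕ) = e :=
      Finset.eq_of_subset_of_card_le hesub (by omega)
    refine ⟨j, Finset.mem_filter.2 ⟨Finset.mem_range.2 hjlt, ?_⟩, heq⟩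
    rw [heq]; exact heE
  · intro i hi
    have hilt := Finset.mem_range.1 (Finset.mem_filter.1 hi).1
    have h2 : (({i, t-2, t-1} : Finset ℕ).erase (t-2)).erase (t-1) = {i} := by
      ext a
      simp only [Finset.mem_erase, Finset.mem_insert, Finset.mem_singleton]
      omega
    rw [h2, Finset.prod_singleton]

theorem ev_T3 (ht : 4 ≤ t) (hE : E ⊆ (Finset.range t).powersetCard 3)
    (hcl : completeG (t - 2) 3 ⊆ E) :
    E.filter (fun e => t-2 ∉ e ∧ t-1 ∉ e) = (Finset.range (t-2)).powersetCard 3 := by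
  ext e
  constructor
  · intro he
    obtain ⟨heE, hv, hu⟩ := Finset.mem_filter.1 he
    obtain ⟨hsub, hcard⟩ := Finset.mem_powersetCard.1 (hE heE)
    refine Finset.mem_powersetCard.2 ⟨?_, hcard⟩
    intro a ha
    have h1 := Finset.mem_range.1 (hsub ha)
    have h2 : a ≠ t-2 := fun h => hv (h ▸ ha)
    have h3 : a ≠ t-1 := fun h => hu (h ▸ ha)
    rw [Finset.mem_range]; omega
  · intro he
    obtain ⟨hsub, hcard⟩ := Finset.mem_powersetCard.1 he
    refine Finset.mem_filter.2 ⟨hcl he, ?_, ?_⟩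
    · intro hv
      have := Finset.mem_range.1 (hsub hv); omega
    · intro hu
      have := Finset.mem_range.1 (hsub hu); omega

end C5


open Finset

section C6
variable {t : ℕ} {E : Finset (Finset ℕ)}

theorem pair_in_Eu (ht : 4 ≤ t) (hlc : LeftCompressed E) {k : ℕ} (hk : k < t-2)
    (hkE : ({k, t-2, t-1} : Finset ℕ) ∈ E) {q : Finset ℕ}
    (hq : q ∈ (Finset.range (t-2)).powersetCard 2) (hkq : k ∈ q) :
    insert (t-1) q ∈ E := by
  obtain ⟨hsub, hcard⟩ := Finset.mem_powersetCard.1 hq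
  obtain ⟨α, β, hne, rfl⟩ := Finset.card_eq_two.1 hcard
  have hα : α < t-2 := Finset.mem_range.1 (hsub (by simp))
  have hβ : β < t-2 := Finset.mem_range.1 (hsub (by simp))
  simp only [Finset.mem_insert, Finset.mem_singleton] at hkq
  rcases hkq with rfl | rfl
  · have := edge_kju ht hlc hkE hk hβ (fun h => hne h.symm)
    have heq : ({k, β, t-1} : Finset ℕ) = insert (t-1) {k, β} := by
      ext a
      simp only [Finset.mem_insert, Finset.mem_singleton]
      tauto
    rwa [heq] at this
  · have := edge_kju ht hlc hkE hk hα hne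
    have heq : ({k, α, t-1} : Finset ℕ) = insert (t-1) {α, k} := by
      ext a
      simp only [Finset.mem_insert, Finset.mem_singleton]
      tauto
    rwa [heq] at this

theorem pair_in_Ev (ht : 4 ≤ t) (hlc : LeftCompressed E) {k : ℕ} (hk : k < t-2)
    (hkE : ({k, t-2, t-1} : Finset ℕ) ∈ E) {q : Finset ℕ}
    (hq : q ∈ (Finset.range (t-2)).powersetCard 2) (hkq : k ∈ q) :
    insert (t-2) q ∈ E := by
  obtain ⟨hsub, hcard⟩ := Finset.mem_powersetCard.1 hq
  obtain ⟨α, β, hne, rfl⟩ := Finset.card_eq_two.1 hcard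
  have hα : α < t-2 := Finset.mem_range.1 (hsub (by simp))
  have hβ : β < t-2 := Finset.mem_range.1 (hsub (by simp))
  simp only [Finset.mem_insert, Finset.mem_singleton] at hkq
  rcases hkq with rfl | rfl
  · have := edge_kjv ht hlc hkE hk hβ (fun h => hne h.symm)
    have heq : ({k, β, t-2} : Finset ℕ) = insert (t-2) {k, β} := by
      ext a
      simp only [Finset.mem_insert, Finset.mem_singleton]
      tauto
    rwa [heq] at this
  · have := edge_kjv ht hlc hkE hk hα hne
    have heq : ({k, α, t-2} : Finset ℕ) = insert (t-2) {α, k} := by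
      ext a
      simp only [Finset.mem_insert, Finset.mem_singleton]
      tauto
    rwa [heq] at this

-- EV1
theorem ev_Bk (ht : 4 ≤ t) (hE : E ⊆ (Finset.range t).powersetCard 3)
    (hlc : LeftCompressed E) (hcl : completeG (t - 2) 3 ⊆ E)
    {k : ℕ} (hk : k < t-2) (hkE : ({k, t-2, t-1} : Finset ℕ) ∈ E) (w : ℕ → ℝ) :
    (∑ e ∈ E.filter (fun e => k ∈ e ∧ t-2 ∉ e), ∏ a ∈ e.erase k, w a)
      = (∑ q ∈ ((Finset.range (t-2)).powersetCard 2).filter (fun q => k ∉ q), ∏ a ∈ q, w a)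
        + (∑ j ∈ (Finset.range (t-2)).erase k, w j) * w (t-1) := by
  rw [← Finset.sum_filter_add_sum_filter_not (E.filter (fun e => k ∈ e ∧ t-2 ∉ e))
    (fun e => t-1 ∈ e)]
  have hpart1 : (∑ e ∈ (E.filter (fun e => k ∈ e ∧ t-2 ∉ e)).filter (fun e => t-1 ∈ e),
      ∏ a ∈ e.erase k, w a) = ∑ j ∈ (Finset.range (t-2)).erase k, w j * w (t-1) := by
    symm
    apply Finset.sum_bij (fun j _ => ({k, j, t-1} : Finset ℕ))
    · intro j hj
      obtain ⟨hjk, hjm⟩ := Finset.mem_erase.1 hj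
      have hjlt := Finset.mem_range.1 hjm
      refine Finset.mem_filter.2 ⟨Finset.mem_filter.2 ⟨edge_kju ht hlc hkE hk hjlt hjk, ?_, ?_⟩, ?_⟩
      · simp
      · simp only [Finset.mem_insert, Finset.mem_singleton]; push_neg
        refine ⟨by omega, by omega, by omega⟩
      · simp only [Finset.mem_insert, Finset.mem_singleton]; tauto
    · intro j₁ h₁ j₂ h₂ heq
      obtain ⟨hj₁k, hj₁m⟩ := Finset.mem_erase.1 h₁
      have h1 := Finset.mem_range.1 hj₁m
      have : j₁ ∈ ({k, j₂, t-1} : Finset ℕ) := by rw [← heq]; simp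
      simp only [Finset.mem_insert, Finset.mem_singleton] at this
      rcases this with h | h | h
      · omega
      · exact h
      · omega
    · intro e he
      obtain ⟨he2, hu⟩ := Finset.mem_filter.1 he
      obtain ⟨heE, hke, hv⟩ := Finset.mem_filter.1 he2
      obtain ⟨hsub, hcard⟩ := Finset.mem_powersetCard.1 (hE heE)
      have hku : k ≠ t-1 := by omega
      have hcard1 : ((e.erase k).erase (t-1)).card = 1 := by
        rw [Finset.card_erase_of_mem (Finset.mem_erase.2 ⟨by omega, hu⟩),
          Finset.card_erase_of_mem hke, hcard]
      obtain ⟨j, hj⟩ := Finset.card_eq_one.1 hcard1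
      have hje : j ∈ (e.erase k).erase (t-1) := by rw [hj]; simp
      obtain ⟨hju, hj2⟩ := Finset.mem_erase.1 hje
      obtain ⟨hjk, hjm⟩ := Finset.mem_erase.1 hj2
      have hjv : j ≠ t-2 := fun h => hv (h ▸ hjm)
      have hjlt : j < t - 2 := by
        have := Finset.mem_range.1 (hsub hjm); omega
      have hesub : ({k, j, t-1} : Finset ℕ) ⊆ e := by
        intro a ha
        simp only [Finset.mem_insert, Finset.mem_singleton] at ha
        rcases ha with rfl | rfl | rfl
        · exact hke
        · exact hjm
        · exact hu
      have hecard : ({k, j, t-1} : Finset ℕ).card = 3 := by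
        rw [Finset.card_insert_of_notMem, Finset.card_insert_of_notMem,
          Finset.card_singleton]
        · simp only [Finset.mem_singleton]; omega
        · simp only [Finset.mem_insert, Finset.mem_singleton]; push_neg
          exact ⟨fun h => hjk h.symm, by omega⟩
      exact ⟨j, Finset.mem_erase.2 ⟨hjk, Finset.mem_range.2 hjlt⟩,
        Finset.eq_of_subset_of_card_le hesub (by omega)⟩
    · intro j hj
      obtain ⟨hjk, hjm⟩ := Finset.mem_erase.1 hj
      have hjlt := Finset.mem_range.1 hjm
      have h2 : ({k, j, t-1} : Finset ℕ).erase k = {j, t-1} := by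
        ext a
        simp only [Finset.mem_erase, Finset.mem_insert, Finset.mem_singleton]
        omega
      rw [h2, Finset.prod_pair (by omega : j ≠ t-1)]
  have hpart2 : (∑ e ∈ (E.filter (fun e => k ∈ e ∧ t-2 ∉ e)).filter (fun e => ¬ t-1 ∈ e),
      ∏ a ∈ e.erase k, w a)
      = ∑ q ∈ ((Finset.range (t-2)).powersetCard 2).filter (fun q => k ∉ q), ∏ a ∈ q, w a := by
    apply Finset.sum_bij (fun e _ => e.erase k)
    · intro e he
      obtain ⟨he2, hu⟩ := Finset.mem_filter.1 he
      obtain ⟨heE, hke, hv⟩ := Finset.mem_filter.1 he2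
      obtain ⟨hsub, hcard⟩ := Finset.mem_powersetCard.1 (hE heE)
      refine Finset.mem_filter.2 ⟨Finset.mem_powersetCard.2 ⟨?_, ?_⟩, by simp⟩
      · intro a ha
        obtain ⟨hak, hae⟩ := Finset.mem_erase.1 ha
        have h1 := Finset.mem_range.1 (hsub hae)
        have h2 : a ≠ t-2 := fun h => hv (h ▸ hae)
        have h3 : a ≠ t-1 := fun h => hu (h ▸ hae)
        rw [Finset.mem_range]; omega
      · rw [Finset.card_erase_of_mem hke, hcard]
    · intro e₁ h₁ e₂ h₂ heq
      obtain ⟨he₁, _⟩ := Finset.mem_filter.1 h₁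
      obtain ⟨he₂, _⟩ := Finset.mem_filter.1 h₂
      have hk₁ := (Finset.mem_filter.1 he₁).2.1
      have hk₂ := (Finset.mem_filter.1 he₂).2.1
      rw [← Finset.insert_erase hk₁, ← Finset.insert_erase hk₂, heq]
    · intro q hq
      obtain ⟨hqP, hkq⟩ := Finset.mem_filter.1 hq
      obtain ⟨hsub, hcard⟩ := Finset.mem_powersetCard.1 hqP
      refine ⟨insert k q, ?_, Finset.erase_insert hkq⟩
      have hins : insert k q ∈ (Finset.range (t-2)).powersetCard 3 := by
        refine Finset.mem_powersetCard.2 ⟨?_, ?_⟩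
        · intro a ha
          rcases Finset.mem_insert.1 ha with rfl | h
          · exact Finset.mem_range.2 hk
          · exact hsub h
        · rw [Finset.card_insert_of_notMem hkq, hcard]
      have hinsE : insert k q ∈ E := hcl hins
      obtain ⟨hsub', _⟩ := Finset.mem_powersetCard.1 hins
      refine Finset.mem_filter.2 ⟨Finset.mem_filter.2 ⟨hinsE, Finset.mem_insert_self _ _, ?_⟩, ?_⟩
      · intro hv
        have := Finset.mem_range.1 (hsub' hv); omega
      · intro hu
        have := Finset.mem_range.1 (hsub' hu); omega
    · intro e he
      rfl
  rw [hpart1, hpart2, ← Finset.sum_mul]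
  ring

-- EV2
theorem ev_Bv (ht : 4 ≤ t) (hE : E ⊆ (Finset.range t).powersetCard 3)
    {k : ℕ} (hk : k < t-2) (w : ℕ → ℝ) :
    (∑ e ∈ E.filter (fun e => t-2 ∈ e ∧ k ∉ e), ∏ a ∈ e.erase (t-2), w a)
      = (∑ q ∈ (((Finset.range (t-2)).powersetCard 2).filter
            (fun q => insert (t-2) q ∈ E)).filter (fun q => k ∉ q), ∏ a ∈ q, w a)
        + (∑ j ∈ ((Finset.range (t-2)).filter
            (fun i => ({i, t-2, t-1} : Finset ℕ) ∈ E)).erase k, w j) * w (t-1) := by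
  rw [← Finset.sum_filter_add_sum_filter_not (E.filter (fun e => t-2 ∈ e ∧ k ∉ e))
    (fun e => t-1 ∈ e)]
  have hpart1 : (∑ e ∈ (E.filter (fun e => t-2 ∈ e ∧ k ∉ e)).filter (fun e => t-1 ∈ e),
      ∏ a ∈ e.erase (t-2), w a)
      = ∑ j ∈ ((Finset.range (t-2)).filter
          (fun i => ({i, t-2, t-1} : Finset ℕ) ∈ E)).erase k, w j * w (t-1) := by
    symm
    apply Finset.sum_bij (fun j _ => ({j, t-2, t-1} : Finset ℕ))
    · intro j hj
      obtain ⟨hjk, hjB⟩ := Finset.mem_erase.1 hj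
      obtain ⟨hjm, hjE⟩ := Finset.mem_filter.1 hjB
      have hjlt := Finset.mem_range.1 hjm
      refine Finset.mem_filter.2 ⟨Finset.mem_filter.2 ⟨hjE, by simp, ?_⟩, by simp⟩
      simp only [Finset.mem_insert, Finset.mem_singleton]; push_neg
      exact ⟨fun h => hjk h.symm, by omega, by omega⟩
    · intro j₁ h₁ j₂ h₂ heq
      have h1 := Finset.mem_range.1 (Finset.mem_filter.1 (Finset.mem_erase.1 h₁).2).1
      have : j₁ ∈ ({j₂, t-2, t-1} : Finset ℕ) := by rw [← heq]; simp
      simp only [Finset.mem_insert, Finset.mem_singleton] at this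
      omega
    · intro e he
      obtain ⟨he2, hu⟩ := Finset.mem_filter.1 he
      obtain ⟨heE, hv, hke⟩ := Finset.mem_filter.1 he2
      obtain ⟨hsub, hcard⟩ := Finset.mem_powersetCard.1 (hE heE)
      have hcard1 : ((e.erase (t-2)).erase (t-1)).card = 1 := by
        rw [Finset.card_erase_of_mem (Finset.mem_erase.2 ⟨by omega, hu⟩),
          Finset.card_erase_of_mem hv, hcard]
      obtain ⟨j, hj⟩ := Finset.card_eq_one.1 hcard1
      have hje : j ∈ (e.erase (t-2)).erase (t-1) := by rw [hj]; simp
      obtain ⟨hju, hj2⟩ := Finset.mem_erase.1 hje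
      obtain ⟨hjv, hjm⟩ := Finset.mem_erase.1 hj2
      have hjlt : j < t - 2 := by
        have := Finset.mem_range.1 (hsub hjm); omega
      have hjk : j ≠ k := fun h => hke (h ▸ hjm)
      have hesub : ({j, t-2, t-1} : Finset ℕ) ⊆ e := by
        intro a ha
        simp only [Finset.mem_insert, Finset.mem_singleton] at ha
        rcases ha with rfl | rfl | rfl
        · exact hjm
        · exact hv
        · exact hu
      have hecard : ({j, t-2, t-1} : Finset ℕ).card = 3 := by
        rw [Finset.card_insert_of_notMem, Finset.card_insert_of_notMem,
          Finset.card_singleton]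
        · simp only [Finset.mem_singleton]; omega
        · simp only [Finset.mem_insert, Finset.mem_singleton]; push_neg
          constructor <;> omega
      have heq : ({j, t-2, t-1} : Finset ℕ) = e :=
        Finset.eq_of_subset_of_card_le hesub (by omega)
      refine ⟨j, Finset.mem_erase.2 ⟨hjk, Finset.mem_filter.2 ⟨Finset.mem_range.2 hjlt, ?_⟩⟩, heq⟩
      rw [heq]; exact heE
    · intro j hj
      have h1 := Finset.mem_range.1 (Finset.mem_filter.1 (Finset.mem_erase.1 hj).2).1
      have h2 : ({j, t-2, t-1} : Finset ℕ).erase (t-2) = {j, t-1} := by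
        ext a
        simp only [Finset.mem_erase, Finset.mem_insert, Finset.mem_singleton]
        omega
      rw [h2, Finset.prod_pair (by omega : j ≠ t-1)]
  have hpart2 : (∑ e ∈ (E.filter (fun e => t-2 ∈ e ∧ k ∉ e)).filter (fun e => ¬ t-1 ∈ e),
      ∏ a ∈ e.erase (t-2), w a)
      = ∑ q ∈ (((Finset.range (t-2)).powersetCard 2).filter
          (fun q => insert (t-2) q ∈ E)).filter (fun q => k ∉ q), ∏ a ∈ q, w a := by
    apply Finset.sum_bij (fun e _ => e.erase (t-2))
    · intro e he
      obtain ⟨he2, hu⟩ := Finset.mem_filter.1 he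
      obtain ⟨heE, hv, hke⟩ := Finset.mem_filter.1 he2
      obtain ⟨hsub, hcard⟩ := Finset.mem_powersetCard.1 (hE heE)
      refine Finset.mem_filter.2 ⟨Finset.mem_filter.2
        ⟨Finset.mem_powersetCard.2 ⟨?_, ?_⟩, ?_⟩, ?_⟩
      · intro a ha
        obtain ⟨hav, hae⟩ := Finset.mem_erase.1 ha
        have h1 := Finset.mem_range.1 (hsub hae)
        have h3 : a ≠ t-1 := fun h => hu (h ▸ hae)
        rw [Finset.mem_range]; omega
      · rw [Finset.card_erase_of_mem hv, hcard]
      · rw [Finset.insert_erase hv]; exact heE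
      · intro hkq
        exact hke (Finset.mem_of_mem_erase hkq)
    · intro e₁ h₁ e₂ h₂ heq
      have hv₁ := (Finset.mem_filter.1 (Finset.mem_filter.1 h₁).1).2.1
      have hv₂ := (Finset.mem_filter.1 (Finset.mem_filter.1 h₂).1).2.1
      rw [← Finset.insert_erase hv₁, ← Finset.insert_erase hv₂, heq]
    · intro q hq
      obtain ⟨hq2, hkq⟩ := Finset.mem_filter.1 hq
      obtain ⟨hqP, hqE⟩ := Finset.mem_filter.1 hq2
      obtain ⟨hsub, hcard⟩ := Finset.mem_powersetCard.1 hqP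
      have hvq : t-2 ∉ q := fun h => by have := Finset.mem_range.1 (hsub h); omega
      have huq : t-1 ∉ q := fun h => by have := Finset.mem_range.1 (hsub h); omega
      refine ⟨insert (t-2) q, Finset.mem_filter.2 ⟨Finset.mem_filter.2
        ⟨hqE, Finset.mem_insert_self _ _, ?_⟩, ?_⟩, Finset.erase_insert hvq⟩
      · intro hkm
        rcases Finset.mem_insert.1 hkm with h | h
        · omega
        · exact hkq h
      · intro hu
        rcases Finset.mem_insert.1 hu with h | h
        · omega
        · exact huq h
    · intro e he
      rfl
  rw [hpart1, hpart2, ← Finset.sum_mul]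
  ring

-- EV3
theorem ev_Q (ht : 4 ≤ t) (hE : E ⊆ (Finset.range t).powersetCard 3)
    (hlc : LeftCompressed E)
    {k : ℕ} (hk : k < t-2) (hkE : ({k, t-2, t-1} : Finset ℕ) ∈ E) (w : ℕ → ℝ) :
    (∑ e ∈ E.filter (fun e => k ∈ e ∧ t-2 ∈ e), ∏ a ∈ (e.erase k).erase (t-2), w a)
      = (∑ j ∈ (Finset.range (t-2)).erase k, w j) + w (t-1) := by
  have hJ : (∑ j ∈ insert (t-1) ((Finset.range (t-2)).erase k), w j)
      = (∑ j ∈ (Finset.range (t-2)).erase k, w j) + w (t-1) := by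
    rw [Finset.sum_insert]
    · ring
    · intro h
      have := Finset.mem_range.1 (Finset.mem_of_mem_erase h); omega
  rw [← hJ]
  symm
  have hJmem : ∀ j ∈ insert (t-1) ((Finset.range (t-2)).erase k), j ≠ k ∧ j ≠ t-2 := by
    intro j hj
    rcases Finset.mem_insert.1 hj with rfl | h
    · constructor <;> omega
    · obtain ⟨hjk, hjm⟩ := Finset.mem_erase.1 h
      have := Finset.mem_range.1 hjm
      constructor <;> omega
  apply Finset.sum_bij (fun j _ => ({k, t-2, j} : Finset ℕ))
  · intro j hj
    obtain ⟨hjk, hjv⟩ := hJmem j hj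
    have hjE : ({k, t-2, j} : Finset ℕ) ∈ E := by
      rcases Finset.mem_insert.1 hj with rfl | h
      · exact hkE
      · obtain ⟨hjk', hjm⟩ := Finset.mem_erase.1 h
        have hjlt := Finset.mem_range.1 hjm
        have := edge_kjv ht hlc hkE hk hjlt hjk'
        have heq : ({k, j, t-2} : Finset ℕ) = {k, t-2, j} := by
          ext a
          simp only [Finset.mem_insert, Finset.mem_singleton]
          tauto
        rwa [heq] at this
    refine Finset.mem_filter.2 ⟨hjE, by simp, by simp⟩
  · intro j₁ h₁ j₂ h₂ heq
    obtain ⟨hj₁k, hj₁v⟩ := hJmem j₁ h₁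
    have : j₁ ∈ ({k, t-2, j₂} : Finset ℕ) := by rw [← heq]; simp
    simp only [Finset.mem_insert, Finset.mem_singleton] at this
    tauto
  · intro e he
    obtain ⟨heE, hke, hv⟩ := Finset.mem_filter.1 he
    obtain ⟨hsub, hcard⟩ := Finset.mem_powersetCard.1 (hE heE)
    have hcard1 : ((e.erase k).erase (t-2)).card = 1 := by
      rw [Finset.card_erase_of_mem (Finset.mem_erase.2 ⟨by omega, hv⟩),
        Finset.card_erase_of_mem hke, hcard]
    obtain ⟨j, hj⟩ := Finset.card_eq_one.1 hcard1
    have hje : j ∈ (e.erase k).erase (t-2) := by rw [hj]; simp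
    obtain ⟨hjv, hj2⟩ := Finset.mem_erase.1 hje
    obtain ⟨hjk, hjm⟩ := Finset.mem_erase.1 hj2
    have hjlt := Finset.mem_range.1 (hsub hjm)
    have hjJ : j ∈ insert (t-1) ((Finset.range (t-2)).erase k) := by
      rcases eq_or_ne j (t-1) with rfl | hju
      · simp
      · exact Finset.mem_insert.2 (Or.inr (Finset.mem_erase.2 ⟨hjk, Finset.mem_range.2 (by omega)⟩))
    have hesub : ({k, t-2, j} : Finset ℕ) ⊆ e := by
      intro a ha
      simp only [Finset.mem_insert, Finset.mem_singleton] at ha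
      rcases ha with rfl | rfl | rfl
      · exact hke
      · exact hv
      · exact hjm
    have hecard : ({k, t-2, j} : Finset ℕ).card = 3 := by
      rw [Finset.card_insert_of_notMem, Finset.card_insert_of_notMem,
        Finset.card_singleton]
      · simp only [Finset.mem_singleton]; omega
      · simp only [Finset.mem_insert, Finset.mem_singleton]; push_neg
        exact ⟨by omega, fun h => hjk h.symm⟩
    exact ⟨j, hjJ, Finset.eq_of_subset_of_card_le hesub (by omega)⟩
  · intro j hj
    obtain ⟨hjk, hjv⟩ := hJmem j hj
    have h2 : (({k, t-2, j} : Finset ℕ).erase k).erase (t-2) = {j} := by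
      ext a
      simp only [Finset.mem_erase, Finset.mem_insert, Finset.mem_singleton]
      constructor
      · rintro ⟨h1, h2, rfl | rfl | rfl⟩ <;> tauto
      · rintro rfl
        exact ⟨hjv, hjk, by tauto⟩
    rw [h2, Finset.prod_singleton]

end C6


theorem endgame (b : ℕ) (hb : 1 ≤ b) (v u A Γ d : ℝ)
    (hu : 0 < u) (huv : u ≤ v) (hA : 0 < A) (hd0 : 0 ≤ d)
    (heq : d * (((b:ℝ)-1)*(v+d) + A + u) = Γ + u * A)
    (hΓ : 0 ≤ Γ) (hΓ5 : (v + u) * Γ ≤ u^2 * ((b:ℝ) * (v+d)))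
    (hV : ((b:ℝ) + 1) * (v + u) ≤ (b:ℝ) * (v+d)) : False := by
  have hb1 : (1:ℝ) ≤ (b:ℝ) := by exact_mod_cast hb
  have hbpos : (0:ℝ) < (b:ℝ) := by linarith
  have hbd : v + ((b:ℝ)+1) * u ≤ (b:ℝ) * d := by nlinarith
  have hdu : u < d := by
    have h1 : (b:ℝ)*u < (b:ℝ)*d := by nlinarith
    exact lt_of_mul_lt_mul_left h1 (le_of_lt hbpos)
  have hdpos : (0:ℝ) < d := lt_trans hu hdu
  have hvu : (0:ℝ) < v + u := by linarith
  have hvd : (0:ℝ) < v + d := by linarith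
  have keyeq : (v+u) * (d * (((b:ℝ)-1)*(v+d) + A + u)) = (v+u)*Γ + (v+u)*(u*A) := by
    rw [heq]; ring
  have hA' : (v+u)*(u*A) < (v+u)*(d*A) :=
    mul_lt_mul_of_pos_left (mul_lt_mul_of_pos_right hdu hA) hvu
  have hexp : (v+u) * (d * (((b:ℝ)-1)*(v+d) + A + u))
      = ((v+u)*d)*(((b:ℝ)-1)*(v+d)) + (v+u)*(d*A) + (v+u)*(d*u) := by ring
  have h3 : (0:ℝ) < (v+u)*(d*u) := mul_pos hvu (mul_pos hdpos hu)
  have hstrict : u^2 * ((b:ℝ)*(v+d)) + (v+u)*(u*A)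
      < (v+u) * (d * (((b:ℝ)-1)*(v+d) + A + u)) := by
    rcases eq_or_lt_of_le hb1 with hb2 | hb2
    · have hint : 0 ≤ u * (v * (d - u)) :=
        mul_nonneg hu.le (mul_nonneg (by linarith) (by linarith))
      have h6 : u^2 * ((b:ℝ)*(v+d)) ≤ (v+u)*(d*u) := by
        rw [← hb2]; nlinarith [hint]
      have h7 : ((v+u)*d)*(((b:ℝ)-1)*(v+d)) = 0 := by rw [← hb2]; ring
      rw [hexp]
      linarith
    · have hb2' : (2:ℝ) ≤ (b:ℝ) := by
        have h : 1 < b := by exact_mod_cast hb2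
        exact_mod_cast h
      have h1 : 2*u^2 ≤ (v+u)*d := by nlinarith
      have hnn : (0:ℝ) ≤ ((b:ℝ)-1) * (v+d) :=
        mul_nonneg (by linarith) (by linarith)
      have h4 : (2*u^2)*(((b:ℝ)-1) * (v+d)) ≤ ((v+u)*d)*(((b:ℝ)-1) * (v+d)) :=
        mul_le_mul_of_nonneg_right h1 hnn
      have h5 : u^2 * ((b:ℝ)*(v+d)) ≤ (2*u^2)*(((b:ℝ)-1) * (v+d)) := by
        have hfac : (0:ℝ) ≤ (u^2 * (v+d)) * ((b:ℝ) - 2) :=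
          mul_nonneg (mul_nonneg (sq_nonneg u) hvd.le) (by linarith)
        nlinarith [hfac]
      rw [hexp]
      linarith
  linarith [hΓ5, keyeq, hstrict]


open Finset

section C8
variable {t : ℕ} {E : Finset (Finset ℕ)}

theorem K_lc (T r : ℕ) : LeftCompressed (completeG T r) := by
  intro e he j hj i hij hi
  obtain ⟨hsub, hcard⟩ := Finset.mem_powersetCard.1 he
  refine Finset.mem_powersetCard.2 ⟨?_, ?_⟩
  · intro a ha
    rcases Finset.mem_insert.1 ha with rfl | h
    · have := Finset.mem_range.1 (hsub hj)
      exact Finset.mem_range.2 (by omega)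
    · exact hsub (Finset.mem_of_mem_erase h)
  · rw [Finset.card_insert_of_notMem (fun h => hi (Finset.mem_of_mem_erase h)),
      Finset.card_erase_of_mem hj, hcard]
    have : 1 ≤ r := by
      by_contra hr
      push_neg at hr
      interval_cases r
      · rw [Finset.card_eq_zero.1 hcard] at hj
        exact absurd hj (Finset.notMem_empty j)
    omega

theorem K_link_symm (ht : 4 ≤ t) (w : ℕ → ℝ) :
    (∑ e ∈ (completeG (t-1) 3).filter (fun e => 0 ∈ e ∧ t-2 ∉ e), ∏ a ∈ e.erase 0, w a)
      = ∑ e ∈ (completeG (t-1) 3).filter (fun e => t-2 ∈ e ∧ 0 ∉ e), ∏ a ∈ e.erase (t-2), w a := by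
  apply Finset.sum_bij (fun e _ => insert (t-2) (e.erase 0))
  · intro e he
    obtain ⟨heK, h0, hv⟩ := Finset.mem_filter.1 he
    obtain ⟨hsub, hcard⟩ := Finset.mem_powersetCard.1 heK
    have hvne : t-2 ∉ e.erase 0 := fun h => hv (Finset.mem_of_mem_erase h)
    refine Finset.mem_filter.2 ⟨Finset.mem_powersetCard.2 ⟨?_, ?_⟩,
      Finset.mem_insert_self _ _, ?_⟩
    · intro a ha
      rcases Finset.mem_insert.1 ha with rfl | h
      · exact Finset.mem_range.2 (by omega)
      · exact hsub (Finset.mem_of_mem_erase h)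
    · rw [Finset.card_insert_of_notMem hvne, Finset.card_erase_of_mem h0, hcard]
    · intro h0'
      rcases Finset.mem_insert.1 h0' with h | h
      · omega
      · exact (Finset.mem_erase.1 h).1 rfl
  · intro e₁ h₁ e₂ h₂ heq
    obtain ⟨_, h0₁, hv₁⟩ := Finset.mem_filter.1 h₁
    obtain ⟨_, h0₂, hv₂⟩ := Finset.mem_filter.1 h₂
    have hv₁' : t-2 ∉ e₁.erase 0 := fun h => hv₁ (Finset.mem_of_mem_erase h)
    have hv₂' : t-2 ∉ e₂.erase 0 := fun h => hv₂ (Finset.mem_of_mem_erase h)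
    have he : e₁.erase 0 = e₂.erase 0 := by
      have := congrArg (fun s => Finset.erase s (t-2)) heq
      simpa [Finset.erase_insert hv₁', Finset.erase_insert hv₂'] using this
    rw [← Finset.insert_erase h0₁, ← Finset.insert_erase h0₂, he]
  · intro e' he'
    obtain ⟨heK, hv, h0⟩ := Finset.mem_filter.1 he'
    obtain ⟨hsub, hcard⟩ := Finset.mem_powersetCard.1 heK
    have h0ne : 0 ∉ e'.erase (t-2) := fun h => h0 (Finset.mem_of_mem_erase h)
    refine ⟨insert 0 (e'.erase (t-2)), Finset.mem_filter.2 ⟨Finset.mem_powersetCard.2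
      ⟨?_, ?_⟩, Finset.mem_insert_self _ _, ?_⟩, ?_⟩
    · intro a ha
      rcases Finset.mem_insert.1 ha with rfl | h
      · exact Finset.mem_range.2 (by omega)
      · exact hsub (Finset.mem_of_mem_erase h)
    · rw [Finset.card_insert_of_notMem h0ne, Finset.card_erase_of_mem hv, hcard]
    · intro hv'
      rcases Finset.mem_insert.1 hv' with h | h
      · omega
      · exact (Finset.mem_erase.1 h).1 rfl
    · rw [Finset.erase_insert h0ne, Finset.insert_erase hv]
  · intro e he
    obtain ⟨_, h0, hv⟩ := Finset.mem_filter.1 he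
    have hvne : t-2 ∉ e.erase 0 := fun h => hv (Finset.mem_of_mem_erase h)
    rw [Finset.erase_insert hvne]

theorem lagK_pos (ht : 4 ≤ t) : 0 < lag (completeG (t-1) 3) := by
  have ht1 : (0:ℝ) < ((t-1 : ℕ) : ℝ) := by
    have : 3 ≤ t - 1 := by omega
    exact_mod_cast (by omega : 0 < t - 1)
  set c : ℝ := 1 / ((t-1 : ℕ) : ℝ) with hc
  have hcpos : 0 < c := by positivity
  set w : ℕ → ℝ := fun i => if i < t-1 then c else 0 with hw
  have hww : IsWeighting (t-1) w := by
    refine ⟨?_, ?_, ?_⟩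
    · intro i
      show (0:ℝ) ≤ if i < t-1 then c else 0
      split
      · linarith
      · exact le_refl 0
    · intro i hi
      show (if i < t-1 then c else 0) = 0
      rw [if_neg]; omega
    · have h1 : ∀ i ∈ Finset.range (t-1), w i = c := by
        intro i hi
        show (if i < t-1 then c else 0) = c
        rw [if_pos (Finset.mem_range.1 hi)]
      rw [Finset.sum_congr rfl h1, Finset.sum_const, Finset.card_range, nsmul_eq_mul, hc]
      rw [mul_one_div, div_self (ne_of_gt ht1)]
  have hval : lagPoly (completeG (t-1) 3) w = ((t-1).choose 3 : ℝ) * c^3 := by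
    unfold lagPoly
    have h1 : ∀ e ∈ completeG (t-1) 3, ∏ a ∈ e, w a = c^3 := by
      intro e he
      obtain ⟨hsub, hcard⟩ := Finset.mem_powersetCard.1 he
      have h2 : ∀ a ∈ e, w a = c := by
        intro a ha
        show (if a < t-1 then c else 0) = c
        rw [if_pos (Finset.mem_range.1 (hsub ha))]
      rw [Finset.prod_congr rfl h2, Finset.prod_const, hcard]
    rw [Finset.sum_congr rfl h1, Finset.sum_const]
    show ((completeG (t-1) 3).card : ℕ) • (c^3) = _
    rw [nsmul_eq_mul]
    congr 1
    unfold completeG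
    rw [Finset.card_powersetCard, Finset.card_range]
  have hchoose : 0 < (t-1).choose 3 := Nat.choose_pos (by omega)
  have hpos : 0 < lagPoly (completeG (t-1) 3) w := by
    rw [hval]
    have : (0:ℝ) < ((t-1).choose 3 : ℝ) := by exact_mod_cast hchoose
    positivity
  exact lt_of_lt_of_le hpos (le_lag hww)

theorem xu_pos (ht : 4 ≤ t) (hE : E ⊆ (Finset.range t).powersetCard 3)
    (hlc : LeftCompressed E)
    (hmaxcl : ∀ s : Finset ℕ, s.powersetCard 3 ⊆ E → s.card ≤ t - 2)
    {x : ℕ → ℝ} (hx : IsWeighting t x) (hmono : ∀ i j : ℕ, i ≤ j → x j ≤ x i)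
    (hmax : ∀ (n : ℕ) (w : ℕ → ℝ), IsWeighting n w → lagPoly E w ≤ lagPoly E x)
    (hlageq : lagPoly E x = lag E)
    (hKE : lag (completeG (t-1) 3) ≤ lag E) : 0 < x (t-1) := by
  by_contra hcon
  push_neg at hcon
  have hu0 : x (t-1) = 0 := le_antisymm hcon (hx.1 (t-1))
  set K := completeG (t-1) 3 with hK
  have hEK0 : lagPoly E x = ∑ e ∈ E.filter (fun e => ¬ t-1 ∈ e), ∏ a ∈ e, x a := by
    rw [show lagPoly E x = ∑ e ∈ E, ∏ a ∈ e, x a from rfl,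
      ← Finset.sum_filter_add_sum_filter_not E (fun e => t-1 ∈ e)]
    have hz : ∑ e ∈ E.filter (fun e => t-1 ∈ e), ∏ a ∈ e, x a = 0 := by
      apply Finset.sum_eq_zero
      intro e he
      exact Finset.prod_eq_zero (Finset.mem_filter.1 he).2 hu0
    rw [hz, zero_add]
  have hsubK : E.filter (fun e => ¬ t-1 ∈ e) ⊆ K := by
    intro e he
    obtain ⟨heE, hu⟩ := Finset.mem_filter.1 he
    obtain ⟨hsub, hcard⟩ := Finset.mem_powersetCard.1 (hE heE)
    refine Finset.mem_powersetCard.2 ⟨?_, hcard⟩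
    intro a ha
    have h1 := Finset.mem_range.1 (hsub ha)
    have h2 : a ≠ t-1 := fun h => hu (h ▸ ha)
    exact Finset.mem_range.2 (by omega)
  have hElek : lagPoly E x ≤ lagPoly K x := by
    rw [hEK0]
    exact Finset.sum_le_sum_of_subset_of_nonneg hsubK
      (fun e _ _ => Finset.prod_nonneg fun a _ => hx.1 a)
  rcases eq_or_lt_of_le (hx.1 (t-2)) with hv0 | hvpos
  · -- x (t-2) = 0
    rcases eq_or_lt_of_le (hx.1 1) with hx10 | hx1pos
    · -- x 1 = 0 : all weight on vertex 0, lagPoly E x = 0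
      have hzero : lagPoly E x = 0 := by
        apply Finset.sum_eq_zero
        intro e he
        obtain ⟨hsub, hcard⟩ := Finset.mem_powersetCard.1 (hE he)
        have hex : ∃ a ∈ e, a ≠ 0 := by
          by_contra hall
          push_neg at hall
          have : e ⊆ {0} := fun a ha => Finset.mem_singleton.2 (hall a ha)
          have := Finset.card_le_card this
          rw [Finset.card_singleton] at this
          omega
        obtain ⟨a, ha, ha0⟩ := hex
        apply Finset.prod_eq_zero ha
        have h1 : x a ≤ x 1 := hmono 1 a (by omega)
        have h2 := hx.1 a
        linarith [hx10]
      have hKpos := lagK_pos ht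
      rw [← hK] at hKpos
      linarith [hKE, hKpos, hzero, hlageq]
    · -- x 1 > 0, perturb K moving mass from 0 to t-2
      have hx0pos : 0 < x 0 := lt_of_lt_of_le hx1pos (hmono 0 1 (by omega))
      have h0v : (0:ℕ) ≠ t-2 := by omega
      set ε : ℝ := x 0 / 2 with hε
      have hεpos : 0 < ε := by positivity
      have hw' := pert_weighting hx (by omega : 0 < t) (by omega : t-2 < t) h0v
        (le_of_lt hεpos) (by rw [hε]; linarith)
      have hxid : Function.update (Function.update x 0 (x 0)) (t-2) (x (t-2)) = x := by
        rw [Function.update_eq_self, Function.update_eq_self]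
      have hbase : lagPoly K x
          = (∑ e ∈ K.filter (fun e => 0 ∉ e ∧ t-2 ∉ e), ∏ a ∈ e, x a)
            + x 0 * (∑ e ∈ K.filter (fun e => 0 ∈ e ∧ t-2 ∉ e), ∏ a ∈ e.erase 0, x a)
            + x (t-2) * (∑ e ∈ K.filter (fun e => t-2 ∈ e ∧ 0 ∉ e), ∏ a ∈ e.erase (t-2), x a)
            + x 0 * (x (t-2) * (∑ e ∈ K.filter (fun e => 0 ∈ e ∧ t-2 ∈ e),
                ∏ a ∈ (e.erase 0).erase (t-2), x a)) := by
        conv_lhs => rw [← hxid]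
        exact pert_value K h0v x (x 0) (x (t-2))
      have hval := pert_value K h0v x (x 0 - ε) (x (t-2) + ε)
      have hsymm := K_link_symm ht x
      rw [← hK] at hsymm
      have hQ : x 1 ≤ ∑ e ∈ K.filter (fun e => 0 ∈ e ∧ t-2 ∈ e),
          ∏ a ∈ (e.erase 0).erase (t-2), x a := by
        have hestar : ({0, t-2, 1} : Finset ℕ) ∈ K.filter (fun e => 0 ∈ e ∧ t-2 ∈ e) := by
          refine Finset.mem_filter.2 ⟨Finset.mem_powersetCard.2 ⟨?_, ?_⟩, by simp, by simp⟩
          · intro a ha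
            simp only [Finset.mem_insert, Finset.mem_singleton] at ha
            rcases ha with rfl | rfl | rfl <;> exact Finset.mem_range.2 (by omega)
          · rw [Finset.card_insert_of_notMem, Finset.card_insert_of_notMem,
              Finset.card_singleton]
            · simp only [Finset.mem_singleton]; omega
            · simp only [Finset.mem_insert, Finset.mem_singleton]; push_neg
              constructor <;> omega
        have hprod : ∏ a ∈ ((({0, t-2, 1} : Finset ℕ).erase 0).erase (t-2)), x a = x 1 := by
          have h2 : ((({0, t-2, 1} : Finset ℕ).erase 0).erase (t-2)) = {1} := by
            ext a
            simp only [Finset.mem_erase, Finset.mem_insert, Finset.mem_singleton]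
            omega
          rw [h2, Finset.prod_singleton]
        calc x 1 = ∏ a ∈ ((({0, t-2, 1} : Finset ℕ).erase 0).erase (t-2)), x a := hprod.symm
          _ ≤ _ := Finset.single_le_sum
              (f := fun e => ∏ a ∈ (e.erase 0).erase (t-2), x a)
              (fun e _ => Finset.prod_nonneg fun a _ => hx.1 a) hestar
      have hincr : lagPoly K x < lagPoly K (Function.update (Function.update x 0 (x 0 - ε))
          (t-2) (x (t-2) + ε)) := by
        rw [hval, hbase, ← hv0]
        have h1 : 0 < (x 0 - ε) * ε := by
          rw [hε]; nlinarith [hx0pos]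
        nlinarith [hsymm, hQ, h1, hx1pos, mul_pos h1 (lt_of_lt_of_le hx1pos hQ)]
      have hle := le_lag (E := K) hw'
      linarith [hElek, hKE, hlageq, hincr, hle]
  · -- x (t-2) > 0 : use the missing edge {t-4,t-3,t-2}
    have he1 : ({t-4, t-3, t-2} : Finset ℕ) ∉ E := not_e1 ht hlc hmaxcl
    have he1K : ({t-4, t-3, t-2} : Finset ℕ) ∈ K := by
      refine Finset.mem_powersetCard.2 ⟨?_, ?_⟩
      · intro a ha
        simp only [Finset.mem_insert, Finset.mem_singleton] at ha
        rcases ha with rfl | rfl | rfl <;> exact Finset.mem_range.2 (by omega)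
      · rw [Finset.card_insert_of_notMem, Finset.card_insert_of_notMem,
          Finset.card_singleton]
        · simp only [Finset.mem_singleton]; omega
        · simp only [Finset.mem_insert, Finset.mem_singleton]; push_neg
          constructor <;> omega
    have hprodpos : 0 < ∏ a ∈ ({t-4, t-3, t-2} : Finset ℕ), x a := by
      apply Finset.prod_pos
      intro a ha
      simp only [Finset.mem_insert, Finset.mem_singleton] at ha
      have : x (t-2) ≤ x a := by
        rcases ha with rfl | rfl | rfl <;> exact hmono _ _ (by omega)
      linarith
    have hlt : lagPoly E x ≤ lagPoly K x - ∏ a ∈ ({t-4, t-3, t-2} : Finset ℕ), x a := by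
      rw [hEK0]
      have hsub' : E.filter (fun e => ¬ t-1 ∈ e) ⊆ K.erase ({t-4, t-3, t-2} : Finset ℕ) := by
        intro e he
        refine Finset.mem_erase.2 ⟨?_, hsubK he⟩
        intro heq
        exact he1 (heq ▸ (Finset.mem_filter.1 he).1)
      have h1 : (∑ e ∈ E.filter (fun e => ¬ t-1 ∈ e), ∏ a ∈ e, x a)
          ≤ ∑ e ∈ K.erase ({t-4, t-3, t-2} : Finset ℕ), ∏ a ∈ e, x a :=
        Finset.sum_le_sum_of_subset_of_nonneg hsub'
          (fun e _ _ => Finset.prod_nonneg fun a _ => hx.1 a)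
      have h2 : (∑ e ∈ K.erase ({t-4, t-3, t-2} : Finset ℕ), ∏ a ∈ e, x a)
            + ∏ a ∈ ({t-4, t-3, t-2} : Finset ℕ), x a
          = ∑ e ∈ K, ∏ a ∈ e, x a := Finset.sum_erase_add K _ he1K
      have h3 : lagPoly K x = ∑ e ∈ K, ∏ a ∈ e, x a := rfl
      linarith
    have hKlag : lagPoly K x ≤ lag K := le_lag hx
    linarith [hlt, hprodpos, hKlag, hKE, hlageq]

end C8

set_option maxHeartbeats 2000000 in
/-- For a left-compressed 3-graph on [t] with m edges, maximum clique [t-2]^{(3)},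
attaining λ^3_{(m,t-2)}, with b = |E_{(t-1)t}|: either λ(G) < λ([t-1]^{(3)}) or
|[t-2]^{(2)} \ E_t| ≤ b. (Vertices 0,…,t-1.) -/
theorem stmt_16 (m t : ℕ)
    (h₁ : (t - 1).choose 3 ≤ m)
    (h₂ : (m : ℝ) ≤ ((t - 1).choose 3 : ℝ) + ((t - 2).choose 2 : ℝ) - ((t : ℝ) - 2) / 2)
    (E : Finset (Finset ℕ)) (hE : E ⊆ (Finset.range t).powersetCard 3)
    (hmE : E.card = m) (hlc : LeftCompressed E)
    (hcl : completeG (t - 2) 3 ⊆ E)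
    (hmaxcl : ∀ s : Finset ℕ, s.powersetCard 3 ⊆ E → s.card ≤ t - 2)
    (hopt : ∀ E' : Finset (Finset ℕ), (∀ e ∈ E', e.card = 3) → E'.card = m →
      (∃ s : Finset ℕ, s.card = t - 2 ∧ s.powersetCard 3 ⊆ E') →
      (∀ s : Finset ℕ, s.powersetCard 3 ⊆ E' → s.card ≤ t - 2) →
      lag E' ≤ lag E) :
    lag E < lag (completeG (t - 1) 3) ∨
    (((Finset.range (t - 2)).powersetCard 2).filter
        (fun p => insert (t - 1) p ∉ E)).card ≤
      ((Finset.range (t - 2)).filter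
        (fun i => ({i, t - 2, t - 1} : Finset ℕ) ∈ E)).card := by
  classical
  -- t ≥ 4
  have ht : 4 ≤ t := by
    have hps : ({0, 1} : Finset ℕ).powersetCard 3 = ∅ := by decide
    have h2 := hmaxcl {0, 1} (by rw [hps]; exact Finset.empty_subset E)
    have hcard2 : ({0, 1} : Finset ℕ).card = 2 := by decide
    rw [hcard2] at h2
    omega
  rcases lt_or_ge (lag E) (lag (completeG (t - 1) 3)) with hlt | hKE
  · exact Or.inl hlt
  right
  by_contra hMb
  push_neg at hMb
  -- optimal decreasing weighting
  obtain ⟨x, hxw, hmono, hmax, hlageq⟩ := exists_opt E t (by omega) hE hlc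
  have hupos : 0 < x (t-1) := xu_pos ht hE hlc hmaxcl hxw hmono hmax hlageq hKE
  have hxpos : ∀ i, i < t → 0 < x i :=
    fun i hi => lt_of_lt_of_le hupos (hmono i (t-1) (by omega))
  have hvpos : 0 < x (t-2) := hxpos _ (by omega)
  have hvu : x (t-1) ≤ x (t-2) := hmono _ _ (by omega)
  set P := (Finset.range (t - 2)).powersetCard 2 with hP
  set CC := P.filter (fun p => insert (t - 1) p ∉ E) with hCC
  set BB := (Finset.range (t - 2)).filter
      (fun i => ({i, t - 2, t - 1} : Finset ℕ) ∈ E) with hBB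
  set b := BB.card with hb
  set M := CC.card with hM
  have hbM : b + 1 ≤ M := by omega
  have hBdown : ∀ i j : ℕ, i < j → j ∈ BB → i ∈ BB := by
    intro i j hij hj
    obtain ⟨hjm, hjE⟩ := Finset.mem_filter.1 hj
    have hjlt := Finset.mem_range.1 hjm
    exact Finset.mem_filter.2 ⟨Finset.mem_range.2 (by omega), B_down ht hlc hij hjlt hjE⟩
  have hBrange : BB = Finset.range b := down_closed_eq_range BB hBdown
  have hkfacts : ∀ k ∈ BB, k < t-2 ∧ ({k, t-2, t-1} : Finset ℕ) ∈ E := by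
    intro k hk
    exact ⟨Finset.mem_range.1 (Finset.mem_filter.1 hk).1, (Finset.mem_filter.1 hk).2⟩
  -- CC avoids BB, and b is small
  have hCavoid : ∀ q ∈ CC, ∀ k ∈ BB, k ∉ q := by
    intro q hq k hk hkq
    obtain ⟨hqP, hqE⟩ := Finset.mem_filter.1 hq
    obtain ⟨hklt, hkE⟩ := hkfacts k hk
    exact hqE (pair_in_Eu ht hlc hklt hkE hqP hkq)
  have hCvavoid : ∀ q ∈ P, insert (t-2) q ∉ E → ∀ k ∈ BB, k ∉ q := by
    intro q hqP hqE k hk hkq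
    obtain ⟨hklt, hkE⟩ := hkfacts k hk
    exact hqE (pair_in_Ev ht hlc hklt hkE hqP hkq)
  have hCne : CC.Nonempty := Finset.card_pos.1 (by omega)
  have hbt : b ≤ t - 4 := by
    obtain ⟨q, hq⟩ := hCne
    obtain ⟨hqP, _⟩ := Finset.mem_filter.1 hq
    obtain ⟨hsub, hcard⟩ := Finset.mem_powersetCard.1 hqP
    obtain ⟨α, β, hne, rfl⟩ := Finset.card_eq_two.1 hcard
    have hα : α < t-2 := Finset.mem_range.1 (hsub (by simp))
    have hβ : β < t-2 := Finset.mem_range.1 (hsub (by simp))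
    have hαb : α ∉ BB := fun h => hCavoid _ hq α h (by simp)
    have hβb : β ∉ BB := fun h => hCavoid _ hq β h (by simp)
    rw [hBrange, Finset.mem_range] at hαb hβb
    omega
  -- sums
  set σ := ∑ i ∈ Finset.range (t - 2), x i with hσ
  set S := ∑ i ∈ BB, x i with hS
  set Γ := ∑ q ∈ P.filter (fun q => insert (t-2) q ∉ E), ∏ a ∈ q, x a with hΓ
  set SC := ∑ q ∈ CC, ∏ a ∈ q, x a with hSC
  set Φv := ∑ q ∈ P.filter (fun q => insert (t-2) q ∈ E), ∏ a ∈ q, x a with hΦv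
  set SP := ∑ q ∈ P, ∏ a ∈ q, x a with hSP
  set Φu := ∑ q ∈ P.filter (fun q => insert (t-1) q ∈ E), ∏ a ∈ q, x a with hΦu
  have hΓ0 : 0 ≤ Γ :=
    Finset.sum_nonneg fun q _ => Finset.prod_nonneg fun a _ => hxw.1 a
  have heq1 : SP = Φv + Γ := by
    rw [hSP, hΦv, hΓ, ← Finset.sum_filter_add_sum_filter_not P (fun q => insert (t-2) q ∈ E)]
  have heq2 : SP = Φu + SC := by
    rw [hSP, hΦu, hSC, hCC, ← Finset.sum_filter_add_sum_filter_not P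
      (fun q => insert (t-1) q ∈ E)]
  -- (E2) : Φv - Φu = (x v - x u) S
  have hE2 : Φv - Φu = (x (t-2) - x (t-1)) * S := by
    have hk := kkt (E := E) hxw hmax (k := t-2) (l := t-1) (by omega) (by omega)
      (by omega) hvpos hupos
    rw [ev_Ev ht hE x, ev_Eu ht hE x, ev_B ht hE x] at hk
    rw [hΦv, hΦu, hS, hBB, hP]
    exact hk
  -- (E3) : merge u into v, compare with K
  set K := completeG (t - 1) 3 with hK
  have hE_K : K ⊆ (Finset.range t).powersetCard 3 := by
    intro e he
    obtain ⟨hsub, hcard⟩ := Finset.mem_powersetCard.1 he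
    refine Finset.mem_powersetCard.2 ⟨?_, hcard⟩
    intro a ha
    have := Finset.mem_range.1 (hsub ha)
    exact Finset.mem_range.2 (by omega)
  have hcl_K : completeG (t - 2) 3 ⊆ K := by
    intro e he
    obtain ⟨hsub, hcard⟩ := Finset.mem_powersetCard.1 he
    refine Finset.mem_powersetCard.2 ⟨?_, hcard⟩
    intro a ha
    have := Finset.mem_range.1 (hsub ha)
    exact Finset.mem_range.2 (by omega)
  have hT3E : E.filter (fun e => t-2 ∉ e ∧ t-1 ∉ e) = (Finset.range (t-2)).powersetCard 3 :=
    ev_T3 ht hE hcl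
  have hT3K : K.filter (fun e => t-2 ∉ e ∧ t-1 ∉ e) = (Finset.range (t-2)).powersetCard 3 :=
    ev_T3 ht hE_K hcl_K
  set T3 := ∑ e ∈ (Finset.range (t-2)).powersetCard 3, ∏ a ∈ e, x a with hT3
  have hvne : (t-2 : ℕ) ≠ t-1 := by omega
  have hune : (t-1 : ℕ) ≠ t-2 := by omega
  -- baseline decomposition for E
  have hxidE : Function.update (Function.update x (t-2) (x (t-2))) (t-1) (x (t-1)) = x := by
    rw [Function.update_eq_self, Function.update_eq_self]
  have hbaseE : lagPoly E x = T3 + x (t-2) * Φv + x (t-1) * Φu + x (t-2) * (x (t-1) * S) := by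
    have h0 := pert_value E hvne x (x (t-2)) (x (t-1))
    rw [hxidE] at h0
    rw [h0, hT3E, ev_Ev ht hE x, ev_Eu ht hE x, ev_B ht hE x]
  -- K decomposition at the merged weighting
  have hzw := pert_weighting hxw (by omega : t-1 < t) (by omega : t-2 < t) hune
    (le_refl (0:ℝ) |>.trans (le_of_lt hupos)) (le_refl (x (t-1)))
  have hzval := pert_value K hune x (x (t-1) - x (t-1)) (x (t-2) + x (t-1))
  have hKu0 : K.filter (fun e => t-1 ∈ e ∧ t-2 ∉ e) = ∅ := by
    rw [Finset.filter_eq_empty_iff]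
    intro e he hmem
    obtain ⟨hsub, _⟩ := Finset.mem_powersetCard.1 he
    have := Finset.mem_range.1 (hsub hmem.1)
    omega
  have hKA : K.filter (fun e => t-1 ∉ e ∧ t-2 ∉ e) = (Finset.range (t-2)).powersetCard 3 := by
    rw [← hT3K]
    ext e
    simp only [Finset.mem_filter]
    tauto
  have hKv : (∑ e ∈ K.filter (fun e => t-2 ∈ e ∧ t-1 ∉ e), ∏ a ∈ e.erase (t-2), x a) = SP := by
    rw [ev_Ev ht hE_K x]
    have hfull : ((Finset.range (t-2)).powersetCard 2).filter (fun q => insert (t-2) q ∈ K) =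
        (Finset.range (t-2)).powersetCard 2 := by
      apply Finset.filter_true_of_mem
      intro q hq
      obtain ⟨hsub, hcard⟩ := Finset.mem_powersetCard.1 hq
      have hvq : t-2 ∉ q := fun h => by have := Finset.mem_range.1 (hsub h); omega
      refine Finset.mem_powersetCard.2 ⟨?_, ?_⟩
      · intro a ha
        rcases Finset.mem_insert.1 ha with rfl | h
        · exact Finset.mem_range.2 (by omega)
        · have := Finset.mem_range.1 (hsub h)
          exact Finset.mem_range.2 (by omega)
      · rw [Finset.card_insert_of_notMem hvq, hcard]
    rw [hfull, hSP, hP]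
  have hzle : lagPoly K (Function.update (Function.update x (t-1) (x (t-1) - x (t-1)))
      (t-2) (x (t-2) + x (t-1))) ≤ lag K := le_lag hzw
  have hE3 : x (t-2) * Γ + x (t-1) * SC ≤ x (t-2) * (x (t-1) * S) := by
    have hz2 : lagPoly K (Function.update (Function.update x (t-1) (x (t-1) - x (t-1)))
        (t-2) (x (t-2) + x (t-1))) = T3 + (x (t-2) + x (t-1)) * SP := by
      rw [hzval, hKu0, hKA, hKv]
      rw [hT3]
      simp
    have hchain : T3 + (x (t-2) + x (t-1)) * SP
        ≤ T3 + x (t-2) * Φv + x (t-1) * Φu + x (t-2) * (x (t-1) * S) := by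
      rw [← hz2, ← hbaseE]
      calc lagPoly K _ ≤ lag K := hzle
        _ ≤ lag E := hKE
        _ = lagPoly E x := hlageq.symm
    have e3 : (x (t-2) + x (t-1)) * SP
        = x (t-2) * Φv + x (t-2) * Γ + (x (t-1) * Φu + x (t-1) * SC) := by
      have eq3 : Φu + SC = Φv + Γ := by rw [← heq1, ← heq2]
      rw [heq1]
      linear_combination (-(x (t-1))) * eq3
    linarith [hchain, e3]
  -- (E5)
  have hCS : SC = Γ + (x (t-2) - x (t-1)) * S := by
    have h1 : SC - Γ = Φv - Φu := by
      have := heq1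
      have := heq2
      linarith
    linarith [hE2, h1]
  have hE5 : (x (t-2) + x (t-1)) * Γ ≤ (x (t-1))^2 * S := by
    have hm : x (t-1) * SC = x (t-1) * Γ + x (t-1) * ((x (t-2) - x (t-1)) * S) := by
      rw [hCS]; ring
    have hr : x (t-1) * ((x (t-2) - x (t-1)) * S)
        = x (t-2) * (x (t-1) * S) - (x (t-1))^2 * S := by ring
    have hg : (x (t-2) + x (t-1)) * Γ = x (t-2) * Γ + x (t-1) * Γ := by ring
    linarith [hE3, hm, hr, hg]
  -- (E4) and (V)
  have hE4 : (x (t-2) + x (t-1)) * SC ≤ (x (t-2))^2 * S := by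
    have hm2 : x (t-2) * SC = x (t-2) * Γ + x (t-2) * ((x (t-2) - x (t-1)) * S) := by
      rw [hCS]; ring
    have hr2 : x (t-2) * ((x (t-2) - x (t-1)) * S)
        = (x (t-2))^2 * S - x (t-2) * (x (t-1) * S) := by ring
    have hg2 : (x (t-2) + x (t-1)) * SC = x (t-2) * SC + x (t-1) * SC := by ring
    linarith [hE3, hm2, hr2, hg2]
  have hCge : (M:ℝ) * (x (t-2))^2 ≤ SC := by
    have hperq : ∀ q ∈ CC, (x (t-2))^2 ≤ ∏ a ∈ q, x a := by
      intro q hq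
      obtain ⟨hqP, _⟩ := Finset.mem_filter.1 hq
      obtain ⟨hsub, hcard⟩ := Finset.mem_powersetCard.1 hqP
      obtain ⟨α, β, hne, rfl⟩ := Finset.card_eq_two.1 hcard
      have hα : α < t-2 := Finset.mem_range.1 (hsub (by simp))
      have hβ : β < t-2 := Finset.mem_range.1 (hsub (by simp))
      rw [Finset.prod_pair hne, sq]
      exact mul_le_mul (hmono α (t-2) (by omega)) (hmono β (t-2) (by omega))
        (le_of_lt hvpos) (le_of_lt (hxpos α (by omega)))
    calc (M:ℝ) * (x (t-2))^2 = ∑ _q ∈ CC, (x (t-2))^2 := by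
          rw [Finset.sum_const, hM, nsmul_eq_mul]
      _ ≤ SC := Finset.sum_le_sum hperq
  have hV : ((b:ℝ) + 1) * (x (t-2) + x (t-1)) ≤ S := by
    have h1 : ((M:ℝ) * (x (t-2))^2) * (x (t-2) + x (t-1)) ≤ (x (t-2))^2 * S := by
      calc ((M:ℝ) * (x (t-2))^2) * (x (t-2) + x (t-1))
          = (x (t-2) + x (t-1)) * ((M:ℝ) * (x (t-2))^2) := by ring
        _ ≤ (x (t-2) + x (t-1)) * SC :=
            mul_le_mul_of_nonneg_left hCge (by linarith)
        _ ≤ (x (t-2))^2 * S := hE4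
    have h2 : ((M:ℝ) * (x (t-2) + x (t-1))) * (x (t-2))^2 ≤ S * (x (t-2))^2 := by
      have hr : ((M:ℝ) * (x (t-2) + x (t-1))) * (x (t-2))^2
          = ((M:ℝ) * (x (t-2))^2) * (x (t-2) + x (t-1)) := by ring
      have hr2 : S * (x (t-2))^2 = (x (t-2))^2 * S := by ring
      rw [hr, hr2]
      exact h1
    have h3 : (M:ℝ) * (x (t-2) + x (t-1)) ≤ S :=
      le_of_mul_le_mul_right h2 (by positivity)
    have h4 : ((b:ℝ) + 1) ≤ (M:ℝ) := by exact_mod_cast hbM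
    have h5 : ((b:ℝ)+1) * (x (t-2) + x (t-1)) ≤ (M:ℝ) * (x (t-2) + x (t-1)) :=
      mul_le_mul_of_nonneg_right h4 (by linarith)
    linarith [h3, h5]
  -- (E1) for k ∈ BB
  have hE1 : ∀ k ∈ BB, (x k - x (t-2)) * ((σ - x k) + x (t-1)) = Γ + (σ - S) * x (t-1) := by
    intro k hk
    obtain ⟨hklt, hkE⟩ := hkfacts k hk
    have hkk := kkt (E := E) hxw hmax (k := k) (l := t-2) (by omega) (by omega)
      (by omega) (hxpos k (by omega)) hvpos
    rw [ev_Bk ht hE hlc hcl hklt hkE x, ev_Bv ht hE hklt x, ev_Q ht hE hlc hklt hkE x] at hkk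
    have hsplitP : (∑ q ∈ ((Finset.range (t-2)).powersetCard 2).filter (fun q => k ∉ q),
        ∏ a ∈ q, x a)
        = (∑ q ∈ ((((Finset.range (t-2)).powersetCard 2).filter
            (fun q => insert (t-2) q ∈ E)).filter (fun q => k ∉ q)), ∏ a ∈ q, x a) + Γ := by
      rw [← Finset.sum_filter_add_sum_filter_not
        (((Finset.range (t-2)).powersetCard 2).filter (fun q => k ∉ q))
        (fun q => insert (t-2) q ∈ E)]
      congr 1
      · rw [Finset.filter_comm]
      · rw [Finset.filter_comm]
        rw [hΓ, hP]
        congr 1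
        apply Finset.filter_true_of_mem
        intro q hq
        obtain ⟨hqP, hqE⟩ := Finset.mem_filter.1 hq
        exact hCvavoid q hqP hqE k hk
    have hsumerase : (∑ j ∈ (Finset.range (t-2)).erase k, x j) = σ - x k := by
      have := Finset.sum_erase_add (Finset.range (t-2)) x (Finset.mem_range.2 hklt)
      rw [hσ]; linarith
    have hsumeraseB : (∑ j ∈ ((Finset.range (t-2)).filter
        (fun i => ({i, t-2, t-1} : Finset ℕ) ∈ E)).erase k, x j) = S - x k := by
      have hkBB : k ∈ (Finset.range (t-2)).filter
          (fun i => ({i, t-2, t-1} : Finset ℕ) ∈ E) := by rw [← hBB]; exact hk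
      have := Finset.sum_erase_add ((Finset.range (t-2)).filter
        (fun i => ({i, t-2, t-1} : Finset ℕ) ∈ E)) x hkBB
      rw [hS, hBB]; linarith
    rw [hsplitP, hsumerase, hsumeraseB] at hkk
    linarith [hkk]
  -- endgame
  rcases Nat.eq_zero_or_pos b with hb0 | hbpos
  · have hS0 : S = 0 := by
      rw [hS, hBrange, hb0]
      simp
    have hbnn : (0:ℝ) ≤ (b:ℝ) := Nat.cast_nonneg b
    nlinarith [hV, hS0, hvpos, hupos, hbnn]
  · have h0BB : 0 ∈ BB := by
      rw [hBrange]
      exact Finset.mem_range.2 hbpos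
    by_cases hall : ∀ k ∈ BB, x k = x 0
    · -- all top weights equal
      have hSb : S = (b:ℝ) * x 0 := by
        rw [hS, Finset.sum_congr rfl hall, Finset.sum_const, ← hb, nsmul_eq_mul]
      have hbt3 : b ≤ t - 3 := by omega
      have hsplit : S + ∑ i ∈ Finset.Ico b (t-2), x i = σ := by
        rw [hS, hBrange, hσ]
        exact Finset.sum_range_add_sum_Ico x (by omega)
      have hApos : 0 < σ - S := by
        have h1 : x (t-3) ≤ ∑ i ∈ Finset.Ico b (t-2), x i :=
          Finset.single_le_sum (fun i _ => hxw.1 i)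
            (Finset.mem_Ico.2 ⟨by omega, by omega⟩)
        have h2 := hxpos (t-3) (by omega)
        linarith
      have hE10 := hE1 0 h0BB
      have hd0 : 0 ≤ x 0 - x (t-2) := by
        have := hmono 0 (t-2) (by omega)
        linarith
      apply endgame b hbpos (x (t-2)) (x (t-1)) (σ - S) Γ (x 0 - x (t-2))
        hupos hvu hApos hd0
      · -- the equation
        rw [hSb] at hE10 ⊢
        linear_combination hE10
      · exact hΓ0
      · -- hΓ5
        have : (b:ℝ) * (x (t-2) + (x 0 - x (t-2))) = (b:ℝ) * x 0 := by ring
        rw [this, ← hSb]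
        exact hE5
      · have : (b:ℝ) * (x (t-2) + (x 0 - x (t-2))) = (b:ℝ) * x 0 := by ring
        rw [this, ← hSb]
        exact hV
    · -- two distinct top weights
      push_neg at hall
      obtain ⟨k, hkBB, hkne⟩ := hall
      have hk0 : k ≠ 0 := fun h => hkne (by rw [h])
      have hE1k := hE1 k hkBB
      have hE10 := hE1 0 h0BB
      have hfac : (x k - x 0) * ((σ + x (t-1) + x (t-2)) - (x k + x 0)) = 0 := by
        linear_combination hE1k - hE10
      have hsum : x k + x 0 = σ + x (t-1) + x (t-2) := by
        rcases mul_eq_zero.1 hfac with h | h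
        · exfalso; exact hkne (by linarith [sub_eq_zero.1 h])
        · linarith [sub_eq_zero.1 h]
      have hpair : x 0 + x k ≤ S := by
        have hsub : ({0, k} : Finset ℕ) ⊆ BB := by
          intro a ha
          rcases Finset.mem_insert.1 ha with rfl | ha'
          · exact h0BB
          · rw [Finset.mem_singleton.1 ha']; exact hkBB
        calc x 0 + x k = ∑ i ∈ ({0, k} : Finset ℕ), x i := by
              rw [Finset.sum_pair (fun h => hk0 h.symm)]
          _ ≤ S := Finset.sum_le_sum_of_subset_of_nonneg hsub (fun i _ _ => hxw.1 i)
      have hSσ : S ≤ σ := by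
        rw [hS, hBrange, hσ]
        apply Finset.sum_le_sum_of_subset_of_nonneg
        · exact Finset.range_subset_range.2 (by omega)
        · exact fun i _ _ => hxw.1 i
      linarith [hsum, hpair, hSσ, hupos, hvpos]
end

section
/- For every m, there exists a left-compressed r-uniform hypergraph G with m edges such that λ(G) = max{λ(H) : H an r-graph with m edges}. -/
open Finset

namespace StmtAux

/-- replace `j` by `i` in `e`. -/
def cp (i j : ℕ) (e : Finset ℕ) : Finset ℕ := insert i (e.erase j)

lemma mem_cp_i {i j : ℕ} {e : Finset ℕ} : i ∈ cp i j e := mem_insert_self _ _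

lemma not_mem_cp_j {i j : ℕ} {e : Finset ℕ} (hij : i ≠ j) : j ∉ cp i j e := by
  simp [cp, hij.symm]

lemma not_mem_cp_of {i j v : ℕ} {e : Finset ℕ} (hvi : v ≠ i) (hve : v ∉ e) :
    v ∉ cp i j e := by
  simp only [cp, mem_insert, mem_erase]
  push_neg
  exact ⟨hvi, fun _ => hve⟩

lemma i_not_mem_erase {i j : ℕ} {e : Finset ℕ} (hie : i ∉ e) : i ∉ e.erase j :=
  fun h => hie (mem_of_mem_erase h)

lemma card_cp {i j : ℕ} {e : Finset ℕ} (hje : j ∈ e) (hie : i ∉ e) :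
    (cp i j e).card = e.card := by
  have h1 : 0 < e.card := card_pos.mpr ⟨j, hje⟩
  rw [cp, card_insert_of_notMem (i_not_mem_erase hie), card_erase_of_mem hje]
  omega

lemma cp_cp {i j : ℕ} {e : Finset ℕ} (hje : j ∈ e) (hie : i ∉ e) :
    cp j i (cp i j e) = e := by
  rw [cp, cp, erase_insert (i_not_mem_erase hie), insert_erase hje]

lemma sum_cp {i j : ℕ} {e : Finset ℕ} (hje : j ∈ e) (hie : i ∉ e) :
    ∑ v ∈ cp i j e, v = i + ∑ v ∈ e.erase j, v := by
  rw [cp, sum_insert (i_not_mem_erase hie)]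

lemma prod_cp {i j : ℕ} {e : Finset ℕ} (hie : i ∉ e) (y : ℕ → ℝ) :
    ∏ v ∈ cp i j e, y v = y i * ∏ v ∈ e.erase j, y v := by
  rw [cp, prod_insert (i_not_mem_erase hie)]

/-- The compression of a single edge. -/
def cpr (i j : ℕ) (E : Finset (Finset ℕ)) (e : Finset ℕ) : Finset ℕ :=
  if j ∈ e ∧ i ∉ e ∧ cp i j e ∉ E then cp i j e else e

/-- The compressed hypergraph. -/
def comp (i j : ℕ) (E : Finset (Finset ℕ)) : Finset (Finset ℕ) := E.image (cpr i j E)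

lemma cpr_injOn {i j : ℕ} (E : Finset (Finset ℕ)) :
    ∀ e1 ∈ E, ∀ e2 ∈ E, cpr i j E e1 = cpr i j E e2 → e1 = e2 := by
  intro e1 h1 e2 h2 h
  unfold cpr at h
  split_ifs at h with c1 c2 c2
  · have := congrArg (cp j i) h
    rwa [cp_cp c1.1 c1.2.1, cp_cp c2.1 c2.2.1] at this
  · rw [h] at c1; exact absurd h2 c1.2.2
  · rw [← h] at c2; exact absurd h1 c2.2.2
  · exact h

lemma card_comp {i j : ℕ} (E : Finset (Finset ℕ)) : (comp i j E).card = E.card :=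
  card_image_of_injOn (fun a ha b hb => cpr_injOn E a ha b hb)

lemma uniform_comp {i j r : ℕ} {E : Finset (Finset ℕ)} (h : ∀ e ∈ E, e.card = r) :
    ∀ g ∈ comp i j E, g.card = r := by
  intro g hg
  obtain ⟨e, he, rfl⟩ := mem_image.mp hg
  unfold cpr
  split_ifs with c
  · rw [card_cp c.1 c.2.1]; exact h e he
  · exact h e he

/-- measure used for termination -/
def msr (E : Finset (Finset ℕ)) : ℕ := ∑ e ∈ E, ∑ v ∈ e, v

lemma msr_comp_lt {i j : ℕ} {E : Finset (Finset ℕ)} (hij : i < j) {e0 : Finset ℕ}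
    (he0 : e0 ∈ E) (hj : j ∈ e0) (hi : i ∉ e0) (hcp : cp i j e0 ∉ E) :
    msr (comp i j E) < msr E := by
  rw [msr, comp, sum_image (cpr_injOn E)]
  apply sum_lt_sum
  · intro e he
    unfold cpr
    split_ifs with c
    · have h1 := sum_cp c.1 c.2.1
      have h2 := Finset.add_sum_erase e id c.1
      simp only [id] at h2
      omega
    · exact le_refl _
  · refine ⟨e0, he0, ?_⟩
    unfold cpr
    rw [if_pos ⟨hj, hi, hcp⟩]
    have h1 := sum_cp (e := e0) hj hi
    have h2 := Finset.add_sum_erase e0 id hj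
    simp only [id] at h2
    omega

end StmtAux

namespace StmtAux

def lagSet (E : Finset (Finset ℕ)) : Set ℝ :=
  {x | ∃ n w, IsWeighting n w ∧ x = lagPoly E w}

lemma lag_eq (E : Finset (Finset ℕ)) : lag E = sSup (lagSet E) := rfl

lemma lagSet_nonempty (E : Finset (Finset ℕ)) : (lagSet E).Nonempty := by
  refine ⟨lagPoly E (fun v => if v = 0 then 1 else 0), 1, _, ⟨?_, ?_, ?_⟩, rfl⟩
  · intro v; by_cases h : v = 0 <;> simp [h]
  · intro v hv; have h : v ≠ 0 := by omega
    simp [h]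
  · simp

lemma weight_le_one {n : ℕ} {w : ℕ → ℝ} (hw : IsWeighting n w) (v : ℕ) : w v ≤ 1 := by
  obtain ⟨h0, hv, hs⟩ := hw
  by_cases h : v < n
  · rw [← hs]
    exact Finset.single_le_sum (fun i _ => h0 i) (mem_range.mpr h)
  · rw [hv v (by omega)]; norm_num

lemma lagSet_bddAbove (E : Finset (Finset ℕ)) : BddAbove (lagSet E) := by
  refine ⟨(E.card : ℝ), ?_⟩
  rintro x ⟨n, w, hw, rfl⟩
  calc lagPoly E w ≤ ∑ e ∈ E, 1 := by
        apply sum_le_sum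
        intro e _
        exact prod_le_one (fun v _ => hw.1 v) (fun v _ => weight_le_one hw v)
    _ = (E.card : ℝ) := by simp

lemma lagPoly_le_lag {n : ℕ} {w : ℕ → ℝ} (hw : IsWeighting n w) (E : Finset (Finset ℕ)) :
    lagPoly E w ≤ lag E :=
  le_csSup (lagSet_bddAbove E) ⟨n, w, hw, rfl⟩

lemma swap_weighting {n : ℕ} {w : ℕ → ℝ} (hw : IsWeighting n w) (i j : ℕ) :
    IsWeighting (max (max n (i+1)) (j+1)) (fun v => w (Equiv.swap i j v)) := by
  obtain ⟨h0, hz, hs⟩ := hw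
  set N := max (max n (i+1)) (j+1) with hN
  have hiN : i < N := by omega
  have hjN : j < N := by omega
  have hnN : n ≤ N := by omega
  refine ⟨fun v => h0 _, ?_, ?_⟩
  · intro v hv
    have hvi : v ≠ i := by omega
    have hvj : v ≠ j := by omega
    show w (Equiv.swap i j v) = 0
    rw [Equiv.swap_apply_of_ne_of_ne hvi hvj]
    exact hz v (by omega)
  · have himg : ∀ v < N, Equiv.swap i j v < N := by
      intro v hv
      rcases eq_or_ne v i with rfl | hvi
      · rw [Equiv.swap_apply_left]; exact hjN
      rcases eq_or_ne v j with rfl | hvj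
      · rw [Equiv.swap_apply_right]; exact hiN
      · rw [Equiv.swap_apply_of_ne_of_ne hvi hvj]; exact hv
    have : ∑ v ∈ Finset.range N, w (Equiv.swap i j v) = ∑ v ∈ Finset.range N, w v := by
      apply Finset.sum_nbij' (fun v => Equiv.swap i j v) (fun v => Equiv.swap i j v)
      · intro v hv; exact mem_range.mpr (himg v (mem_range.mp hv))
      · intro v hv; exact mem_range.mpr (himg v (mem_range.mp hv))
      · intro v _; exact Equiv.swap_apply_self i j v
      · intro v _; exact Equiv.swap_apply_self i j v
      · intro v _; rfl
    rw [this, ← hs]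
    rw [Finset.sum_subset (Finset.range_subset_range.mpr hnN)]
    intro v _ hv
    exact hz v (by simpa using hv)

lemma lagPoly_le_of {E F : Finset (Finset ℕ)} {w y : ℕ → ℝ} (hy : ∀ v, 0 ≤ y v)
    (φ : Finset ℕ → Finset ℕ)
    (hmap : ∀ e ∈ E, φ e ∈ F) (hinj : ∀ e1 ∈ E, ∀ e2 ∈ E, φ e1 = φ e2 → e1 = e2)
    (hle : ∀ e ∈ E, ∏ v ∈ e, w v ≤ ∏ v ∈ φ e, y v) :
    lagPoly E w ≤ lagPoly F y := by
  calc lagPoly E w ≤ ∑ e ∈ E, ∏ v ∈ φ e, y v := sum_le_sum hle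
    _ = ∑ g ∈ E.image φ, ∏ v ∈ g, y v := by rw [sum_image hinj]
    _ ≤ lagPoly F y := by
        apply sum_le_sum_of_subset_of_nonneg
        · intro g hg
          obtain ⟨e, he, rfl⟩ := mem_image.mp hg
          exact hmap e he
        · intro g _ _
          exact prod_nonneg (fun v _ => hy v)

end StmtAux

namespace StmtAux

lemma keyA {i j : ℕ} {E : Finset (Finset ℕ)} {w : ℕ → ℝ} (hw0 : ∀ v, 0 ≤ w v)
    (hji : w j ≤ w i) : lagPoly E w ≤ lagPoly (comp i j E) w := by
  apply lagPoly_le_of hw0 (cpr i j E)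
  · intro e he; exact mem_image_of_mem _ he
  · exact cpr_injOn E
  · intro e he
    unfold cpr
    split_ifs with c
    · rw [prod_cp c.2.1, ← Finset.mul_prod_erase e w c.1]
      exact mul_le_mul_of_nonneg_right hji (prod_nonneg fun v _ => hw0 v)
    · exact le_refl _

/-- the injection used in the case `w i ≤ w j`. -/
def phi (i j : ℕ) (E : Finset (Finset ℕ)) (e : Finset ℕ) : Finset ℕ :=
  if j ∈ e ∧ i ∉ e then cp i j e
  else if i ∈ e ∧ j ∉ e ∧ cp j i e ∈ E then cp j i e
  else e

lemma keyB {i j : ℕ} (hij : i ≠ j) {E : Finset (Finset ℕ)} {w : ℕ → ℝ}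
    (hw0 : ∀ v, 0 ≤ w v) (hwle : w i ≤ w j) :
    lagPoly E w ≤ lagPoly (comp i j E) (fun v => w (Equiv.swap i j v)) := by
  set y : ℕ → ℝ := fun v => w (Equiv.swap i j v) with hy
  have hyi : y i = w j := by rw [hy]; simp
  have hyj : y j = w i := by rw [hy]; simp
  have hyo : ∀ v, v ≠ i → v ≠ j → y v = w v := by
    intro v h1 h2; rw [hy]; simp [Equiv.swap_apply_of_ne_of_ne h1 h2]
  have hy0 : ∀ v, 0 ≤ y v := fun v => hw0 _
  apply lagPoly_le_of hy0 (phi i j E)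
  · -- maps into comp
    intro e he
    unfold phi
    split_ifs with c1 c2
    · by_cases hcE : cp i j e ∈ E
      · have hc : cpr i j E (cp i j e) = cp i j e := by
          unfold cpr; rw [if_neg]
          rintro ⟨hj', -, -⟩; exact not_mem_cp_j hij hj'
        exact hc ▸ mem_image_of_mem _ hcE
      · have hc : cpr i j E e = cp i j e := by
          unfold cpr; rw [if_pos ⟨c1.1, c1.2, hcE⟩]
        exact hc ▸ mem_image_of_mem _ he
    · obtain ⟨hie, hje, hgE⟩ := c2
      have hkey : cp i j (cp j i e) = e := cp_cp hie hje
      have hc : cpr i j E (cp j i e) = cp j i e := by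
        unfold cpr; rw [if_neg]
        rintro ⟨-, -, hnot⟩; rw [hkey] at hnot; exact hnot he
      exact hc ▸ mem_image_of_mem _ hgE
    · have hc : cpr i j E e = e := by
        unfold cpr; rw [if_neg]
        exact fun h => c1 ⟨h.1, h.2.1⟩
      exact hc ▸ mem_image_of_mem _ he
  · -- injective
    intro e1 h1 e2 h2 h
    unfold phi at h
    split_ifs at h with c1 c2 c3 c4 c5 c6 c7 c8
    · have := congrArg (cp j i) h
      rwa [cp_cp c1.1 c1.2, cp_cp c2.1 c2.2] at this
    · exfalso
      have hjm : j ∈ cp j i e2 := mem_insert_self _ _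
      rw [← h] at hjm
      exact not_mem_cp_j hij hjm
    · exfalso
      subst h
      exact c3 ⟨mem_cp_i, not_mem_cp_j hij, by rw [cp_cp c1.1 c1.2]; exact h1⟩
    · exfalso
      have hjm : j ∈ cp j i e1 := mem_insert_self _ _
      rw [h] at hjm
      exact not_mem_cp_j hij hjm
    · have := congrArg (cp i j) h
      rwa [cp_cp c4.1 c4.2.1, cp_cp c6.1 c6.2.1] at this
    · exfalso
      subst h
      exact c5 ⟨mem_insert_self _ _, not_mem_cp_j hij.symm⟩
    · exfalso
      subst h
      exact c4 ⟨mem_cp_i, not_mem_cp_j hij, by rw [cp_cp c7.1 c7.2]; exact h2⟩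
    · exfalso
      subst h
      exact c1 ⟨mem_insert_self _ _, not_mem_cp_j hij.symm⟩
    · exact h
  · -- per-edge inequality
    intro e he
    unfold phi
    split_ifs with c1 c2
    · obtain ⟨hje, hie⟩ := c1
      rw [prod_cp hie y, hyi, ← Finset.mul_prod_erase e w hje]
      apply le_of_eq
      congr 1
      apply prod_congr rfl
      intro v hv
      exact (hyo v (fun h => hie (h ▸ mem_of_mem_erase hv)) (ne_of_mem_erase hv)).symm
    · obtain ⟨hie, hje, -⟩ := c2
      rw [prod_cp hje y, hyj, ← Finset.mul_prod_erase e w hie]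
      apply le_of_eq
      congr 1
      apply prod_congr rfl
      intro v hv
      exact (hyo v (ne_of_mem_erase hv) (fun h => hje (h ▸ mem_of_mem_erase hv))).symm
    · by_cases hje : j ∈ e
      · have hie : i ∈ e := by
          by_contra hie
          exact c1 ⟨hje, hie⟩
        have hj' : j ∈ e.erase i := mem_erase.mpr ⟨fun h => hij (h.symm), hje⟩
        rw [← Finset.mul_prod_erase e y hie, ← Finset.mul_prod_erase (e.erase i) y hj',
            ← Finset.mul_prod_erase e w hie, ← Finset.mul_prod_erase (e.erase i) w hj']
        apply le_of_eq
        have hrest : ∏ v ∈ (e.erase i).erase j, y v = ∏ v ∈ (e.erase i).erase j, w v := by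
          apply prod_congr rfl
          intro v hv
          exact hyo v (ne_of_mem_erase (mem_of_mem_erase hv)) (ne_of_mem_erase hv)
        rw [hrest, hyi, hyj]; ring
      · by_cases hie : i ∈ e
        · rw [← Finset.mul_prod_erase e y hie, ← Finset.mul_prod_erase e w hie, hyi]
          have hrest : ∏ v ∈ e.erase i, y v = ∏ v ∈ e.erase i, w v := by
            apply prod_congr rfl
            intro v hv
            exact hyo v (ne_of_mem_erase hv) (fun h => hje (h ▸ mem_of_mem_erase hv))
          rw [hrest]
          exact mul_le_mul_of_nonneg_right hwle (prod_nonneg fun v _ => hw0 v)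
        · apply le_of_eq
          apply prod_congr rfl
          intro v hv
          exact (hyo v (fun h => hie (h ▸ hv)) (fun h => hje (h ▸ hv))).symm

lemma lag_le_comp {i j : ℕ} (hij : i ≠ j) (E : Finset (Finset ℕ)) :
    lag E ≤ lag (comp i j E) := by
  rw [lag_eq, lag_eq]
  apply csSup_le (lagSet_nonempty E)
  rintro x ⟨n, w, hw, rfl⟩
  rcases le_total (w j) (w i) with h | h
  · exact (keyA hw.1 h).trans (le_csSup (lagSet_bddAbove _) ⟨n, w, hw, rfl⟩)
  · exact (keyB hij hw.1 h).trans
      (le_csSup (lagSet_bddAbove _) ⟨_, _, swap_weighting hw i j, rfl⟩)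

end StmtAux

namespace StmtAux

lemma toLC : ∀ (M : ℕ) (E : Finset (Finset ℕ)) (r : ℕ), msr E ≤ M → (∀ e ∈ E, e.card = r) →
    ∃ F : Finset (Finset ℕ), LeftCompressed F ∧ (∀ e ∈ F, e.card = r) ∧
      F.card = E.card ∧ lag E ≤ lag F := by
  intro M
  induction M using Nat.strong_induction_on with
  | _ M ih =>
    intro E r hM hunif
    by_cases hLC : LeftCompressed E
    · exact ⟨E, hLC, hunif, rfl, le_refl _⟩
    · rw [LeftCompressed] at hLC
      push_neg at hLC
      obtain ⟨e, he, j, hje, i, hij, hie, hcp⟩ := hLC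
      have hcp' : cp i j e ∉ E := hcp
      have hlt : msr (comp i j E) < M :=
        lt_of_lt_of_le (msr_comp_lt hij he hje hie hcp') hM
      obtain ⟨F, hF1, hF2, hF3, hF4⟩ :=
        ih (msr (comp i j E)) hlt (comp i j E) r (le_refl _) (uniform_comp hunif)
      refine ⟨F, hF1, hF2, ?_, (lag_le_comp hij.ne E).trans hF4⟩
      rw [hF3, card_comp]

lemma LC_vertex_bound {r : ℕ} {E : Finset (Finset ℕ)} (hLC : LeftCompressed E)
    (hunif : ∀ e ∈ E, e.card = r) : ∀ e ∈ E, ∀ v ∈ e, v < E.card + r := by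
  intro e he v hv
  set S : Finset (Finset ℕ) := (Finset.range v \ e.erase v).image (fun i => insert i (e.erase v)) with hS
  have hSsub : S ⊆ E := by
    intro g hg
    obtain ⟨i, hi, rfl⟩ := mem_image.mp hg
    obtain ⟨hiv, hie'⟩ := mem_sdiff.mp hi
    have hiv' : i < v := mem_range.mp hiv
    have hie : i ∉ e := by
      intro h
      exact hie' (mem_erase.mpr ⟨by omega, h⟩)
    exact hLC e he v hv i hiv' hie
  have heS : e ∉ S := by
    intro hcon
    obtain ⟨i, hi, hig⟩ := mem_image.mp hcon
    obtain ⟨hiv, -⟩ := mem_sdiff.mp hi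
    have hiv' : i < v := mem_range.mp hiv
    have : v ∈ insert i (e.erase v) := hig.symm ▸ hv
    rcases mem_insert.mp this with h | h
    · omega
    · exact (notMem_erase v e) h
  have hScard : S.card = (Finset.range v \ e.erase v).card := by
    apply card_image_of_injOn
    intro a ha b hb hab
    simp only at hab
    have ha' : a ∉ e.erase v := (mem_sdiff.mp ha).2
    have hb' : b ∉ e.erase v := (mem_sdiff.mp hb).2
    have : a ∈ insert b (e.erase v) := hab ▸ mem_insert_self a _
    rcases mem_insert.mp this with h | h
    · exact h
    · exact absurd h ha'
  have hcard1 : S.card + 1 ≤ E.card := by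
    have : insert e S ⊆ E := insert_subset he hSsub
    have h2 := card_le_card this
    rw [card_insert_of_notMem heS] at h2
    omega
  have hcard2 : v ≤ (Finset.range v \ e.erase v).card + (e.erase v).card := by
    have := Finset.card_le_card_sdiff_add_card (s := Finset.range v) (t := e.erase v)
    simpa using this
  have hce : (e.erase v).card = r - 1 := by
    rw [card_erase_of_mem hv, hunif e he]
  have hr0 : 0 < r := by
    have := hunif e he
    have : 0 < e.card := card_pos.mpr ⟨v, hv⟩
    omega
  omega

lemma exists_uniform (r m : ℕ) (hr : 0 < r) :
    ∃ E : Finset (Finset ℕ), (∀ e ∈ E, e.card = r) ∧ E.card = m := by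
  refine ⟨(Finset.range m).image (fun k => Finset.Ico (k*r) (k*r+r)), ?_, ?_⟩
  · intro e he
    obtain ⟨k, -, rfl⟩ := mem_image.mp he
    simp
  · rw [card_image_of_injOn, card_range]
    intro a _ b _ hab
    simp only at hab
    have h1 : a * r ∈ Finset.Ico (b*r) (b*r+r) := by
      rw [← hab]; simp [hr]
    have h2 : b * r ∈ Finset.Ico (a*r) (a*r+r) := by
      rw [hab]; simp [hr]
    simp only [Finset.mem_Ico] at h1 h2
    by_contra hne
    rcases Nat.lt_or_ge a b with h | h
    · have h3 : a * r + r ≤ b * r := by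
        calc a * r + r = (a + 1) * r := by ring
          _ ≤ b * r := Nat.mul_le_mul_right r h
      omega
    · have hba : b + 1 ≤ a := by omega
      have h3 : b * r + r ≤ a * r := by
        calc b * r + r = (b + 1) * r := by ring
          _ ≤ a * r := Nat.mul_le_mul_right r hba
      omega

end StmtAux

/-- For every m there is a left-compressed r-graph with m edges attaining the
maximum Lagrangian among all r-graphs with m edges. -/
theorem stmt_19 (r m : ℕ) (hr : 0 < r) :
    ∃ E : Finset (Finset ℕ), LeftCompressed E ∧ (∀ e ∈ E, e.card = r) ∧
      E.card = m ∧
      ∀ E' : Finset (Finset ℕ), (∀ e ∈ E', e.card = r) → E'.card = m →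
        lag E' ≤ lag E := by
  classical
  set C : Finset (Finset (Finset ℕ)) :=
    ((Finset.range (m + r)).powersetCard r).powerset.filter
      (fun E => LeftCompressed E ∧ (∀ e ∈ E, e.card = r) ∧ E.card = m) with hC
  have hmemC : ∀ F : Finset (Finset ℕ), LeftCompressed F → (∀ e ∈ F, e.card = r) →
      F.card = m → F ∈ C := by
    intro F h1 h2 h3
    rw [hC, mem_filter, mem_powerset]
    refine ⟨?_, h1, h2, h3⟩
    intro e he
    rw [mem_powersetCard]
    refine ⟨?_, h2 e he⟩
    intro v hv
    rw [mem_range]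
    have := StmtAux.LC_vertex_bound h1 h2 e he v hv
    omega
  have hne : C.Nonempty := by
    obtain ⟨E0, h1, h2⟩ := StmtAux.exists_uniform r m hr
    obtain ⟨F, hF1, hF2, hF3, -⟩ := StmtAux.toLC (StmtAux.msr E0) E0 r (le_refl _) h1
    exact ⟨F, hmemC F hF1 hF2 (hF3.trans h2)⟩
  obtain ⟨E, hEC, hmax⟩ := C.exists_max_image lag hne
  rw [hC, mem_filter] at hEC
  obtain ⟨-, hE1, hE2, hE3⟩ := hEC
  refine ⟨E, hE1, hE2, hE3, ?_⟩
  intro E' hu' hc'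
  obtain ⟨F, hF1, hF2, hF3, hF4⟩ := StmtAux.toLC (StmtAux.msr E') E' r (le_refl _) hu'
  exact hF4.trans (hmax F (hmemC F hF1 hF2 (hF3.trans hc')))
end
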